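/- arXiv:2105.11787 — 10 statements merged into one kernel-verified Lean document; each statement's English description precedes it below -/
import Mathlib

section
/- Let G be a k-regular graph of order n, k ≥ 4, such that adjacent vertices have no common neighbour and every pair of non-adjacent vertices has exactly k−1, k−2, or k−3 common neighbours (each value attained by some pair). Then n ≤ k² + 1. -/
theorem stmt_3 {V : Type*} [Fintype V] [DecidableEq V] (G : SimpleGraph V) [DecidableRel G.Adj]
    (n k : ℕ) (hk : 4 ≤ k) (hn : Fintype.card V = n)
    (hreg : G.IsRegularOfDegree k)
    (ha : ∀ x y : V, G.Adj x y → G.neighborFinset x ∩ G.neighborFinset y = ∅)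
    (hna : ∀ x y : V, x ≠ y → ¬ G.Adj x y →
      (G.neighborFinset x ∩ G.neighborFinset y).card = k - 1 ∨
      (G.neighborFinset x ∩ G.neighborFinset y).card = k - 2 ∨
      (G.neighborFinset x ∩ G.neighborFinset y).card = k - 3)
    (hr1 : ∃ x y : V, x ≠ y ∧ ¬ G.Adj x y ∧
      (G.neighborFinset x ∩ G.neighborFinset y).card = k - 1)
    (hr2 : ∃ x y : V, x ≠ y ∧ ¬ G.Adj x y ∧
      (G.neighborFinset x ∩ G.neighborFinset y).card = k - 2)
    (hr3 : ∃ x y : V, x ≠ y ∧ ¬ G.Adj x y ∧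
      (G.neighborFinset x ∩ G.neighborFinset y).card = k - 3) :
    n ≤ k ^ 2 + 1 := by
  subst hn
  rcases isEmpty_or_nonempty V with h | h
  · simp [Fintype.card_eq_zero]
  obtain ⟨v⟩ := h
  set S : Finset V := insert v (G.neighborFinset v ∪
    (G.neighborFinset v).biUnion (fun w => (G.neighborFinset w).erase v)) with hS
  have hcov : (Finset.univ : Finset V) ⊆ S := by
    intro u _
    by_cases huv : u = v
    · simp [hS, huv]
    by_cases hadj : G.Adj v u
    · simp [hS, hadj]
    have hpos : 0 < (G.neighborFinset v ∩ G.neighborFinset u).card := by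
      rcases hna v u (Ne.symm huv) hadj with h1 | h1 | h1 <;> omega
    obtain ⟨w, hw⟩ := Finset.card_pos.mp hpos
    rw [Finset.mem_inter, SimpleGraph.mem_neighborFinset, SimpleGraph.mem_neighborFinset] at hw
    simp only [hS, Finset.mem_insert, Finset.mem_union, Finset.mem_biUnion]
    right; right
    exact ⟨w, by simpa [SimpleGraph.mem_neighborFinset] using hw.1,
      Finset.mem_erase.mpr ⟨huv, by simpa [SimpleGraph.mem_neighborFinset] using hw.2.symm⟩⟩
  have h1 : Fintype.card V ≤ S.card := by
    rw [← Finset.card_univ]; exact Finset.card_le_card hcov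
  have hcard : S.card ≤ (k + k * (k - 1)) + 1 := by
    refine le_trans (Finset.card_insert_le _ _) (Nat.add_le_add_right ?_ 1)
    refine le_trans (Finset.card_union_le _ _) (Nat.add_le_add ?_ ?_)
    · exact le_of_eq (hreg v)
    · refine le_trans (Finset.card_biUnion_le) ?_
      calc ∑ w ∈ G.neighborFinset v, ((G.neighborFinset w).erase v).card
          ≤ ∑ _w ∈ G.neighborFinset v, (k - 1) := by
            refine Finset.sum_le_sum fun w hw => ?_
            rw [SimpleGraph.mem_neighborFinset] at hw
            have hv : v ∈ G.neighborFinset w := by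
              rw [SimpleGraph.mem_neighborFinset]; exact hw.symm
            rw [Finset.card_erase_of_mem hv, G.card_neighborFinset_eq_degree, hreg w]
        _ = k * (k - 1) := by rw [Finset.sum_const, G.card_neighborFinset_eq_degree, hreg v, smul_eq_mul]
  have hk' : (k + k * (k - 1)) + 1 ≤ k ^ 2 + 1 := by
    obtain ⟨m, rfl⟩ : ∃ m, k = m + 1 := ⟨k - 1, by omega⟩
    have h2 : (m + 1) * ((m + 1) - 1) + (m + 1) = (m + 1) ^ 2 := by
      simp; ring
    omega
  omega
end

section
/- Let G be a k-regular graph of order n, k ≥ 4, such that adjacent vertices have no common neighbour and every pair of non-adjacent vertices has exactly k−1, k−2, or k−3 common neighbours (each value attained). If k² − 4 ≤ n ≤ k² + 1, then k = 4. -/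
theorem stmt_4 {V : Type*} [Fintype V] [DecidableEq V] (G : SimpleGraph V) [DecidableRel G.Adj]
    (n k : ℕ) (hk : 4 ≤ k) (hn : Fintype.card V = n)
    (hreg : G.IsRegularOfDegree k)
    (ha : ∀ x y : V, G.Adj x y → G.neighborFinset x ∩ G.neighborFinset y = ∅)
    (hna : ∀ x y : V, x ≠ y → ¬ G.Adj x y →
      (G.neighborFinset x ∩ G.neighborFinset y).card = k - 1 ∨
      (G.neighborFinset x ∩ G.neighborFinset y).card = k - 2 ∨
      (G.neighborFinset x ∩ G.neighborFinset y).card = k - 3)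
    (hr1 : ∃ x y : V, x ≠ y ∧ ¬ G.Adj x y ∧
      (G.neighborFinset x ∩ G.neighborFinset y).card = k - 1)
    (hr2 : ∃ x y : V, x ≠ y ∧ ¬ G.Adj x y ∧
      (G.neighborFinset x ∩ G.neighborFinset y).card = k - 2)
    (hr3 : ∃ x y : V, x ≠ y ∧ ¬ G.Adj x y ∧
      (G.neighborFinset x ∩ G.neighborFinset y).card = k - 3)
    (hlow : k ^ 2 - 4 ≤ n) (hhigh : n ≤ k ^ 2 + 1) :
    k = 4 := by
  by_contra hne
  have hk5 : 5 ≤ k := by omega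
  obtain ⟨a, rfl⟩ : ∃ a, k = a + 5 := ⟨k - 5, by omega⟩
  set k := a + 5 with hkdef
  have hdeg : ∀ v : V, (G.neighborFinset v).card = k := fun v => hreg v
  have hsq : k ^ 2 = k * k := sq k
  have hkk : k * k = a * a + 10 * a + 25 := by ring
  have hnlow : a * a + 10 * a + 21 ≤ n := by
    rw [hsq, hkk] at hlow; omega
  -- V is nonempty
  have hnpos : 0 < n := by omega
  have : 0 < Fintype.card V := by omega
  obtain ⟨x⟩ := Fintype.card_pos_iff.mp this
  -- the set of non-neighbors of x (other than x)
  set S : Finset V := Finset.univ.filter (fun y => y ≠ x ∧ ¬ G.Adj x y) with hS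
  have hxN : x ∉ G.neighborFinset x := by
    simp [SimpleGraph.mem_neighborFinset]
  -- cardinality of S
  have hScard : S.card = n - (k + 1) := by
    have hdisj : S = Finset.univ \ insert x (G.neighborFinset x) := by
      ext y
      simp only [hS, Finset.mem_filter, Finset.mem_univ, true_and, Finset.mem_sdiff,
        Finset.mem_insert, SimpleGraph.mem_neighborFinset]
      tauto
    rw [hdisj, Finset.card_sdiff_of_subset (Finset.subset_univ _), Finset.card_insert_of_notMem hxN,
      hdeg x, Finset.card_univ, hn]
  -- double counting: sum of codegrees over S equals k*(k-1)
  have key : ∑ y ∈ S, (G.neighborFinset x ∩ G.neighborFinset y).card = k * (k - 1) := by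
    have hcap : ∀ y : V, G.neighborFinset x ∩ G.neighborFinset y
        = (G.neighborFinset x).filter (fun z => G.Adj y z) := by
      intro y
      ext z
      simp [Finset.mem_filter, SimpleGraph.mem_neighborFinset]
    calc ∑ y ∈ S, (G.neighborFinset x ∩ G.neighborFinset y).card
        = ∑ y ∈ S, ∑ z ∈ G.neighborFinset x, (if G.Adj y z then 1 else 0) := by
          simp_rw [hcap, Finset.card_filter]
      _ = ∑ z ∈ G.neighborFinset x, ∑ y ∈ S, (if G.Adj y z then 1 else 0) :=
          Finset.sum_comm
      _ = ∑ z ∈ G.neighborFinset x, (k - 1) := by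
          apply Finset.sum_congr rfl
          intro z hz
          rw [SimpleGraph.mem_neighborFinset] at hz
          have hfil : S.filter (fun y => G.Adj y z) = (G.neighborFinset z).erase x := by
            ext y
            simp only [hS, Finset.mem_filter, Finset.mem_univ, true_and, Finset.mem_erase,
              SimpleGraph.mem_neighborFinset]
            constructor
            · rintro ⟨⟨h1, h2⟩, h3⟩; exact ⟨h1, h3.symm⟩
            · rintro ⟨h1, h2⟩
              refine ⟨⟨h1, fun hxy => ?_⟩, h2.symm⟩
              have hemp := ha x y hxy
              have hz' : z ∈ G.neighborFinset x ∩ G.neighborFinset y := by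
                simp [SimpleGraph.mem_neighborFinset, hz, h2.symm]
              rw [hemp] at hz'
              exact absurd hz' (Finset.notMem_empty z)
          rw [← Finset.card_filter, hfil, Finset.card_erase_of_mem, hdeg z]
          rw [SimpleGraph.mem_neighborFinset]
          exact hz.symm
      _ = k * (k - 1) := by
          rw [Finset.sum_const, hdeg x, smul_eq_mul]
  -- lower bound each codegree by k - 3
  have hlb : S.card • (k - 3) ≤ ∑ y ∈ S, (G.neighborFinset x ∩ G.neighborFinset y).card := by
    apply Finset.card_nsmul_le_sum
    intro y hy
    simp only [hS, Finset.mem_filter, Finset.mem_univ, true_and] at hy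
    rcases hna x y (Ne.symm hy.1) hy.2 with h | h | h <;> omega
  rw [key, smul_eq_mul, hScard] at hlb
  -- arithmetic contradiction
  obtain ⟨m, hm⟩ : ∃ m, n = m + (k + 1) := ⟨n - (k + 1), by omega⟩
  have e1 : n - (k + 1) = m := by omega
  have e2 : k - 3 = a + 2 := by omega
  have e3 : k - 1 = a + 4 := by omega
  rw [e1, e2, e3] at hlb
  -- hlb : m * (a + 2) ≤ k * (a + 4)
  have hmge : a * a + 9 * a + 15 ≤ m := by omega
  have hchain : (a + 2) * (a * a + 9 * a + 15) ≤ (a + 2) * m :=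
    Nat.mul_le_mul_left _ hmge
  nlinarith [hchain, hlb, sq_nonneg a]
end

section
/- Let G be a 4-regular graph of order n such that adjacent vertices have no common neighbour and every pair of non-adjacent vertices has exactly 1, 2, or 3 common neighbours, with each of the three values realized. Then n ≤ 12. -/
set_option maxHeartbeats 2000000

theorem SQSR_endgame : ∀ b0 b1 b2 b3 b4 b5 b6 b7 b8 b9 b10 b11 : Bool,
    ¬(((b0 || b1) && ((b4 || b5) && ((b2 || b3) && ((b6 || b7) && ((b0 || b2) && ((b8 || b9) && ((b1 || b3) && ((b10 || b11) && ((b4 || b6) && ((b8 || b10) && ((b5 || b7) && ((b9 || b11) && (((!b0) || ((!b1) || ((!b4) || (!b5)))) && (((!b2) || ((!b3) || ((!b6) || (!b7)))) && (((!b0) || ((!b2) || ((!b8) || (!b9)))) && (((!b1) || ((!b3) || ((!b10) || (!b11)))) && (((!b4) || ((!b6) || ((!b8) || (!b10)))) && (((!b5) || ((!b7) || ((!b9) || (!b11)))) && (((!b0) || ((!b4) || (!b8))) && (((!b0) || ((!b5) || (!b9))) && (((!b1) || ((!b4) || (!b10))) && (((!b1) || ((!b5) || (!b11))) && (((!b2)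 || ((!b6) || (!b8))) && (((!b2) || ((!b7) || (!b9))) && (((!b3) || ((!b6) || (!b10))) && (((!b3) || ((!b7) || (!b11))) && (((b0 || b4) && ((b0 || b5) && ((b1 || b4) && (b1 || b5)))) || (((b2 || b6) && ((b2 || b7) && ((b3 || b6) && (b3 || b7)))) || (((b0 || b8) && ((b0 || b9) && ((b2 || b8) && (b2 || b9)))) || (((b1 || b10) && ((b1 || b11) && ((b3 || b10) && (b3 || b11)))) || (((b4 || b8) && ((b4 || b10) && ((b6 || b8) && (b6 || b10)))) || ((b5 || b9) && ((b5 || b11) && ((b7 || b9) && (b7 || b11))))))))))))))))))))))))))))))))))) = true) := by decide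

theorem stmt_5 {V : Type*} [Fintype V] [DecidableEq V] (G : SimpleGraph V) [DecidableRel G.Adj]
    (n : ℕ) (hn : Fintype.card V = n)
    (hreg : G.IsRegularOfDegree 4)
    (ha : ∀ x y : V, G.Adj x y → G.neighborFinset x ∩ G.neighborFinset y = ∅)
    (hna : ∀ x y : V, x ≠ y → ¬ G.Adj x y →
      (G.neighborFinset x ∩ G.neighborFinset y).card = 1 ∨
      (G.neighborFinset x ∩ G.neighborFinset y).card = 2 ∨
      (G.neighborFinset x ∩ G.neighborFinset y).card = 3)
    (hr1 : ∃ x y : V, x ≠ y ∧ ¬ G.Adj x y ∧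
      (G.neighborFinset x ∩ G.neighborFinset y).card = 1)
    (hr2 : ∃ x y : V, x ≠ y ∧ ¬ G.Adj x y ∧
      (G.neighborFinset x ∩ G.neighborFinset y).card = 2)
    (hr3 : ∃ x y : V, x ≠ y ∧ ¬ G.Adj x y ∧
      (G.neighborFinset x ∩ G.neighborFinset y).card = 3) :
    n ≤ 12 := by
  by_contra hcon
  push_neg at hcon
  classical
  have hdeg : ∀ v : V, (G.neighborFinset v).card = 4 := fun v => by
    rw [G.card_neighborFinset_eq_degree]; exact hreg v
  have mem_nb : ∀ u w : V, w ∈ G.neighborFinset u ↔ G.Adj u w := fun u w => by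
    simp [SimpleGraph.mem_neighborFinset]
  have htri : ∀ u v w : V, G.Adj u v → G.Adj u w → ¬ G.Adj v w := by
    intro u v w h1 h2 h3
    have hw : w ∈ G.neighborFinset u ∩ G.neighborFinset v := by
      rw [Finset.mem_inter, mem_nb, mem_nb]
      exact ⟨h2, h3⟩
    rw [ha u v h1] at hw
    exact absurd hw (Finset.notMem_empty w)
  have hcom : ∀ u v : V, u ≠ v → ¬ G.Adj u v → ∃ w, G.Adj u w ∧ G.Adj v w := by
    intro u v h1 h2
    have h3 := hna u v h1 h2
    have h4 : 0 < (G.neighborFinset u ∩ G.neighborFinset v).card := by omega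
    obtain ⟨w, hw⟩ := Finset.card_pos.mp h4
    rw [Finset.mem_inter, mem_nb, mem_nb] at hw
    exact ⟨w, hw⟩
  obtain ⟨x, y, hxy, hnxy, h3c⟩ := hr3
  obtain ⟨a, b, c, hab, hac, hbc, hC⟩ := Finset.card_eq_three.mp h3c
  have hmem : ∀ w : V, w ∈ G.neighborFinset x ∩ G.neighborFinset y ↔ (w = a ∨ w = b ∨ w = c) := by
    intro w; rw [hC]; simp
  have hxa : G.Adj x a := by
    have := (hmem a).mpr (Or.inl rfl)
    rw [Finset.mem_inter, mem_nb, mem_nb] at this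
    exact this.1
  have hya : G.Adj y a := by
    have := (hmem a).mpr (Or.inl rfl)
    rw [Finset.mem_inter, mem_nb, mem_nb] at this
    exact this.2
  have hxb : G.Adj x b := by
    have := (hmem b).mpr (Or.inr (Or.inl rfl))
    rw [Finset.mem_inter, mem_nb, mem_nb] at this
    exact this.1
  have hyb : G.Adj y b := by
    have := (hmem b).mpr (Or.inr (Or.inl rfl))
    rw [Finset.mem_inter, mem_nb, mem_nb] at this
    exact this.2
  have hxc : G.Adj x c := by
    have := (hmem c).mpr (Or.inr (Or.inr rfl))
    rw [Finset.mem_inter, mem_nb, mem_nb] at this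
    exact this.1
  have hyc : G.Adj y c := by
    have := (hmem c).mpr (Or.inr (Or.inr rfl))
    rw [Finset.mem_inter, mem_nb, mem_nb] at this
    exact this.2
  -- d : fourth neighbor of x
  have hcard_d : (G.neighborFinset x \ (G.neighborFinset x ∩ G.neighborFinset y)).card = 1 := by
    rw [Finset.card_sdiff_of_subset Finset.inter_subset_left, hdeg, h3c]
  obtain ⟨d, hd⟩ := Finset.card_eq_one.mp hcard_d
  have hdmem : d ∈ G.neighborFinset x \ (G.neighborFinset x ∩ G.neighborFinset y) := by
    rw [hd]; exact Finset.mem_singleton_self d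
  have hxd : G.Adj x d := by
    have := (Finset.mem_sdiff.mp hdmem).1
    rwa [mem_nb] at this
  have hnyd : ¬ G.Adj y d := by
    intro h
    exact (Finset.mem_sdiff.mp hdmem).2 (Finset.mem_inter.mpr
      ⟨(mem_nb _ _).mpr hxd, (mem_nb _ _).mpr h⟩)
  have hNx : ∀ w, G.Adj x w ↔ (w = a ∨ w = b ∨ w = c ∨ w = d) := by
    intro w
    constructor
    · intro h
      by_cases hw : w ∈ G.neighborFinset y
      · have := (hmem w).mp (Finset.mem_inter.mpr ⟨(mem_nb _ _).mpr h, hw⟩)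
        tauto
      · have hmm : w ∈ G.neighborFinset x \ (G.neighborFinset x ∩ G.neighborFinset y) :=
          Finset.mem_sdiff.mpr ⟨(mem_nb _ _).mpr h,
            fun hin => hw (Finset.mem_inter.mp hin).2⟩
        rw [hd, Finset.mem_singleton] at hmm
        tauto
    · rintro (rfl | rfl | rfl | rfl)
      exacts [hxa, hxb, hxc, hxd]
  -- e : fourth neighbor of y
  have hcard_e : (G.neighborFinset y \ (G.neighborFinset x ∩ G.neighborFinset y)).card = 1 := by
    rw [Finset.card_sdiff_of_subset Finset.inter_subset_right, hdeg, h3c]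
  obtain ⟨e, he⟩ := Finset.card_eq_one.mp hcard_e
  have hemem : e ∈ G.neighborFinset y \ (G.neighborFinset x ∩ G.neighborFinset y) := by
    rw [he]; exact Finset.mem_singleton_self e
  have hye : G.Adj y e := by
    have := (Finset.mem_sdiff.mp hemem).1
    rwa [mem_nb] at this
  have hnxe : ¬ G.Adj x e := by
    intro h
    exact (Finset.mem_sdiff.mp hemem).2 (Finset.mem_inter.mpr
      ⟨(mem_nb _ _).mpr h, (mem_nb _ _).mpr hye⟩)
  have hNy : ∀ w, G.Adj y w ↔ (w = a ∨ w = b ∨ w = c ∨ w = e) := by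
    intro w
    constructor
    · intro h
      by_cases hw : w ∈ G.neighborFinset x
      · have := (hmem w).mp (Finset.mem_inter.mpr ⟨hw, (mem_nb _ _).mpr h⟩)
        tauto
      · have hmm : w ∈ G.neighborFinset y \ (G.neighborFinset x ∩ G.neighborFinset y) :=
          Finset.mem_sdiff.mpr ⟨(mem_nb _ _).mpr h,
            fun hin => hw (Finset.mem_inter.mp hin).1⟩
        rw [he, Finset.mem_singleton] at hmm
        tauto
    · rintro (rfl | rfl | rfl | rfl)
      exacts [hya, hyb, hyc, hye]
  have hex : e ≠ x := fun h => hnxy ((h ▸ hye).symm)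
  have hde : G.Adj d e := by
    obtain ⟨w, hwx, hwe⟩ := hcom x e (fun h => hex h.symm) hnxe
    rcases (hNx w).mp hwx with rfl | rfl | rfl | rfl
    · exact absurd hwe.symm (htri y _ e hya hye)
    · exact absurd hwe.symm (htri y _ e hyb hye)
    · exact absurd hwe.symm (htri y _ e hyc hye)
    · exact hwe.symm
  -- children
  have hchild : ∀ u : V, G.Adj x u → G.Adj y u → ∃ u1 u2 : V, u1 ≠ u2 ∧ u1 ≠ x ∧ u1 ≠ y ∧
      u2 ≠ x ∧ u2 ≠ y ∧ (∀ w, G.Adj u w ↔ (w = x ∨ w = y ∨ w = u1 ∨ w = u2)) := by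
    intro u hxu hyu
    have hsubu : ({x, y} : Finset V) ⊆ G.neighborFinset u := by
      intro w hw
      rw [Finset.mem_insert, Finset.mem_singleton] at hw
      rcases hw with rfl | rfl
      · exact (mem_nb _ _).mpr hxu.symm
      · exact (mem_nb _ _).mpr hyu.symm
    have hcardu : (G.neighborFinset u \ {x, y}).card = 2 := by
      rw [Finset.card_sdiff_of_subset hsubu, hdeg, Finset.card_insert_of_notMem (by simp [hxy]),
        Finset.card_singleton]
    obtain ⟨u1, u2, h12, hK⟩ := Finset.card_eq_two.mp hcardu
    have hm1 : u1 ∈ G.neighborFinset u \ {x, y} := by rw [hK]; simp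
    have hm2 : u2 ∈ G.neighborFinset u \ {x, y} := by rw [hK]; simp
    rw [Finset.mem_sdiff, mem_nb, Finset.mem_insert, Finset.mem_singleton] at hm1 hm2
    push_neg at hm1 hm2
    refine ⟨u1, u2, h12, hm1.2.1, hm1.2.2, hm2.2.1, hm2.2.2, ?_⟩
    intro w
    constructor
    · intro h
      by_cases hw : w = x ∨ w = y
      · tauto
      · push_neg at hw
        have : w ∈ G.neighborFinset u \ {x, y} := by
          rw [Finset.mem_sdiff, Finset.mem_insert, Finset.mem_singleton]
          exact ⟨(mem_nb _ _).mpr h, by tauto⟩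
        rw [hK, Finset.mem_insert, Finset.mem_singleton] at this
        tauto
    · rintro (rfl | rfl | rfl | rfl)
      · exact hxu.symm
      · exact hyu.symm
      · exact hm1.1
      · exact hm2.1
  obtain ⟨a1, a2, ha12, ha1x, ha1y, ha2x, ha2y, hNa⟩ := hchild a hxa hya
  obtain ⟨b1, b2, hb12, hb1x, hb1y, hb2x, hb2y, hNb⟩ := hchild b hxb hyb
  obtain ⟨c1, c2, hc12, hc1x, hc1y, hc2x, hc2y, hNc⟩ := hchild c hxc hyc
  -- cover
  have key : ∀ z : V, z = x ∨ z = y ∨ z = d ∨ z = e ∨ z = a ∨ z = b ∨ z = c ∨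
      z = a1 ∨ z = a2 ∨ z = b1 ∨ z = b2 ∨ z = c1 ∨ z = c2 := by
    intro z
    by_cases hzx : z = x
    · exact Or.inl hzx
    by_cases hzy : z = y
    · exact Or.inr (Or.inl hzy)
    by_cases hax : G.Adj x z
    · rcases (hNx z).mp hax with rfl | rfl | rfl | rfl <;> simp
    by_cases hay : G.Adj y z
    · rcases (hNy z).mp hay with rfl | rfl | rfl | rfl <;> simp
    obtain ⟨w1, hw1x, hw1z⟩ := hcom x z (fun h => hzx h.symm) hax
    obtain ⟨w2, hw2y, hw2z⟩ := hcom y z (fun h => hzy h.symm) hay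
    rcases (hNx w1).mp hw1x with rfl | rfl | rfl | rfl
    · rcases (hNa z).mp hw1z.symm with rfl | rfl | rfl | rfl <;> simp_all
    · rcases (hNb z).mp hw1z.symm with rfl | rfl | rfl | rfl <;> simp_all
    · rcases (hNc z).mp hw1z.symm with rfl | rfl | rfl | rfl <;> simp_all
    · rcases (hNy w2).mp hw2y with rfl | rfl | rfl | rfl
      · rcases (hNa z).mp hw2z.symm with rfl | rfl | rfl | rfl <;> simp_all
      · rcases (hNb z).mp hw2z.symm with rfl | rfl | rfl | rfl <;> simp_all
      · rcases (hNc z).mp hw2z.symm with rfl | rfl | rfl | rfl <;> simp_all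
      · exact absurd hw2z.symm (htri _ _ z hde hw1z.symm)
  -- all 13 are distinct (else V would have ≤ 12 elements)
  have hn13 : 13 ≤ n := hcon
  have hcover : ∀ z : V, z ∈ ([x,y,d,e,a,b,c,a1,a2,b1,b2,c1,c2] : List V).toFinset := by
    intro z
    rw [List.mem_toFinset]
    rcases key z with rfl|rfl|rfl|rfl|rfl|rfl|rfl|rfl|rfl|rfl|rfl|rfl|rfl <;> simp
  have h13le : 13 ≤ ([x,y,d,e,a,b,c,a1,a2,b1,b2,c1,c2] : List V).toFinset.card := by
    have hsub : (Finset.univ : Finset V) ⊆ ([x,y,d,e,a,b,c,a1,a2,b1,b2,c1,c2] : List V).toFinset :=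
      fun z _ => hcover z
    have h2 := Finset.card_le_card hsub
    rw [Finset.card_univ, hn] at h2
    omega
  have hnd : ([x,y,d,e,a,b,c,a1,a2,b1,b2,c1,c2] : List V).Nodup := by
    have h1 := List.card_toFinset ([x,y,d,e,a,b,c,a1,a2,b1,b2,c1,c2] : List V)
    have h3 := ([x,y,d,e,a,b,c,a1,a2,b1,b2,c1,c2] : List V).dedup_sublist.length_le
    have hlen : ([x,y,d,e,a,b,c,a1,a2,b1,b2,c1,c2] : List V).length = 13 := by simp
    have heq : ([x,y,d,e,a,b,c,a1,a2,b1,b2,c1,c2] : List V).dedup.length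
        = ([x,y,d,e,a,b,c,a1,a2,b1,b2,c1,c2] : List V).length := by omega
    exact List.dedup_eq_self.mp
      (([x,y,d,e,a,b,c,a1,a2,b1,b2,c1,c2] : List V).dedup_sublist.eq_of_length heq)
  simp only [List.nodup_cons, List.mem_cons, List.not_mem_nil, List.mem_singleton, not_or,
    List.nodup_nil, and_true, or_false] at hnd
  obtain ⟨⟨nxy,nxd,nxe,nxa,nxb,nxc,nxa1,nxa2,nxb1,nxb2,nxc1,nxc2⟩,
    ⟨nyd,nye,nya,nyb,nyc,nya1,nya2,nyb1,nyb2,nyc1,nyc2⟩,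
    ⟨nde,nda,ndb,ndc,nda1,nda2,ndb1,ndb2,ndc1,ndc2⟩,
    ⟨nea,neb,nec,nea1,nea2,neb1,neb2,nec1,nec2⟩,
    ⟨nab_,nac_,naa1,naa2,nab1,nab2,nac1,nac2⟩,
    ⟨nbc_,nba1,nba2,nbb1,nbb2,nbc1,nbc2⟩,
    ⟨nca1,nca2,ncb1,ncb2,ncc1,ncc2⟩,
    ⟨na1a2,na1b1,na1b2,na1c1,na1c2⟩,
    ⟨na2b1,na2b2,na2c1,na2c2⟩,
    ⟨nb1b2,nb1c1,nb1c2⟩,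
    ⟨nb2c1,nb2c2⟩,
    ⟨nc1c2, -⟩⟩ := hnd
  -- adjacency of letters to children
  have haa1 : G.Adj a a1 := (hNa a1).mpr (Or.inr (Or.inr (Or.inl rfl)))
  have haa2 : G.Adj a a2 := (hNa a2).mpr (Or.inr (Or.inr (Or.inr rfl)))
  have hbb1 : G.Adj b b1 := (hNb b1).mpr (Or.inr (Or.inr (Or.inl rfl)))
  have hbb2 : G.Adj b b2 := (hNb b2).mpr (Or.inr (Or.inr (Or.inr rfl)))
  have hcc1 : G.Adj c c1 := (hNc c1).mpr (Or.inr (Or.inr (Or.inl rfl)))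
  have hcc2 : G.Adj c c2 := (hNc c2).mpr (Or.inr (Or.inr (Or.inr rfl)))
  -- the other two neighbours of d and of e
  have hsubd : ({x, e} : Finset V) ⊆ G.neighborFinset d := by
    intro w hw
    rw [Finset.mem_insert, Finset.mem_singleton] at hw
    rcases hw with rfl | rfl
    · exact (mem_nb _ _).mpr hxd.symm
    · exact (mem_nb _ _).mpr hde
  have hKdcard : (G.neighborFinset d \ {x, e}).card = 2 := by
    rw [Finset.card_sdiff_of_subset hsubd, hdeg, Finset.card_insert_of_notMem (by simp [nxe]),
      Finset.card_singleton]
  have hsube : ({y, d} : Finset V) ⊆ G.neighborFinset e := by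
    intro w hw
    rw [Finset.mem_insert, Finset.mem_singleton] at hw
    rcases hw with rfl | rfl
    · exact (mem_nb _ _).mpr hye.symm
    · exact (mem_nb _ _).mpr hde.symm
  have hKecard : (G.neighborFinset e \ {y, d}).card = 2 := by
    rw [Finset.card_sdiff_of_subset hsube, hdeg, Finset.card_insert_of_notMem (by simp [nyd]),
      Finset.card_singleton]
  -- a child not adjacent to d nor e
  have hTcard : ({a1,a2,b1,b2,c1,c2} : Finset V).card = 6 := by
    rw [Finset.card_insert_of_notMem (by simp [na1a2, na1b1, na1b2, na1c1, na1c2]),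
      Finset.card_insert_of_notMem (by simp [na2b1, na2b2, na2c1, na2c2]),
      Finset.card_insert_of_notMem (by simp [nb1b2, nb1c1, nb1c2]),
      Finset.card_insert_of_notMem (by simp [nb2c1, nb2c2]),
      Finset.card_insert_of_notMem (by simp [nc1c2]), Finset.card_singleton]
  have hple : 0 < (({a1,a2,b1,b2,c1,c2} : Finset V) \
      ((G.neighborFinset d \ {x, e}) ∪ (G.neighborFinset e \ {y, d}))).card := by
    have h1 := Finset.le_card_sdiff ((G.neighborFinset d \ {x, e}) ∪ (G.neighborFinset e \ {y, d}))
      ({a1,a2,b1,b2,c1,c2} : Finset V)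
    have h2 := Finset.card_union_le (G.neighborFinset d \ {x, e}) (G.neighborFinset e \ {y, d})
    omega
  obtain ⟨p, hp⟩ := Finset.card_pos.mp hple
  rw [Finset.mem_sdiff, Finset.mem_union, not_or] at hp
  have hpT := hp.1
  have hpKd := hp.2.1
  have hpKe := hp.2.2
  simp only [Finset.mem_insert, Finset.mem_singleton] at hpT
  -- helpers
  have hnxz : ∀ z : V, z ≠ a → z ≠ b → z ≠ c → z ≠ d → ¬ G.Adj x z := by
    intro z h1 h2 h3 h4 h
    rcases (hNx z).mp h with h' | h' | h' | h'
    exacts [h1 h', h2 h', h3 h', h4 h']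
  have hnyz : ∀ z : V, z ≠ a → z ≠ b → z ≠ c → z ≠ e → ¬ G.Adj y z := by
    intro z h1 h2 h3 h4 h
    rcases (hNy z).mp h with h' | h' | h' | h'
    exacts [h1 h', h2 h', h3 h', h4 h']
  have hnxa1 : ¬ G.Adj x a1 := hnxz a1 (Ne.symm naa1) (Ne.symm nba1) (Ne.symm nca1) (Ne.symm nda1)
  have hnxa2 : ¬ G.Adj x a2 := hnxz a2 (Ne.symm naa2) (Ne.symm nba2) (Ne.symm nca2) (Ne.symm nda2)
  have hnxb1 : ¬ G.Adj x b1 := hnxz b1 (Ne.symm nab1) (Ne.symm nbb1) (Ne.symm ncb1) (Ne.symm ndb1)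
  have hnxb2 : ¬ G.Adj x b2 := hnxz b2 (Ne.symm nab2) (Ne.symm nbb2) (Ne.symm ncb2) (Ne.symm ndb2)
  have hnxc1 : ¬ G.Adj x c1 := hnxz c1 (Ne.symm nac1) (Ne.symm nbc1) (Ne.symm ncc1) (Ne.symm ndc1)
  have hnxc2 : ¬ G.Adj x c2 := hnxz c2 (Ne.symm nac2) (Ne.symm nbc2) (Ne.symm ncc2) (Ne.symm ndc2)
  have hnya1 : ¬ G.Adj y a1 := hnyz a1 (Ne.symm naa1) (Ne.symm nba1) (Ne.symm nca1) (Ne.symm nea1)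
  have hnya2 : ¬ G.Adj y a2 := hnyz a2 (Ne.symm naa2) (Ne.symm nba2) (Ne.symm nca2) (Ne.symm nea2)
  have hnyb1 : ¬ G.Adj y b1 := hnyz b1 (Ne.symm nab1) (Ne.symm nbb1) (Ne.symm ncb1) (Ne.symm neb1)
  have hnyb2 : ¬ G.Adj y b2 := hnyz b2 (Ne.symm nab2) (Ne.symm nbb2) (Ne.symm ncb2) (Ne.symm neb2)
  have hnyc1 : ¬ G.Adj y c1 := hnyz c1 (Ne.symm nac1) (Ne.symm nbc1) (Ne.symm ncc1) (Ne.symm nec1)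
  have hnyc2 : ¬ G.Adj y c2 := hnyz c2 (Ne.symm nac2) (Ne.symm nbc2) (Ne.symm ncc2) (Ne.symm nec2)
  have foreign : ∀ (z w w1 w2 : V), (∀ u, G.Adj w u ↔ (u = x ∨ u = y ∨ u = w1 ∨ u = w2)) →
      z ≠ w → z ≠ x → z ≠ y → z ≠ w1 → z ≠ w2 → ¬ G.Adj x z → ¬ G.Adj y z →
      (G.Adj z w1 ∨ G.Adj z w2) := by
    intro z w w1 w2 hNw hzw hzx hzy hz1 hz2 hnx1 hny1
    have hnwz : ¬ G.Adj w z := by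
      intro h
      rcases (hNw z).mp h with h' | h' | h' | h'
      exacts [hzx h', hzy h', hz1 h', hz2 h']
    obtain ⟨u, huw, huz⟩ := hcom w z (fun h => hzw h.symm) hnwz
    rcases (hNw u).mp huw with rfl | rfl | rfl | rfl
    · exact absurd huz.symm hnx1
    · exact absurd huz.symm hny1
    · exact Or.inl huz
    · exact Or.inr huz
  -- the 12 cover facts
  have covA1B : G.Adj a1 b1 ∨ G.Adj a1 b2 :=
    foreign a1 b b1 b2 hNb (Ne.symm nba1) ha1x ha1y na1b1 na1b2 hnxa1 hnya1
  have covA1C : G.Adj a1 c1 ∨ G.Adj a1 c2 :=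
    foreign a1 c c1 c2 hNc (Ne.symm nca1) ha1x ha1y na1c1 na1c2 hnxa1 hnya1
  have covA2B : G.Adj a2 b1 ∨ G.Adj a2 b2 :=
    foreign a2 b b1 b2 hNb (Ne.symm nba2) ha2x ha2y na2b1 na2b2 hnxa2 hnya2
  have covA2C : G.Adj a2 c1 ∨ G.Adj a2 c2 :=
    foreign a2 c c1 c2 hNc (Ne.symm nca2) ha2x ha2y na2c1 na2c2 hnxa2 hnya2
  have covB1A : G.Adj b1 a1 ∨ G.Adj b1 a2 :=
    foreign b1 a a1 a2 hNa (Ne.symm nab1) hb1x hb1y (Ne.symm na1b1) (Ne.symm na2b1) hnxb1 hnyb1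
  have covB1C : G.Adj b1 c1 ∨ G.Adj b1 c2 :=
    foreign b1 c c1 c2 hNc (Ne.symm ncb1) hb1x hb1y nb1c1 nb1c2 hnxb1 hnyb1
  have covB2A : G.Adj b2 a1 ∨ G.Adj b2 a2 :=
    foreign b2 a a1 a2 hNa (Ne.symm nab2) hb2x hb2y (Ne.symm na1b2) (Ne.symm na2b2) hnxb2 hnyb2
  have covB2C : G.Adj b2 c1 ∨ G.Adj b2 c2 :=
    foreign b2 c c1 c2 hNc (Ne.symm ncb2) hb2x hb2y nb2c1 nb2c2 hnxb2 hnyb2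
  have covC1A : G.Adj c1 a1 ∨ G.Adj c1 a2 :=
    foreign c1 a a1 a2 hNa (Ne.symm nac1) hc1x hc1y (Ne.symm na1c1) (Ne.symm na2c1) hnxc1 hnyc1
  have covC1B : G.Adj c1 b1 ∨ G.Adj c1 b2 :=
    foreign c1 b b1 b2 hNb (Ne.symm nbc1) hc1x hc1y (Ne.symm nb1c1) (Ne.symm nb2c1) hnxc1 hnyc1
  have covC2A : G.Adj c2 a1 ∨ G.Adj c2 a2 :=
    foreign c2 a a1 a2 hNa (Ne.symm nac2) hc2x hc2y (Ne.symm na1c2) (Ne.symm na2c2) hnxc2 hnyc2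
  have covC2B : G.Adj c2 b1 ∨ G.Adj c2 b2 :=
    foreign c2 b b1 b2 hNb (Ne.symm nbc2) hc2x hc2y (Ne.symm nb1c2) (Ne.symm nb2c2) hnxc2 hnyc2
  -- degree ≤ 3 facts
  have deg5 : ∀ (z ℓ u1 u2 u3 u4 : V), G.Adj z ℓ → G.Adj z u1 → G.Adj z u2 → G.Adj z u3 →
      G.Adj z u4 → ℓ ∉ ({u1,u2,u3,u4} : Finset V) → u1 ∉ ({u2,u3,u4} : Finset V) →
      u2 ∉ ({u3,u4} : Finset V) → u3 ≠ u4 → False := by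
    intro z ℓ u1 u2 u3 u4 k0 k1 k2 k3 k4 m0 m1 m2 m3
    have hsub5 : ({ℓ, u1, u2, u3, u4} : Finset V) ⊆ G.neighborFinset z := by
      intro w hw
      simp only [Finset.mem_insert, Finset.mem_singleton] at hw
      rcases hw with rfl | rfl | rfl | rfl | rfl
      exacts [(mem_nb _ _).mpr k0, (mem_nb _ _).mpr k1, (mem_nb _ _).mpr k2,
        (mem_nb _ _).mpr k3, (mem_nb _ _).mpr k4]
    have hc5 : ({ℓ, u1, u2, u3, u4} : Finset V).card = 5 := by
      rw [Finset.card_insert_of_notMem m0, Finset.card_insert_of_notMem m1,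
        Finset.card_insert_of_notMem m2, Finset.card_insert_of_notMem (by simp [m3]),
        Finset.card_singleton]
    have := Finset.card_le_card hsub5
    rw [hc5, hdeg z] at this
    omega
  have degA1 : ¬ G.Adj a1 b1 ∨ ¬ G.Adj a1 b2 ∨ ¬ G.Adj a1 c1 ∨ ¬ G.Adj a1 c2 := by
    by_contra hq
    push_neg at hq
    obtain ⟨k1, k2, k3, k4⟩ := hq
    exact deg5 a1 a b1 b2 c1 c2 haa1.symm k1 k2 k3 k4
      (by simp [nab1, nab2, nac1, nac2]) (by simp [nb1b2, nb1c1, nb1c2])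
      (by simp [nb2c1, nb2c2]) nc1c2
  have degA2 : ¬ G.Adj a2 b1 ∨ ¬ G.Adj a2 b2 ∨ ¬ G.Adj a2 c1 ∨ ¬ G.Adj a2 c2 := by
    by_contra hq
    push_neg at hq
    obtain ⟨k1, k2, k3, k4⟩ := hq
    exact deg5 a2 a b1 b2 c1 c2 haa2.symm k1 k2 k3 k4
      (by simp [nab1, nab2, nac1, nac2]) (by simp [nb1b2, nb1c1, nb1c2])
      (by simp [nb2c1, nb2c2]) nc1c2
  have degB1 : ¬ G.Adj b1 a1 ∨ ¬ G.Adj b1 a2 ∨ ¬ G.Adj b1 c1 ∨ ¬ G.Adj b1 c2 := by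
    by_contra hq
    push_neg at hq
    obtain ⟨k1, k2, k3, k4⟩ := hq
    exact deg5 b1 b a1 a2 c1 c2 hbb1.symm k1 k2 k3 k4
      (by simp [nba1, nba2, nbc1, nbc2]) (by simp [na1a2, na1c1, na1c2])
      (by simp [na2c1, na2c2]) nc1c2
  have degB2 : ¬ G.Adj b2 a1 ∨ ¬ G.Adj b2 a2 ∨ ¬ G.Adj b2 c1 ∨ ¬ G.Adj b2 c2 := by
    by_contra hq
    push_neg at hq
    obtain ⟨k1, k2, k3, k4⟩ := hq
    exact deg5 b2 b a1 a2 c1 c2 hbb2.symm k1 k2 k3 k4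
      (by simp [nba1, nba2, nbc1, nbc2]) (by simp [na1a2, na1c1, na1c2])
      (by simp [na2c1, na2c2]) nc1c2
  have degC1 : ¬ G.Adj c1 a1 ∨ ¬ G.Adj c1 a2 ∨ ¬ G.Adj c1 b1 ∨ ¬ G.Adj c1 b2 := by
    by_contra hq
    push_neg at hq
    obtain ⟨k1, k2, k3, k4⟩ := hq
    exact deg5 c1 c a1 a2 b1 b2 hcc1.symm k1 k2 k3 k4
      (by simp [nca1, nca2, ncb1, ncb2]) (by simp [na1a2, na1b1, na1b2])
      (by simp [na2b1, na2b2]) nb1b2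
  have degC2 : ¬ G.Adj c2 a1 ∨ ¬ G.Adj c2 a2 ∨ ¬ G.Adj c2 b1 ∨ ¬ G.Adj c2 b2 := by
    by_contra hq
    push_neg at hq
    obtain ⟨k1, k2, k3, k4⟩ := hq
    exact deg5 c2 c a1 a2 b1 b2 hcc2.symm k1 k2 k3 k4
      (by simp [nca1, nca2, ncb1, ncb2]) (by simp [na1a2, na1b1, na1b2])
      (by simp [na2b1, na2b2]) nb1b2
  -- master subset lemma for the clean child
  have master : ∀ (q ℓ s f1 f2 g1 g2 ℓf ℓg : V),
      (∀ z : V, z = x ∨ z = y ∨ z = d ∨ z = e ∨ z = ℓ ∨ z = ℓf ∨ z = ℓg ∨ z = s ∨ z = q ∨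
        z = f1 ∨ z = f2 ∨ z = g1 ∨ z = g2) →
      ¬ G.Adj x q → ¬ G.Adj y q → ¬ G.Adj d q → ¬ G.Adj e q →
      G.Adj ℓ q → G.Adj ℓ s →
      (∀ u, G.Adj ℓf u ↔ (u = x ∨ u = y ∨ u = f1 ∨ u = f2)) →
      (∀ u, G.Adj ℓg u ↔ (u = x ∨ u = y ∨ u = g1 ∨ u = g2)) →
      q ≠ x → q ≠ y → q ≠ f1 → q ≠ f2 → q ≠ g1 → q ≠ g2 →
      ∀ w, G.Adj q w → (w = ℓ ∨ w = f1 ∨ w = f2 ∨ w = g1 ∨ w = g2) := by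
    intro q ℓ s f1 f2 g1 g2 ℓf ℓg hkey hnx1 hny1 hnd1 hne1 hlq hls hNf hNg hqx hqy hqf1 hqf2
      hqg1 hqg2 w hw
    rcases hkey w with rfl | rfl | rfl | rfl | rfl | rfl | rfl | rfl | rfl | rfl | rfl | rfl | rfl
    · exact absurd hw.symm hnx1
    · exact absurd hw.symm hny1
    · exact absurd hw.symm hnd1
    · exact absurd hw.symm hne1
    · exact Or.inl rfl
    · rcases (hNf q).mp hw.symm with h' | h' | h' | h'
      exacts [absurd h' hqx, absurd h' hqy, absurd h' hqf1, absurd h' hqf2]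
    · rcases (hNg q).mp hw.symm with h' | h' | h' | h'
      exacts [absurd h' hqx, absurd h' hqy, absurd h' hqg1, absurd h' hqg2]
    · exact absurd hw (htri _ _ _ hlq hls)
    · exact absurd hw (G.loopless.irrefl _)
    · exact Or.inr (Or.inl rfl)
    · exact Or.inr (Or.inr (Or.inl rfl))
    · exact Or.inr (Or.inr (Or.inr (Or.inl rfl)))
    · exact Or.inr (Or.inr (Or.inr (Or.inr rfl)))
  -- from the master subset: the four mixed pair facts
  have pairlem : ∀ (q ℓ f1 f2 g1 g2 : V),
      (∀ w, G.Adj q w → (w = ℓ ∨ w = f1 ∨ w = f2 ∨ w = g1 ∨ w = g2)) →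
      ((G.Adj q f1 ∨ G.Adj q g1) ∧ (G.Adj q f1 ∨ G.Adj q g2) ∧
       (G.Adj q f2 ∨ G.Adj q g1) ∧ (G.Adj q f2 ∨ G.Adj q g2)) := by
    intro q ℓ f1 f2 g1 g2 hm
    have main : ∀ u v : V, (∀ w, G.Adj q w → (w = ℓ ∨ w = u ∨ w = v)) → False := by
      intro u v hsub
      have hs : G.neighborFinset q ⊆ {ℓ, u, v} := by
        intro w hw
        simp only [Finset.mem_insert, Finset.mem_singleton]
        exact hsub w ((mem_nb _ _).mp hw)
      have h1 := Finset.card_le_card hs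
      have h2 : ({ℓ, u, v} : Finset V).card ≤ 3 := by
        apply le_trans (Finset.card_insert_le _ _)
        have h3 := Finset.card_insert_le u ({v} : Finset V)
        simp only [Finset.card_singleton] at h3 ⊢
        omega
      rw [hdeg q] at h1
      omega
    have main2 : ∀ u1 u2 v1 v2 : V,
        (∀ w, G.Adj q w → (w = ℓ ∨ w = u1 ∨ w = u2 ∨ w = v1 ∨ w = v2)) →
        ¬ G.Adj q u1 → ¬ G.Adj q v1 → False := by
      intro u1 u2 v1 v2 hm' h1 h2
      refine main u2 v2 ?_
      intro w hw
      rcases hm' w hw with h | h | h | h | h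
      exacts [Or.inl h, absurd (h ▸ hw) h1, Or.inr (Or.inl h), absurd (h ▸ hw) h2,
        Or.inr (Or.inr h)]
    have perm1 : ∀ w, G.Adj q w → (w = ℓ ∨ w = f1 ∨ w = f2 ∨ w = g2 ∨ w = g1) := by
      intro w hw
      rcases hm w hw with h | h | h | h | h
      exacts [Or.inl h, Or.inr (Or.inl h), Or.inr (Or.inr (Or.inl h)),
        Or.inr (Or.inr (Or.inr (Or.inr h))), Or.inr (Or.inr (Or.inr (Or.inl h)))]
    have perm2 : ∀ w, G.Adj q w → (w = ℓ ∨ w = f2 ∨ w = f1 ∨ w = g1 ∨ w = g2) := by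
      intro w hw
      rcases hm w hw with h | h | h | h | h
      exacts [Or.inl h, Or.inr (Or.inr (Or.inl h)), Or.inr (Or.inl h),
        Or.inr (Or.inr (Or.inr (Or.inl h))), Or.inr (Or.inr (Or.inr (Or.inr h)))]
    have perm3 : ∀ w, G.Adj q w → (w = ℓ ∨ w = f2 ∨ w = f1 ∨ w = g2 ∨ w = g1) := by
      intro w hw
      rcases hm w hw with h | h | h | h | h
      exacts [Or.inl h, Or.inr (Or.inr (Or.inl h)), Or.inr (Or.inl h),
        Or.inr (Or.inr (Or.inr (Or.inr h))), Or.inr (Or.inr (Or.inr (Or.inl h)))]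
    refine ⟨?_, ?_, ?_, ?_⟩
    · by_contra hq; push_neg at hq; exact main2 f1 f2 g1 g2 hm hq.1 hq.2
    · by_contra hq; push_neg at hq; exact main2 f1 f2 g2 g1 perm1 hq.1 hq.2
    · by_contra hq; push_neg at hq; exact main2 f2 f1 g1 g2 perm2 hq.1 hq.2
    · by_contra hq; push_neg at hq; exact main2 f2 f1 g2 g1 perm3 hq.1 hq.2
  -- establish the H4 disjunction, by cases on which child p is
  have HP4 : ((G.Adj a1 b1 ∨ G.Adj a1 c1) ∧ (G.Adj a1 b1 ∨ G.Adj a1 c2) ∧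
        (G.Adj a1 b2 ∨ G.Adj a1 c1) ∧ (G.Adj a1 b2 ∨ G.Adj a1 c2)) ∨
      ((G.Adj a2 b1 ∨ G.Adj a2 c1) ∧ (G.Adj a2 b1 ∨ G.Adj a2 c2) ∧
        (G.Adj a2 b2 ∨ G.Adj a2 c1) ∧ (G.Adj a2 b2 ∨ G.Adj a2 c2)) ∨
      ((G.Adj a1 b1 ∨ G.Adj b1 c1) ∧ (G.Adj a1 b1 ∨ G.Adj b1 c2) ∧
        (G.Adj a2 b1 ∨ G.Adj b1 c1) ∧ (G.Adj a2 b1 ∨ G.Adj b1 c2)) ∨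
      ((G.Adj a1 b2 ∨ G.Adj b2 c1) ∧ (G.Adj a1 b2 ∨ G.Adj b2 c2) ∧
        (G.Adj a2 b2 ∨ G.Adj b2 c1) ∧ (G.Adj a2 b2 ∨ G.Adj b2 c2)) ∨
      ((G.Adj a1 c1 ∨ G.Adj b1 c1) ∧ (G.Adj a1 c1 ∨ G.Adj b2 c1) ∧
        (G.Adj a2 c1 ∨ G.Adj b1 c1) ∧ (G.Adj a2 c1 ∨ G.Adj b2 c1)) ∨
      ((G.Adj a1 c2 ∨ G.Adj b1 c2) ∧ (G.Adj a1 c2 ∨ G.Adj b2 c2) ∧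
        (G.Adj a2 c2 ∨ G.Adj b1 c2) ∧ (G.Adj a2 c2 ∨ G.Adj b2 c2)) := by
    rcases hpT with h | h | h | h | h | h <;> rw [h] at hpKd hpKe
    · -- p = a1
      have hnd1 : ¬ G.Adj d a1 := fun h => hpKd (Finset.mem_sdiff.mpr
        ⟨(mem_nb _ _).mpr h, by simp [ha1x, Ne.symm nea1]⟩)
      have hne1 : ¬ G.Adj e a1 := fun h => hpKe (Finset.mem_sdiff.mpr
        ⟨(mem_nb _ _).mpr h, by simp [ha1y, Ne.symm nda1]⟩)
      have key' : ∀ z : V, z = x ∨ z = y ∨ z = d ∨ z = e ∨ z = a ∨ z = b ∨ z = c ∨ z = a2 ∨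
          z = a1 ∨ z = b1 ∨ z = b2 ∨ z = c1 ∨ z = c2 := fun z => by
        rcases key z with h | h | h | h | h | h | h | h | h | h | h | h | h <;> simp [h]
      have hmas := master a1 a a2 b1 b2 c1 c2 b c key' hnxa1 hnya1 hnd1 hne1 haa1 haa2 hNb hNc
        ha1x ha1y na1b1 na1b2 na1c1 na1c2
      exact Or.inl (pairlem a1 a b1 b2 c1 c2 hmas)
    · -- p = a2
      have hnd1 : ¬ G.Adj d a2 := fun h => hpKd (Finset.mem_sdiff.mpr
        ⟨(mem_nb _ _).mpr h, by simp [ha2x, Ne.symm nea2]⟩)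
      have hne1 : ¬ G.Adj e a2 := fun h => hpKe (Finset.mem_sdiff.mpr
        ⟨(mem_nb _ _).mpr h, by simp [ha2y, Ne.symm nda2]⟩)
      have key' : ∀ z : V, z = x ∨ z = y ∨ z = d ∨ z = e ∨ z = a ∨ z = b ∨ z = c ∨ z = a1 ∨
          z = a2 ∨ z = b1 ∨ z = b2 ∨ z = c1 ∨ z = c2 := key
      have hmas := master a2 a a1 b1 b2 c1 c2 b c key' hnxa2 hnya2 hnd1 hne1 haa2 haa1 hNb hNc
        ha2x ha2y na2b1 na2b2 na2c1 na2c2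
      exact Or.inr (Or.inl (pairlem a2 a b1 b2 c1 c2 hmas))
    · -- p = b1
      have hnd1 : ¬ G.Adj d b1 := fun h => hpKd (Finset.mem_sdiff.mpr
        ⟨(mem_nb _ _).mpr h, by simp [hb1x, Ne.symm neb1]⟩)
      have hne1 : ¬ G.Adj e b1 := fun h => hpKe (Finset.mem_sdiff.mpr
        ⟨(mem_nb _ _).mpr h, by simp [hb1y, Ne.symm ndb1]⟩)
      have key' : ∀ z : V, z = x ∨ z = y ∨ z = d ∨ z = e ∨ z = b ∨ z = a ∨ z = c ∨ z = b2 ∨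
          z = b1 ∨ z = a1 ∨ z = a2 ∨ z = c1 ∨ z = c2 := fun z => by
        rcases key z with h | h | h | h | h | h | h | h | h | h | h | h | h <;> simp [h]
      have hmas := master b1 b b2 a1 a2 c1 c2 a c key' hnxb1 hnyb1 hnd1 hne1 hbb1 hbb2 hNa hNc
        hb1x hb1y (Ne.symm na1b1) (Ne.symm na2b1) nb1c1 nb1c2
      have hh := pairlem b1 b a1 a2 c1 c2 hmas
      exact Or.inr (Or.inr (Or.inl ⟨hh.1.imp (fun h => h.symm) id, hh.2.1.imp (fun h => h.symm) id,
        hh.2.2.1.imp (fun h => h.symm) id, hh.2.2.2.imp (fun h => h.symm) id⟩))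
    · -- p = b2
      have hnd1 : ¬ G.Adj d b2 := fun h => hpKd (Finset.mem_sdiff.mpr
        ⟨(mem_nb _ _).mpr h, by simp [hb2x, Ne.symm neb2]⟩)
      have hne1 : ¬ G.Adj e b2 := fun h => hpKe (Finset.mem_sdiff.mpr
        ⟨(mem_nb _ _).mpr h, by simp [hb2y, Ne.symm ndb2]⟩)
      have key' : ∀ z : V, z = x ∨ z = y ∨ z = d ∨ z = e ∨ z = b ∨ z = a ∨ z = c ∨ z = b1 ∨
          z = b2 ∨ z = a1 ∨ z = a2 ∨ z = c1 ∨ z = c2 := fun z => by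
        rcases key z with h | h | h | h | h | h | h | h | h | h | h | h | h <;> simp [h]
      have hmas := master b2 b b1 a1 a2 c1 c2 a c key' hnxb2 hnyb2 hnd1 hne1 hbb2 hbb1 hNa hNc
        hb2x hb2y (Ne.symm na1b2) (Ne.symm na2b2) nb2c1 nb2c2
      have hh := pairlem b2 b a1 a2 c1 c2 hmas
      exact Or.inr (Or.inr (Or.inr (Or.inl ⟨hh.1.imp (fun h => h.symm) id,
        hh.2.1.imp (fun h => h.symm) id, hh.2.2.1.imp (fun h => h.symm) id,
        hh.2.2.2.imp (fun h => h.symm) id⟩)))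
    · -- p = c1
      have hnd1 : ¬ G.Adj d c1 := fun h => hpKd (Finset.mem_sdiff.mpr
        ⟨(mem_nb _ _).mpr h, by simp [hc1x, Ne.symm nec1]⟩)
      have hne1 : ¬ G.Adj e c1 := fun h => hpKe (Finset.mem_sdiff.mpr
        ⟨(mem_nb _ _).mpr h, by simp [hc1y, Ne.symm ndc1]⟩)
      have key' : ∀ z : V, z = x ∨ z = y ∨ z = d ∨ z = e ∨ z = c ∨ z = a ∨ z = b ∨ z = c2 ∨
          z = c1 ∨ z = a1 ∨ z = a2 ∨ z = b1 ∨ z = b2 := fun z => by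
        rcases key z with h | h | h | h | h | h | h | h | h | h | h | h | h <;> simp [h]
      have hmas := master c1 c c2 a1 a2 b1 b2 a b key' hnxc1 hnyc1 hnd1 hne1 hcc1 hcc2 hNa hNb
        hc1x hc1y (Ne.symm na1c1) (Ne.symm na2c1) (Ne.symm nb1c1) (Ne.symm nb2c1)
      have hh := pairlem c1 c a1 a2 b1 b2 hmas
      exact Or.inr (Or.inr (Or.inr (Or.inr (Or.inl ⟨hh.1.imp (fun h => h.symm) (fun h => h.symm),
        hh.2.1.imp (fun h => h.symm) (fun h => h.symm),
        hh.2.2.1.imp (fun h => h.symm) (fun h => h.symm),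
        hh.2.2.2.imp (fun h => h.symm) (fun h => h.symm)⟩))))
    · -- p = c2
      have hnd1 : ¬ G.Adj d c2 := fun h => hpKd (Finset.mem_sdiff.mpr
        ⟨(mem_nb _ _).mpr h, by simp [hc2x, Ne.symm nec2]⟩)
      have hne1 : ¬ G.Adj e c2 := fun h => hpKe (Finset.mem_sdiff.mpr
        ⟨(mem_nb _ _).mpr h, by simp [hc2y, Ne.symm ndc2]⟩)
      have key' : ∀ z : V, z = x ∨ z = y ∨ z = d ∨ z = e ∨ z = c ∨ z = a ∨ z = b ∨ z = c1 ∨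
          z = c2 ∨ z = a1 ∨ z = a2 ∨ z = b1 ∨ z = b2 := fun z => by
        rcases key z with h | h | h | h | h | h | h | h | h | h | h | h | h <;> simp [h]
      have hmas := master c2 c c1 a1 a2 b1 b2 a b key' hnxc2 hnyc2 hnd1 hne1 hcc2 hcc1 hNa hNb
        hc2x hc2y (Ne.symm na1c2) (Ne.symm na2c2) (Ne.symm nb1c2) (Ne.symm nb2c2)
      have hh := pairlem c2 c a1 a2 b1 b2 hmas
      exact Or.inr (Or.inr (Or.inr (Or.inr (Or.inr ⟨hh.1.imp (fun h => h.symm) (fun h => h.symm),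
        hh.2.1.imp (fun h => h.symm) (fun h => h.symm),
        hh.2.2.1.imp (fun h => h.symm) (fun h => h.symm),
        hh.2.2.2.imp (fun h => h.symm) (fun h => h.symm)⟩))))
  -- feed everything to the boolean endgame
  have tri1 : ¬ G.Adj a1 b1 ∨ ¬ G.Adj a1 c1 ∨ ¬ G.Adj b1 c1 := by
    by_contra hq; push_neg at hq; exact htri a1 b1 c1 hq.1 hq.2.1 hq.2.2
  have tri2 : ¬ G.Adj a1 b1 ∨ ¬ G.Adj a1 c2 ∨ ¬ G.Adj b1 c2 := by
    by_contra hq; push_neg at hq; exact htri a1 b1 c2 hq.1 hq.2.1 hq.2.2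
  have tri3 : ¬ G.Adj a1 b2 ∨ ¬ G.Adj a1 c1 ∨ ¬ G.Adj b2 c1 := by
    by_contra hq; push_neg at hq; exact htri a1 b2 c1 hq.1 hq.2.1 hq.2.2
  have tri4 : ¬ G.Adj a1 b2 ∨ ¬ G.Adj a1 c2 ∨ ¬ G.Adj b2 c2 := by
    by_contra hq; push_neg at hq; exact htri a1 b2 c2 hq.1 hq.2.1 hq.2.2
  have tri5 : ¬ G.Adj a2 b1 ∨ ¬ G.Adj a2 c1 ∨ ¬ G.Adj b1 c1 := by
    by_contra hq; push_neg at hq; exact htri a2 b1 c1 hq.1 hq.2.1 hq.2.2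
  have tri6 : ¬ G.Adj a2 b1 ∨ ¬ G.Adj a2 c2 ∨ ¬ G.Adj b1 c2 := by
    by_contra hq; push_neg at hq; exact htri a2 b1 c2 hq.1 hq.2.1 hq.2.2
  have tri7 : ¬ G.Adj a2 b2 ∨ ¬ G.Adj a2 c1 ∨ ¬ G.Adj b2 c1 := by
    by_contra hq; push_neg at hq; exact htri a2 b2 c1 hq.1 hq.2.1 hq.2.2
  have tri8 : ¬ G.Adj a2 b2 ∨ ¬ G.Adj a2 c2 ∨ ¬ G.Adj b2 c2 := by
    by_contra hq; push_neg at hq; exact htri a2 b2 c2 hq.1 hq.2.1 hq.2.2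
  apply SQSR_endgame (decide (G.Adj a1 b1)) (decide (G.Adj a1 b2)) (decide (G.Adj a2 b1))
    (decide (G.Adj a2 b2)) (decide (G.Adj a1 c1)) (decide (G.Adj a1 c2)) (decide (G.Adj a2 c1))
    (decide (G.Adj a2 c2)) (decide (G.Adj b1 c1)) (decide (G.Adj b1 c2)) (decide (G.Adj b2 c1))
    (decide (G.Adj b2 c2))
  simp only [Bool.and_eq_true, Bool.or_eq_true, Bool.not_eq_true', decide_eq_false_iff_not,
    decide_eq_true_eq]
  exact ⟨covA1B, covA1C, covA2B, covA2C,
    covB1A.imp (fun h => h.symm) (fun h => h.symm), covB1C,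
    covB2A.imp (fun h => h.symm) (fun h => h.symm), covB2C,
    covC1A.imp (fun h => h.symm) (fun h => h.symm),
    covC1B.imp (fun h => h.symm) (fun h => h.symm),
    covC2A.imp (fun h => h.symm) (fun h => h.symm),
    covC2B.imp (fun h => h.symm) (fun h => h.symm),
    degA1, degA2,
    degB1.imp (fun h k => h k.symm) (Or.imp (fun h k => h k.symm) id),
    degB2.imp (fun h k => h k.symm) (Or.imp (fun h k => h k.symm) id),
    degC1.imp (fun h k => h k.symm) (Or.imp (fun h k => h k.symm)
      (Or.imp (fun h k => h k.symm) (fun h k => h k.symm))),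
    degC2.imp (fun h k => h k.symm) (Or.imp (fun h k => h k.symm)
      (Or.imp (fun h k => h k.symm) (fun h k => h k.symm))),
    tri1, tri2, tri3, tri4, tri5, tri6, tri7, tri8,
    HP4⟩
end

section
/- Let G be a k-regular graph of order n, k ≥ 4, such that adjacent vertices have no common neighbour and every pair of non-adjacent vertices has exactly k−1, k−2, or k−3 common neighbours (each value attained). Then n ≥ 2k + 2; that is, for any vertex u, the number of vertices outside N[u] is at least k + 1. -/
open Finset

theorem stmt_6 {V : Type*} [Fintype V] [DecidableEq V] (G : SimpleGraph V) [DecidableRel G.Adj]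
    (n k : ℕ) (hk : 4 ≤ k) (hn : Fintype.card V = n)
    (hreg : G.IsRegularOfDegree k)
    (ha : ∀ x y : V, G.Adj x y → G.neighborFinset x ∩ G.neighborFinset y = ∅)
    (hna : ∀ x y : V, x ≠ y → ¬ G.Adj x y →
      (G.neighborFinset x ∩ G.neighborFinset y).card = k - 1 ∨
      (G.neighborFinset x ∩ G.neighborFinset y).card = k - 2 ∨
      (G.neighborFinset x ∩ G.neighborFinset y).card = k - 3)
    (hr1 : ∃ x y : V, x ≠ y ∧ ¬ G.Adj x y ∧
      (G.neighborFinset x ∩ G.neighborFinset y).card = k - 1)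
    (hr2 : ∃ x y : V, x ≠ y ∧ ¬ G.Adj x y ∧
      (G.neighborFinset x ∩ G.neighborFinset y).card = k - 2)
    (hr3 : ∃ x y : V, x ≠ y ∧ ¬ G.Adj x y ∧
      (G.neighborFinset x ∩ G.neighborFinset y).card = k - 3) :
    n ≥ 2 * k + 2 ∧ ∀ u : V, (Finset.univ \ insert u (G.neighborFinset u)).card ≥ k + 1 := by
  classical
  obtain ⟨x, y, hxyne, hxyna, hxy3⟩ := hr3
  set S : Finset V := insert x (G.neighborFinset x) with hS
  have hxnot : x ∉ G.neighborFinset x := by simp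
  have hScard : S.card = k + 1 := by
    rw [hS, Finset.card_insert_of_notMem hxnot]
    have := hreg x
    rw [SimpleGraph.degree] at this
    omega
  set D : Finset V := Finset.univ \ S with hD
  have hDcard : D.card = n - (k + 1) := by
    rw [hD, Finset.card_sdiff_of_subset (Finset.subset_univ _), hScard, Finset.card_univ, hn]
  -- helper: card of neighborFinset
  have hdeg : ∀ v : V, (G.neighborFinset v).card = k := fun v => hreg v
  -- double counting
  have hconv : ∀ (A B : Finset V), ∑ v ∈ A, (G.neighborFinset v ∩ B).card
      = ∑ v ∈ A, ∑ w ∈ B, (if G.Adj v w then 1 else 0) := by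
    intro A B
    refine Finset.sum_congr rfl fun v _ => ?_
    have h : G.neighborFinset v ∩ B = B.filter (fun w => G.Adj v w) := by
      ext w
      simp [Finset.mem_filter, and_comm]
    rw [h, Finset.card_filter]
  have hdc : ∑ v ∈ G.neighborFinset x, (G.neighborFinset v ∩ D).card
      = ∑ w ∈ D, (G.neighborFinset w ∩ G.neighborFinset x).card := by
    rw [hconv, hconv, Finset.sum_comm]
    refine Finset.sum_congr rfl fun w _ => Finset.sum_congr rfl fun v _ => ?_
    exact if_congr (G.adj_comm v w) rfl rfl
  -- each neighbour of x has exactly k-1 neighbours in D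
  have hB : ∀ v ∈ G.neighborFinset x, (G.neighborFinset v ∩ D).card = k - 1 := by
    intro v hv
    rw [SimpleGraph.mem_neighborFinset] at hv
    have hdisj := ha x v hv
    have hinterS : G.neighborFinset v ∩ S = {x} := by
      ext w
      simp only [hS, Finset.mem_inter, Finset.mem_insert, SimpleGraph.mem_neighborFinset,
        Finset.mem_singleton]
      constructor
      · rintro ⟨hw, rfl | hw2⟩
        · rfl
        · exfalso
          have hmem : w ∈ G.neighborFinset x ∩ G.neighborFinset v := by
            simp [SimpleGraph.mem_neighborFinset, hw2, hw]
          rw [hdisj] at hmem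
          exact absurd hmem (Finset.notMem_empty w)
      · rintro rfl
        exact ⟨hv.symm, Or.inl rfl⟩
    have hsd : G.neighborFinset v ∩ D = G.neighborFinset v \ S := by
      rw [hD]
      ext w
      simp [Finset.mem_sdiff, and_comm]
    rw [hsd]
    have h2 := Finset.card_sdiff_add_card_inter (G.neighborFinset v) S
    rw [hinterS, Finset.card_singleton, hdeg v] at h2
    omega
  have hLHS : ∑ v ∈ G.neighborFinset x, (G.neighborFinset v ∩ D).card = k * (k - 1) := by
    rw [Finset.sum_congr rfl hB, Finset.sum_const, hdeg x, smul_eq_mul]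
  have hyD : y ∈ D := by
    simp only [hD, hS, Finset.mem_sdiff, Finset.mem_univ, true_and, Finset.mem_insert,
      SimpleGraph.mem_neighborFinset]
    push_neg
    exact ⟨fun h => hxyne h.symm, hxyna⟩
  have hyval : (G.neighborFinset y ∩ G.neighborFinset x).card = k - 3 := by
    rw [Finset.inter_comm]; exact hxy3
  -- bound each other term
  have hRHS : ∑ w ∈ D, (G.neighborFinset w ∩ G.neighborFinset x).card
      ≤ (k - 3) + (D.card - 1) * (k - 1) := by
    rw [← Finset.add_sum_erase D _ hyD, hyval]
    gcongr
    calc ∑ w ∈ D.erase y, (G.neighborFinset w ∩ G.neighborFinset x).card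
        ≤ (D.erase y).card * (k - 1) := by
          apply Finset.sum_le_card_nsmul
          intro w hw
          have hwD : w ∈ D := Finset.mem_of_mem_erase hw
          simp only [hD, hS, Finset.mem_sdiff, Finset.mem_univ, true_and, Finset.mem_insert,
            SimpleGraph.mem_neighborFinset] at hwD
          push_neg at hwD
          have hne : x ≠ w := fun h => hwD.1 h.symm
          have hnadj : ¬ G.Adj x w := hwD.2
          have := hna x w hne hnadj
          rw [Finset.inter_comm]
          omega
      _ = (D.card - 1) * (k - 1) := by rw [Finset.card_erase_of_mem hyD]
  have hineq : k * (k - 1) ≤ (k - 3) + (D.card - 1) * (k - 1) := by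
    rw [← hLHS, hdc]; exact hRHS
  have hd1 : 1 ≤ D.card := Finset.card_pos.mpr ⟨y, hyD⟩
  have hDge : D.card ≥ k + 1 := by
    obtain ⟨m, rfl⟩ : ∃ m, k = m + 4 := ⟨k - 4, by omega⟩
    obtain ⟨e, he⟩ : ∃ e, D.card = e + 1 := ⟨D.card - 1, by omega⟩
    rw [he] at hineq
    have e1 : m + 4 - 3 = m + 1 := by omega
    have e2 : m + 4 - 1 = m + 3 := by omega
    rw [e1, e2, Nat.add_sub_cancel] at hineq
    rw [he]
    by_contra hcon
    push_neg at hcon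
    have : e ≤ m + 3 := by omega
    nlinarith
  have hn2 : n ≥ 2 * k + 2 := by omega
  refine ⟨hn2, fun u => ?_⟩
  have hucard : (insert u (G.neighborFinset u)).card = k + 1 := by
    rw [Finset.card_insert_of_notMem (by simp), hdeg u]
  rw [Finset.card_sdiff_of_subset (Finset.subset_univ _), hucard, Finset.card_univ, hn]
  omega
end

section
/- Let G be a k-regular graph of order n, k ≥ 4, such that adjacent vertices have no common neighbour and every pair of non-adjacent vertices has exactly k−1, k−2, or k−3 common neighbours (each value attained). Then n ≥ 2k + 3. -/
open Finset SimpleGraph in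
theorem stmt_7 {V : Type*} [Fintype V] [DecidableEq V] (G : SimpleGraph V) [DecidableRel G.Adj]
    (n k : ℕ) (hk : 4 ≤ k) (hn : Fintype.card V = n)
    (hreg : G.IsRegularOfDegree k)
    (ha : ∀ x y : V, G.Adj x y → G.neighborFinset x ∩ G.neighborFinset y = ∅)
    (hna : ∀ x y : V, x ≠ y → ¬ G.Adj x y →
      (G.neighborFinset x ∩ G.neighborFinset y).card = k - 1 ∨
      (G.neighborFinset x ∩ G.neighborFinset y).card = k - 2 ∨
      (G.neighborFinset x ∩ G.neighborFinset y).card = k - 3)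
    (hr1 : ∃ x y : V, x ≠ y ∧ ¬ G.Adj x y ∧
      (G.neighborFinset x ∩ G.neighborFinset y).card = k - 1)
    (hr2 : ∃ x y : V, x ≠ y ∧ ¬ G.Adj x y ∧
      (G.neighborFinset x ∩ G.neighborFinset y).card = k - 2)
    (hr3 : ∃ x y : V, x ≠ y ∧ ¬ G.Adj x y ∧
      (G.neighborFinset x ∩ G.neighborFinset y).card = k - 3) :
    n ≥ 2 * k + 3 := by
  classical
  by_contra hcon
  push_neg at hcon
  have hcon' : n < 2 * k + 3 := hcon
  have hdeg : ∀ x : V, (G.neighborFinset x).card = k := fun x => hreg x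
  have hbound : ∀ x y : V, x ≠ y → ¬ G.Adj x y →
      (G.neighborFinset x ∩ G.neighborFinset y).card ≤ k - 1 := by
    intro x y h1 h2; rcases hna x y h1 h2 with h | h | h <;> omega
  have L1 : ∀ x : V, ∑ y : V, (G.neighborFinset x ∩ G.neighborFinset y).card = k * k := by
    intro x
    calc ∑ y : V, (G.neighborFinset x ∩ G.neighborFinset y).card
        = ∑ y : V, ∑ z ∈ G.neighborFinset x, if G.Adj z y then 1 else 0 := by
          refine Finset.sum_congr rfl fun y _ => ?_
          rw [← Finset.filter_mem_eq_inter, Finset.card_filter]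
          refine Finset.sum_congr rfl fun z _ => ?_
          simp [SimpleGraph.mem_neighborFinset, SimpleGraph.adj_comm]
      _ = ∑ z ∈ G.neighborFinset x, ∑ y : V, if G.Adj z y then 1 else 0 := Finset.sum_comm
      _ = ∑ z ∈ G.neighborFinset x, (G.neighborFinset z).card := by
          refine Finset.sum_congr rfl fun z _ => ?_
          rw [SimpleGraph.neighborFinset_eq_filter, Finset.card_filter]
      _ = ∑ _z ∈ G.neighborFinset x, k := Finset.sum_congr rfl fun z _ => hdeg z
      _ = k * k := by rw [Finset.sum_const, hdeg x, smul_eq_mul]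
  have L2 : ∀ x : V, ∑ y ∈ Finset.univ \ insert x (G.neighborFinset x),
      (G.neighborFinset x ∩ G.neighborFinset y).card = k * (k - 1) := by
    intro x
    have hdeg : ∀ x : V, (G.neighborFinset x).card = k := fun x => hreg x
    have hsplit : ∑ y ∈ Finset.univ \ insert x (G.neighborFinset x),
          (G.neighborFinset x ∩ G.neighborFinset y).card
        + ∑ y ∈ insert x (G.neighborFinset x),
          (G.neighborFinset x ∩ G.neighborFinset y).card
        = ∑ y : V, (G.neighborFinset x ∩ G.neighborFinset y).card :=
      Finset.sum_sdiff (Finset.subset_univ (insert x (G.neighborFinset x)))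
    have hins : ∑ y ∈ insert x (G.neighborFinset x),
        (G.neighborFinset x ∩ G.neighborFinset y).card = k := by
      rw [Finset.sum_insert (SimpleGraph.notMem_neighborFinset_self G x)]
      have h0 : ∑ y ∈ G.neighborFinset x,
          (G.neighborFinset x ∩ G.neighborFinset y).card = 0 :=
        Finset.sum_eq_zero fun y hy => by
          rw [ha x y ((SimpleGraph.mem_neighborFinset G x y).mp hy), Finset.card_empty]
      rw [h0, Finset.inter_self, hdeg x]
      omega
    rw [hins, L1 x] at hsplit
    have hkk : k * k = k * (k - 1) + k := by rw [← Nat.mul_succ]; congr 1; omega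
    omega
  have hneq : n = 2 * k + 2 := by
    have hdeg : ∀ x : V, (G.neighborFinset x).card = k := fun x => hreg x
    have hbound : ∀ x y : V, x ≠ y → ¬ G.Adj x y →
        (G.neighborFinset x ∩ G.neighborFinset y).card ≤ k - 1 := by
      intro x y h1 h2; rcases hna x y h1 h2 with h | h | h <;> omega
    have hT : ∀ x : V, (Finset.univ \ insert x (G.neighborFinset x)).card = n - (k + 1) := by
      intro x
      rw [Finset.card_sdiff_of_subset (Finset.subset_univ _), Finset.card_univ, hn,
        Finset.card_insert_of_notMem (SimpleGraph.notMem_neighborFinset_self G x), hdeg x]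
    obtain ⟨u, v, huv, hnadj, hc2⟩ := hr2
    have hvT : v ∈ Finset.univ \ insert u (G.neighborFinset u) := by
      simp only [Finset.mem_sdiff, Finset.mem_univ, Finset.mem_insert, true_and,
        SimpleGraph.mem_neighborFinset]
      push_neg
      exact ⟨(Ne.symm huv), hnadj⟩
    have hsum := L2 u
    rw [← Finset.add_sum_erase _ _ hvT, hc2] at hsum
    have hle : ∑ y ∈ (Finset.univ \ insert u (G.neighborFinset u)).erase v,
        (G.neighborFinset u ∩ G.neighborFinset y).card
        ≤ ((Finset.univ \ insert u (G.neighborFinset u)).erase v).card * (k - 1) := by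
      have := Finset.sum_le_card_nsmul ((Finset.univ \ insert u (G.neighborFinset u)).erase v)
        (fun y => (G.neighborFinset u ∩ G.neighborFinset y).card) (k - 1) ?_
      · simpa using this
      · intro y hy
        have hy' := Finset.mem_of_mem_erase hy
        simp only [Finset.mem_sdiff, Finset.mem_univ, Finset.mem_insert, true_and,
          SimpleGraph.mem_neighborFinset] at hy'
        push_neg at hy'
        exact hbound u y (fun h => hy'.1 h.symm) hy'.2
    have hcard : ((Finset.univ \ insert u (G.neighborFinset u)).erase v).card = n - (k + 1) - 1 := by
      rw [Finset.card_erase_of_mem hvT, hT u]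
    rw [hcard] at hle
    -- k*(k-1) = (k-2) + S, S ≤ (n-k-2)*(k-1); if n ≤ 2k+1 contradiction
    by_contra hne
    have hn1 : n - (k + 1) - 1 ≤ k - 1 := by
      have hnk : k + 1 ≤ n := by
        have : insert u (G.neighborFinset u) ⊆ Finset.univ := Finset.subset_univ _
        have := Finset.card_le_card this
        rw [Finset.card_insert_of_notMem (SimpleGraph.notMem_neighborFinset_self G u), hdeg u,
          Finset.card_univ, hn] at this
        omega
      omega
    have h2 : ∑ y ∈ (Finset.univ \ insert u (G.neighborFinset u)).erase v,
        (G.neighborFinset u ∩ G.neighborFinset y).card ≤ (k-1) * (k-1) :=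
      le_trans hle (Nat.mul_le_mul_right _ hn1)
    have hq : k * (k-1) = (k-1)*(k-1) + (k-1) := by rw [← Nat.succ_mul]; congr 1; omega
    omega
  have hcardV : Fintype.card V = 2 * k + 2 := hn.trans hneq
  obtain ⟨u, v, huv, hnadj, hc1⟩ := hr1
  set C := G.neighborFinset u ∩ G.neighborFinset v with hCdef
  have hCu : C ⊆ G.neighborFinset u := inter_subset_left
  have hCv : C ⊆ G.neighborFinset v := inter_subset_right
  have hCcard : C.card = k - 1 := hc1
  -- u' : the unique neighbour of u outside C
  have hu'ex : ∃ u', G.neighborFinset u \ C = {u'} := by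
    apply Finset.card_eq_one.mp
    rw [card_sdiff_of_subset hCu, hdeg u, hCcard]; omega
  obtain ⟨u', hu'⟩ := hu'ex
  have hv'ex : ∃ v', G.neighborFinset v \ C = {v'} := by
    apply Finset.card_eq_one.mp
    rw [card_sdiff_of_subset hCv, hdeg v, hCcard]; omega
  obtain ⟨v', hv'⟩ := hv'ex
  have hNu : G.neighborFinset u = insert u' C := by
    rw [← Finset.sdiff_union_of_subset hCu, hu', ← Finset.insert_eq]
  have hNv : G.neighborFinset v = insert v' C := by
    rw [← Finset.sdiff_union_of_subset hCv, hv', ← Finset.insert_eq]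
  -- basic membership facts
  have hu'C : u' ∉ C := by
    have : u' ∈ G.neighborFinset u \ C := by rw [hu']; exact mem_singleton_self u'
    exact (mem_sdiff.mp this).2
  have hv'C : v' ∉ C := by
    have : v' ∈ G.neighborFinset v \ C := by rw [hv']; exact mem_singleton_self v'
    exact (mem_sdiff.mp this).2
  have hu'Nu : u' ∈ G.neighborFinset u := by rw [hNu]; exact mem_insert_self _ _
  have hv'Nv : v' ∈ G.neighborFinset v := by rw [hNv]; exact mem_insert_self _ _
  have hAdjUu' : G.Adj u u' := (mem_neighborFinset G u u').mp hu'Nu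
  have hAdjVv' : G.Adj v v' := (mem_neighborFinset G v v').mp hv'Nv
  have huC : u ∉ C := fun h => G.notMem_neighborFinset_self u (hCu h)
  have hvC : v ∉ C := fun h => G.notMem_neighborFinset_self v (hCv h)
  have hvNu : v ∉ G.neighborFinset u := fun h => hnadj ((mem_neighborFinset G u v).mp h)
  have huNv : u ∉ G.neighborFinset v := fun h =>
    hnadj (((mem_neighborFinset G v u).mp h).symm)
  have huu' : u ≠ u' := fun h => G.irrefl (h ▸ hAdjUu')
  have hvv' : v ≠ v' := fun h => G.irrefl (h ▸ hAdjVv')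
  have hu'v : u' ≠ v := fun h => hvNu (h ▸ hu'Nu)
  have hv'u : v' ≠ u := fun h => huNv (h ▸ hv'Nv)
  have hu'v' : u' ≠ v' := by
    intro h
    apply hu'C
    rw [hCdef]; exact mem_inter.mpr ⟨hu'Nu, h ▸ hv'Nv⟩
  -- the set D of remaining vertices
  set S : Finset V := insert u (insert v (insert u' (insert v' C))) with hSdef
  set D : Finset V := Finset.univ \ S with hDdef
  have hmemD : ∀ w, w ∈ D ↔ (w ≠ u ∧ w ≠ v ∧ w ≠ u' ∧ w ≠ v' ∧ w ∉ C) := by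
    intro w
    simp only [hDdef, hSdef, mem_sdiff, mem_univ, true_and, mem_insert, not_or]
  have hnm1 : u ∉ insert v (insert u' (insert v' C)) := by
    simp only [mem_insert]
    push_neg
    exact ⟨huv, huu', fun h => hv'u h.symm, huC⟩
  have hnm2 : v ∉ insert u' (insert v' C) := by
    simp only [mem_insert]
    push_neg
    exact ⟨fun h => hu'v h.symm, hvv', hvC⟩
  have hnm3 : u' ∉ insert v' C := by
    simp only [mem_insert]
    push_neg
    exact ⟨hu'v', hu'C⟩
  have hScard : S.card = k + 3 := by
    rw [hSdef, card_insert_of_notMem hnm1, card_insert_of_notMem hnm2,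
      card_insert_of_notMem hnm3, card_insert_of_notMem hv'C, hCcard]
    omega
  have hDcard : D.card = k - 1 := by
    rw [hDdef, card_sdiff_of_subset (subset_univ _), Finset.card_univ, hcardV, hScard]
    omega
  have hcompl : ∀ w : V, w = u ∨ w = v ∨ w = u' ∨ w = v' ∨ w ∈ C ∨ w ∈ D := by
    intro w
    by_cases h1 : w = u
    · exact Or.inl h1
    by_cases h2 : w = v
    · exact Or.inr (Or.inl h2)
    by_cases h3 : w = u'
    · exact Or.inr (Or.inr (Or.inl h3))
    by_cases h4 : w = v'
    · exact Or.inr (Or.inr (Or.inr (Or.inl h4)))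
    by_cases h5 : w ∈ C
    · exact Or.inr (Or.inr (Or.inr (Or.inr (Or.inl h5))))
    exact Or.inr (Or.inr (Or.inr (Or.inr (Or.inr ((hmemD w).mpr ⟨h1, h2, h3, h4, h5⟩)))))
  have hDnadjU : ∀ d ∈ D, ¬ G.Adj u d := by
    intro d hd hadj
    have : d ∈ G.neighborFinset u := (mem_neighborFinset G u d).mpr hadj
    rw [hNu, mem_insert] at this
    obtain ⟨_, _, h3, _, h5⟩ := (hmemD d).mp hd
    rcases this with h | h
    · exact h3 h
    · exact h5 h
  have hDnadjV : ∀ d ∈ D, ¬ G.Adj v d := by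
    intro d hd hadj
    have : d ∈ G.neighborFinset v := (mem_neighborFinset G v d).mpr hadj
    rw [hNv, mem_insert] at this
    obtain ⟨_, _, _, h4, h5⟩ := (hmemD d).mp hd
    rcases this with h | h
    · exact h4 h
    · exact h5 h
  have hAdjCu : ∀ z ∈ C, G.Adj z u := fun z hz =>
    ((mem_neighborFinset G u z).mp (hCu hz)).symm
  have hAdjCv : ∀ z ∈ C, G.Adj z v := fun z hz =>
    ((mem_neighborFinset G v z).mp (hCv hz)).symm
  -- no edges inside C, nor from C to u', v'
  have hCC : ∀ z ∈ C, ∀ w ∈ C, ¬ G.Adj z w := by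
    intro z hz w hw hadj
    have hu1 : u ∈ G.neighborFinset z ∩ G.neighborFinset w :=
      mem_inter.mpr ⟨(mem_neighborFinset G z u).mpr (hAdjCu z hz),
        (mem_neighborFinset G w u).mpr (hAdjCu w hw)⟩
    rw [ha z w hadj] at hu1
    exact notMem_empty u hu1
  have hCu' : ∀ z ∈ C, ¬ G.Adj z u' := by
    intro z hz hadj
    have hu1 : u ∈ G.neighborFinset z ∩ G.neighborFinset u' :=
      mem_inter.mpr ⟨(mem_neighborFinset G z u).mpr (hAdjCu z hz),
        (mem_neighborFinset G u' u).mpr hAdjUu'.symm⟩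
    rw [ha z u' hadj] at hu1
    exact notMem_empty u hu1
  have hCv' : ∀ z ∈ C, ¬ G.Adj z v' := by
    intro z hz hadj
    have hv1 : v ∈ G.neighborFinset z ∩ G.neighborFinset v' :=
      mem_inter.mpr ⟨(mem_neighborFinset G z v).mpr (hAdjCv z hz),
        (mem_neighborFinset G v' v).mpr hAdjVv'.symm⟩
    rw [ha z v' hadj] at hv1
    exact notMem_empty v hv1
  -- each z in C has exactly k-2 neighbours in D
  have hNzD : ∀ z ∈ C, (G.neighborFinset z ∩ D).card = k - 2 := by
    intro z hz
    have hzsub : G.neighborFinset z = insert u (insert v (G.neighborFinset z ∩ D)) := by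
      apply Finset.Subset.antisymm
      · intro w hw
        have hadj : G.Adj z w := (mem_neighborFinset G z w).mp hw
        rcases hcompl w with h | h | h | h | h | h
        · subst h; exact mem_insert_self _ _
        · subst h; exact mem_insert_of_mem (mem_insert_self _ _)
        · exact absurd (h ▸ hadj) (hCu' z hz)
        · exact absurd (h ▸ hadj) (hCv' z hz)
        · exact absurd hadj (hCC z hz w h)
        · exact mem_insert_of_mem (mem_insert_of_mem (mem_inter.mpr ⟨hw, h⟩))
      · intro w hw
        rcases mem_insert.mp hw with h | hw2
        · rw [h]; exact (mem_neighborFinset G z u).mpr (hAdjCu z hz)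
        rcases mem_insert.mp hw2 with h | hw3
        · rw [h]; exact (mem_neighborFinset G z v).mpr (hAdjCv z hz)
        · exact (mem_inter.mp hw3).1
    have huD : u ∉ D := fun h => ((hmemD u).mp h).1 rfl
    have hvD : v ∉ D := fun h => ((hmemD v).mp h).2.1 rfl
    have hcard := hdeg z
    rw [hzsub] at hcard
    rw [card_insert_of_notMem (by
          simp only [mem_insert, mem_inter]
          push_neg
          exact ⟨huv, fun _ => huD⟩),
        card_insert_of_notMem (by
          simp only [mem_inter]
          push_neg
          exact fun _ => hvD)] at hcard
    omega
  -- each z in C misses exactly one vertex of D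
  have hmiss : ∀ z ∈ C, ∀ d ∈ D, ∀ e ∈ D, ¬ G.Adj z d → ¬ G.Adj z e → d = e := by
    intro z hz d hd e he hnd hne
    have hcard1 : (D \ G.neighborFinset z).card = 1 := by
      have h1 := Finset.card_sdiff_add_card_inter D (G.neighborFinset z)
      rw [inter_comm] at h1
      rw [hNzD z hz, hDcard] at h1
      omega
    have := Finset.card_le_one.mp (le_of_eq hcard1)
    exact this d (mem_sdiff.mpr ⟨hd, fun h => hnd (((mem_neighborFinset G z d).mp h))⟩)
      e (mem_sdiff.mpr ⟨he, fun h => hne (((mem_neighborFinset G z e).mp h))⟩)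
  -- case split on whether D contains an edge
  by_cases hB : ∃ d ∈ D, ∃ e ∈ D, G.Adj d e
  · -- Case B : D contains an edge
    obtain ⟨d₀, hd₀, d₁, hd₁, hadj01⟩ := hB
    have hzd01 : ∀ z ∈ C, ¬ G.Adj z d₀ ∨ ¬ G.Adj z d₁ := by
      intro z hz
      by_contra hcon2
      push_neg at hcon2
      have hz2 : z ∈ G.neighborFinset d₀ ∩ G.neighborFinset d₁ :=
        mem_inter.mpr ⟨(mem_neighborFinset G d₀ z).mpr hcon2.1.symm,
          (mem_neighborFinset G d₁ z).mpr hcon2.2.symm⟩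
      rw [ha d₀ d₁ hadj01] at hz2
      exact notMem_empty z hz2
    have hecard : 0 < (D \ {d₀, d₁}).card := by
      have h1 := Finset.le_card_sdiff ({d₀, d₁} : Finset V) D
      have h2 : ({d₀, d₁} : Finset V).card ≤ 2 :=
        le_trans (Finset.card_insert_le _ _) (by simp)
      omega
    obtain ⟨e, he⟩ := Finset.card_pos.mp hecard
    have heD : e ∈ D := (mem_sdiff.mp he).1
    have hed : e ≠ d₀ ∧ e ≠ d₁ := by
      have h3 := (mem_sdiff.mp he).2
      simp only [mem_insert, mem_singleton] at h3
      push_neg at h3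
      exact h3
    have hCe : ∀ z ∈ C, G.Adj z e := by
      intro z hz
      by_contra hno
      rcases hzd01 z hz with h | h
      · exact hed.1 (hmiss z hz e heD d₀ hd₀ hno h)
      · exact hed.2 (hmiss z hz e heD d₁ hd₁ hno h)
    have hCsubNe : C ⊆ G.neighborFinset e := fun z hz =>
      (mem_neighborFinset G e z).mpr (hCe z hz).symm
    have heu : e ≠ u := fun h => ((hmemD e).mp heD).1 h
    have hev : e ≠ v := fun h => ((hmemD e).mp heD).2.1 h
    have hnadjeu : ¬ G.Adj e u := fun h => hDnadjU e heD h.symm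
    have hnadjev : ¬ G.Adj e v := fun h => hDnadjV e heD h.symm
    have hInterU : G.neighborFinset e ∩ G.neighborFinset u = C := by
      have hsub : C ⊆ G.neighborFinset e ∩ G.neighborFinset u := fun z hz =>
        mem_inter.mpr ⟨hCsubNe hz, hCu hz⟩
      have hle : (G.neighborFinset e ∩ G.neighborFinset u).card ≤ k - 1 :=
        hbound e u heu hnadjeu
      exact (Finset.eq_of_subset_of_card_le hsub (by rw [hCcard]; exact hle)).symm
    have hInterV : G.neighborFinset e ∩ G.neighborFinset v = C := by
      have hsub : C ⊆ G.neighborFinset e ∩ G.neighborFinset v := fun z hz =>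
        mem_inter.mpr ⟨hCsubNe hz, hCv hz⟩
      have hle : (G.neighborFinset e ∩ G.neighborFinset v).card ≤ k - 1 :=
        hbound e v hev hnadjev
      exact (Finset.eq_of_subset_of_card_le hsub (by rw [hCcard]; exact hle)).symm
    have hu'Ne : u' ∉ G.neighborFinset e := by
      intro h
      have h2 : u' ∈ G.neighborFinset e ∩ G.neighborFinset u := mem_inter.mpr ⟨h, hu'Nu⟩
      rw [hInterU] at h2
      exact hu'C h2
    have hv'Ne : v' ∉ G.neighborFinset e := by
      intro h
      have h2 : v' ∈ G.neighborFinset e ∩ G.neighborFinset v := mem_inter.mpr ⟨h, hv'Nv⟩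
      rw [hInterV] at h2
      exact hv'C h2
    have hNeEq : G.neighborFinset e = C ∪ (G.neighborFinset e ∩ D) := by
      apply Finset.Subset.antisymm
      · intro w hw
        have hadj : G.Adj e w := (mem_neighborFinset G e w).mp hw
        rcases hcompl w with h | h | h | h | h | h
        · rw [h] at hadj; exact absurd hadj hnadjeu
        · rw [h] at hadj; exact absurd hadj hnadjev
        · rw [h] at hw; exact absurd hw hu'Ne
        · rw [h] at hw; exact absurd hw hv'Ne
        · exact Finset.mem_union_left _ h
        · exact Finset.mem_union_right _ (mem_inter.mpr ⟨hw, h⟩)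
      · exact Finset.union_subset hCsubNe inter_subset_left
    have hNeD : (G.neighborFinset e ∩ D).card = 1 := by
      have hdisj : Disjoint C (G.neighborFinset e ∩ D) := by
        rw [Finset.disjoint_left]
        intro a haC haI
        exact ((hmemD a).mp (mem_inter.mp haI).2).2.2.2.2 haC
      have hcard := hdeg e
      rw [hNeEq, Finset.card_union_of_disjoint hdisj, hCcard] at hcard
      omega
    obtain ⟨f, hf⟩ := Finset.card_eq_one.mp hNeD
    have hfmem : f ∈ G.neighborFinset e ∩ D := by
      rw [hf]; exact mem_singleton_self f
    have hfD : f ∈ D := (mem_inter.mp hfmem).2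
    have hadjef : G.Adj e f := (mem_neighborFinset G e f).mp (mem_inter.mp hfmem).1
    have hCf : ∀ z ∈ C, ¬ G.Adj z f := by
      intro z hz hadj
      have h2 : z ∈ G.neighborFinset e ∩ G.neighborFinset f :=
        mem_inter.mpr ⟨hCsubNe hz, (mem_neighborFinset G f z).mpr hadj.symm⟩
      rw [ha e f hadjef] at h2
      exact notMem_empty z h2
    have hCne : C.Nonempty := Finset.card_pos.mp (by rw [hCcard]; omega)
    obtain ⟨z₀, hz₀⟩ := hCne
    have hf01 : f = d₀ ∨ f = d₁ := by
      rcases hzd01 z₀ hz₀ with h | h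
      · exact Or.inl (hmiss z₀ hz₀ f hfD d₀ hd₀ (hCf z₀ hz₀) h)
      · exact Or.inr (hmiss z₀ hz₀ f hfD d₁ hd₁ (hCf z₀ hz₀) h)
    have key : ∀ g, g ∈ D → G.Adj f g → g ≠ e → False := by
      intro g hgD hadjfg hge
      have hCg : ∀ z ∈ C, G.Adj z g := by
        intro z hz
        by_contra hno
        exact G.ne_of_adj hadjfg (hmiss z hz f hfD g hgD (hCf z hz) hno)
      have hfC : f ∉ C := ((hmemD f).mp hfD).2.2.2.2
      have hicard : (insert f C).card = k := by
        rw [card_insert_of_notMem hfC, hCcard]; omega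
      have hNg : G.neighborFinset g = insert f C := by
        have hsub : insert f C ⊆ G.neighborFinset g := by
          intro w hw
          rcases mem_insert.mp hw with h | h
          · rw [h]; exact (mem_neighborFinset G g f).mpr hadjfg.symm
          · exact (mem_neighborFinset G g w).mpr (hCg w h).symm
        exact (Finset.eq_of_subset_of_card_le hsub ((hdeg g).trans hicard.symm).le).symm
      have hNe2 : G.neighborFinset e = insert f C := by
        rw [hNeEq, hf, Finset.union_comm, ← Finset.insert_eq]
      have hnadjeg : ¬ G.Adj e g := by
        intro h
        have h2 : g ∈ G.neighborFinset e ∩ D :=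
          mem_inter.mpr ⟨(mem_neighborFinset G e g).mpr h, hgD⟩
        rw [hf] at h2
        exact (G.ne_of_adj hadjfg) (mem_singleton.mp h2).symm
      have hcardEq : (G.neighborFinset e ∩ G.neighborFinset g).card = k := by
        rw [hNe2, hNg, Finset.inter_self, hicard]
      rcases hna e g (Ne.symm hge) hnadjeg with h | h | h <;> omega
    rcases hf01 with h | h
    · exact key d₁ hd₁ (by rw [h]; exact hadj01) (Ne.symm hed.2)
    · exact key d₀ hd₀ (by rw [h]; exact hadj01.symm) (Ne.symm hed.1)
  · -- Case A : D is independent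
    push_neg at hB
    have hNdsub : ∀ d ∈ D,
        G.neighborFinset d ⊆ insert u' (insert v' (G.neighborFinset d ∩ C)) := by
      intro d hd w hw
      have hadj : G.Adj d w := (mem_neighborFinset G d w).mp hw
      rcases hcompl w with h | h | h | h | h | h
      · rw [h] at hadj; exact absurd hadj.symm (hDnadjU d hd)
      · rw [h] at hadj; exact absurd hadj.symm (hDnadjV d hd)
      · rw [h]; exact mem_insert_self _ _
      · rw [h]; exact mem_insert_of_mem (mem_insert_self _ _)
      · exact mem_insert_of_mem (mem_insert_of_mem (mem_inter.mpr ⟨hw, h⟩))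
      · exact absurd hadj (hB d hd w h)
    have hNdCge : ∀ d ∈ D, k - 2 ≤ (G.neighborFinset d ∩ C).card := by
      intro d hd
      have h1 := Finset.card_le_card (hNdsub d hd)
      have h2 := Finset.card_insert_le u' (insert v' (G.neighborFinset d ∩ C))
      have h3 := Finset.card_insert_le v' (G.neighborFinset d ∩ C)
      rw [hdeg d] at h1
      omega
    -- double counting of C–D edges
    have hcf : ∀ (z : V) (t : Finset V), (G.neighborFinset z ∩ t).card
        = ∑ d ∈ t, if G.Adj z d then 1 else 0 := by
      intro z t
      rw [inter_comm, ← Finset.filter_mem_eq_inter, Finset.card_filter]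
      refine Finset.sum_congr rfl fun d _ => ?_
      simp [SimpleGraph.mem_neighborFinset]
    have hdc : ∑ z ∈ C, (G.neighborFinset z ∩ D).card
        = ∑ d ∈ D, (G.neighborFinset d ∩ C).card := by
      calc ∑ z ∈ C, (G.neighborFinset z ∩ D).card
          = ∑ z ∈ C, ∑ d ∈ D, if G.Adj z d then 1 else 0 :=
            Finset.sum_congr rfl fun z _ => hcf z D
        _ = ∑ d ∈ D, ∑ z ∈ C, if G.Adj z d then 1 else 0 := Finset.sum_comm
        _ = ∑ d ∈ D, ∑ z ∈ C, if G.Adj d z then 1 else 0 := by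
            refine Finset.sum_congr rfl fun d _ => Finset.sum_congr rfl fun z _ => ?_
            simp [SimpleGraph.adj_comm]
        _ = ∑ d ∈ D, (G.neighborFinset d ∩ C).card :=
            Finset.sum_congr rfl fun d _ => (hcf d C).symm
    have hsumC : ∑ z ∈ C, (G.neighborFinset z ∩ D).card = (k-1) * (k-2) := by
      calc ∑ z ∈ C, (G.neighborFinset z ∩ D).card
          = ∑ _z ∈ C, (k-2) := Finset.sum_congr rfl hNzD
        _ = (k-1) * (k-2) := by rw [Finset.sum_const, hCcard, smul_eq_mul]
    have hsumD : ∑ d ∈ D, (G.neighborFinset d ∩ C).card = (k-1) * (k-2) := by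
      rw [← hdc, hsumC]
    have hNdCeq : ∀ d ∈ D, (G.neighborFinset d ∩ C).card = k - 2 := by
      intro d hd
      have hsplit : (G.neighborFinset d ∩ C).card
          + ∑ x ∈ D.erase d, (G.neighborFinset x ∩ C).card = (k-1)*(k-2) := by
        rw [← hsumD]
        exact Finset.add_sum_erase D (fun x => (G.neighborFinset x ∩ C).card) hd
      have hge : (D.erase d).card * (k-2)
          ≤ ∑ x ∈ D.erase d, (G.neighborFinset x ∩ C).card := by
        have h4 := Finset.card_nsmul_le_sum (D.erase d)
          (fun x => (G.neighborFinset x ∩ C).card) (k-2)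
          (fun x hx => hNdCge x (Finset.mem_of_mem_erase hx))
        simpa using h4
      have hce : (D.erase d).card = k - 1 - 1 := by
        rw [Finset.card_erase_of_mem hd, hDcard]
      rw [hce] at hge
      have harith : (k-1)*(k-2) = (k-2)*(k-2) + (k-2) := by
        rw [← Nat.succ_mul]; congr 1; omega
      have h5 := hNdCge d hd
      have h6 : k - 1 - 1 = k - 2 := by omega
      rw [h6] at hge
      omega
    have hdu' : ∀ d ∈ D, G.Adj d u' := by
      intro d hd
      by_contra hno
      have hsub2 : G.neighborFinset d ⊆ insert v' (G.neighborFinset d ∩ C) := by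
        intro w hw
        have h7 := hNdsub d hd hw
        rcases mem_insert.mp h7 with h | h
        · rw [h] at hw
          exact absurd ((mem_neighborFinset G d u').mp hw) hno
        · exact h
      have h1 := Finset.card_le_card hsub2
      have h2 := Finset.card_insert_le v' (G.neighborFinset d ∩ C)
      rw [hdeg d] at h1
      have h3 := hNdCeq d hd
      omega
    have hdv' : ∀ d ∈ D, G.Adj d v' := by
      intro d hd
      by_contra hno
      have hsub2 : G.neighborFinset d ⊆ insert u' (G.neighborFinset d ∩ C) := by
        intro w hw
        have h7 := hNdsub d hd hw
        rcases mem_insert.mp h7 with h | h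
        · rw [h]; exact mem_insert_self _ _
        rcases mem_insert.mp h with h | h
        · rw [h] at hw
          exact absurd ((mem_neighborFinset G d v').mp hw) hno
        · exact mem_insert_of_mem h
      have h1 := Finset.card_le_card hsub2
      have h2 := Finset.card_insert_le u' (G.neighborFinset d ∩ C)
      rw [hdeg d] at h1
      have h3 := hNdCeq d hd
      omega
    have huD : u ∉ D := fun h => ((hmemD u).mp h).1 rfl
    have hNu' : G.neighborFinset u' = insert u D := by
      have hsub : insert u D ⊆ G.neighborFinset u' := by
        intro w hw
        rcases mem_insert.mp hw with h | h
        · rw [h]; exact (mem_neighborFinset G u' u).mpr hAdjUu'.symm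
        · exact (mem_neighborFinset G u' w).mpr (hdu' w h).symm
      have hcard : (insert u D).card = k := by
        rw [card_insert_of_notMem huD, hDcard]; omega
      exact (Finset.eq_of_subset_of_card_le hsub ((hdeg u').trans hcard.symm).le).symm
    have hnadj2 : ¬ G.Adj u' v := by
      intro h
      have h2 : v ∈ G.neighborFinset u' := (mem_neighborFinset G u' v).mpr h
      rw [hNu', mem_insert] at h2
      rcases h2 with h1 | h1
      · exact huv h1.symm
      · exact ((hmemD v).mp h1).2.1 rfl
    have hempty : G.neighborFinset u' ∩ G.neighborFinset v = ∅ := by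
      rw [hNu', hNv]
      apply Finset.eq_empty_of_forall_notMem
      intro w hw
      obtain ⟨hw1, hw2⟩ := mem_inter.mp hw
      rcases mem_insert.mp hw1 with h1 | h1
      · rcases mem_insert.mp hw2 with h2 | h2
        · exact hv'u (h2.symm.trans h1)
        · rw [h1] at h2; exact huC h2
      · rcases mem_insert.mp hw2 with h2 | h2
        · exact ((hmemD w).mp h1).2.2.2.1 h2
        · exact ((hmemD w).mp h1).2.2.2.2 h2
    have hfin := hna u' v hu'v hnadj2
    rw [hempty, Finset.card_empty] at hfin
    omega
end

section
/- Let G be a k-regular graph of order n, k ≥ 4, such that adjacent vertices have no common neighbour and every pair of non-adjacent vertices has exactly k−1, k−2, or k−3 common neighbours (each value attained). If n = 2k + 3, then k = 4 (and hence n = 11). -/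
theorem stmt_8 {V : Type*} [Fintype V] [DecidableEq V] (G : SimpleGraph V) [DecidableRel G.Adj]
    (n k : ℕ) (hk : 4 ≤ k) (hn : Fintype.card V = n)
    (hreg : G.IsRegularOfDegree k)
    (ha : ∀ x y : V, G.Adj x y → G.neighborFinset x ∩ G.neighborFinset y = ∅)
    (hna : ∀ x y : V, x ≠ y → ¬ G.Adj x y →
      (G.neighborFinset x ∩ G.neighborFinset y).card = k - 1 ∨
      (G.neighborFinset x ∩ G.neighborFinset y).card = k - 2 ∨
      (G.neighborFinset x ∩ G.neighborFinset y).card = k - 3)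
    (hr1 : ∃ x y : V, x ≠ y ∧ ¬ G.Adj x y ∧
      (G.neighborFinset x ∩ G.neighborFinset y).card = k - 1)
    (hr2 : ∃ x y : V, x ≠ y ∧ ¬ G.Adj x y ∧
      (G.neighborFinset x ∩ G.neighborFinset y).card = k - 2)
    (hr3 : ∃ x y : V, x ≠ y ∧ ¬ G.Adj x y ∧
      (G.neighborFinset x ∩ G.neighborFinset y).card = k - 3)
    (hn23 : n = 2 * k + 3) :
    k = 4 ∧ n = 11 := by
  obtain ⟨x, y, hxy, hnadj, hcard⟩ := hr1
  have hNx : (G.neighborFinset x).card = k := by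
    simpa using hreg x
  have hNy : (G.neighborFinset y).card = k := by
    simpa using hreg y
  have hinter : (G.neighborFinset x ∩ G.neighborFinset y).card +
      (G.neighborFinset x \ G.neighborFinset y).card = (G.neighborFinset x).card :=
    Finset.card_inter_add_card_sdiff _ _
  have hdiffpos : 0 < (G.neighborFinset x \ G.neighborFinset y).card := by omega
  obtain ⟨x₁, hx₁⟩ := Finset.card_pos.mp hdiffpos
  rw [Finset.mem_sdiff] at hx₁
  obtain ⟨hx₁Nx, hx₁nNy⟩ := hx₁
  have hadj : G.Adj x x₁ := (SimpleGraph.mem_neighborFinset _ _ _).mp hx₁Nx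
  have hx₁y : x₁ ≠ y := by
    rintro rfl; exact hnadj hadj
  have hnadj2 : ¬ G.Adj x₁ y := by
    intro h
    exact hx₁nNy ((SimpleGraph.mem_neighborFinset _ _ _).mpr h.symm)
  -- common neighbours of x₁ and y avoid N(x)
  have hsub : G.neighborFinset x₁ ∩ G.neighborFinset y ⊆
      G.neighborFinset y \ G.neighborFinset x := by
    intro z hz
    rw [Finset.mem_inter] at hz
    rw [Finset.mem_sdiff]
    refine ⟨hz.2, fun hzx => ?_⟩
    have : z ∈ G.neighborFinset x ∩ G.neighborFinset x₁ := Finset.mem_inter.mpr ⟨hzx, hz.1⟩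
    rw [ha x x₁ hadj] at this
    exact absurd this (Finset.notMem_empty z)
  have hinter2 : (G.neighborFinset y ∩ G.neighborFinset x).card +
      (G.neighborFinset y \ G.neighborFinset x).card = (G.neighborFinset y).card :=
    Finset.card_inter_add_card_sdiff _ _
  have hcomm : (G.neighborFinset y ∩ G.neighborFinset x).card = k - 1 := by
    rw [Finset.inter_comm]; exact hcard
  have hle : (G.neighborFinset x₁ ∩ G.neighborFinset y).card ≤
      (G.neighborFinset y \ G.neighborFinset x).card := Finset.card_le_card hsub
  have hμ := hna x₁ y hx₁y hnadj2
  have hk4 : k = 4 := by omega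
  exact ⟨hk4, by omega⟩
end

section
/- Let G be a k-regular graph of order n, k ≥ 4, in which adjacent vertices have no common neighbour and non-adjacent vertices have at most k−1 common neighbours. If n = 2k (that is, for some vertex u there are exactly k−1 vertices outside N[u]), then a contradiction arises; hence n ≥ 2k + 1. -/
theorem stmt_10 {V : Type*} [Fintype V] [DecidableEq V] (G : SimpleGraph V) [DecidableRel G.Adj]
    (n k : ℕ) (hk : 4 ≤ k) (hn : Fintype.card V = n)
    (hreg : G.IsRegularOfDegree k)
    (ha : ∀ x y : V, G.Adj x y → G.neighborFinset x ∩ G.neighborFinset y = ∅)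
    (hna : ∀ x y : V, x ≠ y → ¬ G.Adj x y →
      (G.neighborFinset x ∩ G.neighborFinset y).card ≤ k - 1) :
    n ≠ 2 * k := by
  intro hcard
  subst hn
  have hV : 0 < Fintype.card V := by omega
  obtain ⟨u⟩ := Fintype.card_pos_iff.mp hV
  set S := G.neighborFinset u with hS
  have hScard : S.card = k := hreg u
  set T := Finset.univ \ insert u S with hT
  have huS : u ∉ S := by simp [hS]
  have hTcard : T.card = k - 1 := by
    rw [hT, Finset.card_sdiff_of_subset (Finset.subset_univ _),
      Finset.card_insert_of_notMem huS, hScard, Finset.card_univ]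
    omega
  have h1 : ∀ v ∈ S, (T.filter (G.Adj v)).card = k - 1 := by
    intro v hv
    have hadj : G.Adj u v := by rwa [hS, SimpleGraph.mem_neighborFinset] at hv
    have hNv : T.filter (G.Adj v) = G.neighborFinset v \ {u} := by
      ext w
      simp only [Finset.mem_filter, hT, Finset.mem_sdiff, Finset.mem_univ, true_and,
        Finset.mem_insert, Finset.mem_singleton, SimpleGraph.mem_neighborFinset]
      constructor
      · rintro ⟨h, hw⟩; exact ⟨hw, fun h' => h (Or.inl h')⟩
      · rintro ⟨hw, hne⟩
        refine ⟨?_, hw⟩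
        rintro (rfl | hwS)
        · exact hne rfl
        · have hmem : w ∈ G.neighborFinset u ∩ G.neighborFinset v := by
            rw [Finset.mem_inter, SimpleGraph.mem_neighborFinset G v w]
            exact ⟨hwS, hw⟩
          rw [ha u v hadj] at hmem
          exact absurd hmem (Finset.notMem_empty w)
    rw [hNv, Finset.card_sdiff_of_subset (by simp [hadj.symm])]
    have := hreg v
    rw [SimpleGraph.degree] at this
    rw [this]; simp
  have key : ∑ v ∈ S, (T.filter (G.Adj v)).card
      = ∑ w ∈ T, (S.filter (fun v => G.Adj v w)).card := by
    simp_rw [Finset.card_filter]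
    exact Finset.sum_comm
  have hLHS : ∑ v ∈ S, (T.filter (G.Adj v)).card = k * (k - 1) := by
    rw [Finset.sum_congr rfl h1, Finset.sum_const, hScard, smul_eq_mul]
  have hRHS : ∑ w ∈ T, (S.filter (fun v => G.Adj v w)).card ≤ (k - 1) * (k - 1) := by
    calc ∑ w ∈ T, (S.filter (fun v => G.Adj v w)).card
        ≤ ∑ _w ∈ T, (k - 1) := by
          apply Finset.sum_le_sum
          intro w hw
          have hwT : w ∉ insert u S := by
            rw [hT, Finset.mem_sdiff] at hw; exact hw.2
          have hwu : w ≠ u := fun h => hwT (by simp [h])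
          have hwS : ¬ G.Adj u w := fun h => hwT (by
            simp only [Finset.mem_insert]
            exact Or.inr (by rwa [hS, SimpleGraph.mem_neighborFinset]))
          have heq : S.filter (fun v => G.Adj v w)
              = G.neighborFinset u ∩ G.neighborFinset w := by
            ext v
            simp only [hS, Finset.mem_filter, Finset.mem_inter, SimpleGraph.mem_neighborFinset]
            rw [G.adj_comm v w]
          rw [heq]
          exact hna u w (Ne.symm hwu) hwS
      _ = (k - 1) * (k - 1) := by rw [Finset.sum_const, hTcard, smul_eq_mul]
  have : k * (k - 1) ≤ (k - 1) * (k - 1) := by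
    rw [← hLHS, key]; exact hRHS
  nlinarith [Nat.sub_add_cancel (by omega : 1 ≤ k)]
end

section
/- Let G be a k-regular graph of order n = 2k + 1, k ≥ 4, in which adjacent vertices have no common neighbour and every pair of non-adjacent vertices has at least k−3 > 0 and at most k−1 common neighbours. Then a contradiction arises; hence such a graph has n ≥ 2k + 2. -/
theorem stmt_11 {V : Type*} [Fintype V] [DecidableEq V] (G : SimpleGraph V) [DecidableRel G.Adj]
    (k : ℕ) (hk : 4 ≤ k) (hn : Fintype.card V = 2 * k + 1)
    (hreg : G.IsRegularOfDegree k)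
    (ha : ∀ x y : V, G.Adj x y → G.neighborFinset x ∩ G.neighborFinset y = ∅)
    (hna : ∀ x y : V, x ≠ y → ¬ G.Adj x y →
      k - 3 ≤ (G.neighborFinset x ∩ G.neighborFinset y).card ∧
      (G.neighborFinset x ∩ G.neighborFinset y).card ≤ k - 1) :
    False := by
  classical
  have hV : Nonempty V := by
    rw [← Fintype.card_pos_iff, hn]; omega
  obtain ⟨u⟩ := hV
  set A : Finset V := G.neighborFinset u with hA
  have hAcard : A.card = k := by
    simpa [hA] using hreg u
  have huA : u ∉ A := by simp [hA]
  set M : Finset V := Finset.univ \ insert u A with hM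
  have hMcard : M.card = k := by
    rw [hM, Finset.card_sdiff_of_subset (Finset.subset_univ _), Finset.card_insert_of_notMem huA,
      Finset.card_univ, hn, hAcard]
    omega
  have hcard : ∀ v : V, (G.neighborFinset v).card = k := fun v => by
    simpa using hreg v
  -- membership facts for M
  have hMmem : ∀ w ∈ M, w ≠ u ∧ w ∉ A := by
    intro w hw
    rw [hM, Finset.mem_sdiff, Finset.mem_insert] at hw
    tauto
  have hMnadj : ∀ w ∈ M, ¬ G.Adj u w := by
    intro w hw hadj
    exact (hMmem w hw).2 (by simp [hA, hadj])
  -- each v ∈ A has exactly k-1 neighbours in M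
  have hvM : ∀ v ∈ A, (G.neighborFinset v ∩ M).card = k - 1 := by
    intro v hv
    have hadj : G.Adj u v := by simpa [hA] using hv
    have hdisj : A ∩ G.neighborFinset v = ∅ := ha u v hadj
    have heq : G.neighborFinset v ∩ M = (G.neighborFinset v).erase u := by
      ext x
      simp only [hM, Finset.mem_inter, Finset.mem_sdiff, Finset.mem_univ, true_and,
        Finset.mem_insert, Finset.mem_erase, not_or]
      constructor
      · rintro ⟨hx, hxu, _⟩; exact ⟨hxu, hx⟩
      · rintro ⟨hxu, hx⟩
        refine ⟨hx, hxu, fun hxA => ?_⟩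
        have : x ∈ A ∩ G.neighborFinset v := Finset.mem_inter.mpr ⟨hxA, hx⟩
        simp [hdisj] at this
    rw [heq, Finset.card_erase_of_mem (by simp [hadj.symm]), hcard]
  -- double counting
  have hdouble : ∑ v ∈ A, (G.neighborFinset v ∩ M).card
      = ∑ w ∈ M, (G.neighborFinset w ∩ A).card := by
    have h1 : ∀ (s : Finset V) (v : V), G.neighborFinset v ∩ s
        = s.filter (fun w => G.Adj v w) := by
      intro s v; ext w; simp [and_comm]
    simp only [h1, Finset.card_filter]
    rw [Finset.sum_comm]
    apply Finset.sum_congr rfl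
    intro w _
    apply Finset.sum_congr rfl
    intro v _
    simp [G.adj_comm]
  have hsumA : ∑ v ∈ A, (G.neighborFinset v ∩ M).card = k * (k - 1) := by
    rw [Finset.sum_congr rfl hvM, Finset.sum_const, hAcard, smul_eq_mul]
  -- each w ∈ M has exactly k-1 neighbours in A
  have hwAle : ∀ w ∈ M, (G.neighborFinset w ∩ A).card ≤ k - 1 := by
    intro w hw
    have h := (hna u w (Ne.symm (hMmem w hw).1) (hMnadj w hw)).2
    rwa [hA, Finset.inter_comm]
  have hwA : ∀ w ∈ M, (G.neighborFinset w ∩ A).card = k - 1 := by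
    have hsum : ∑ w ∈ M, (G.neighborFinset w ∩ A).card = ∑ w ∈ M, (k - 1) := by
      rw [← hdouble, hsumA, Finset.sum_const, hMcard, smul_eq_mul]
    exact fun w hw => (Finset.sum_eq_sum_iff_of_le hwAle).mp hsum w hw
  -- hence each w ∈ M has exactly one neighbour in M
  have hwM : ∀ w ∈ M, (G.neighborFinset w ∩ M).card = 1 := by
    intro w hw
    have hsplit : G.neighborFinset w = (G.neighborFinset w ∩ A) ∪ (G.neighborFinset w ∩ M) := by
      ext x
      simp only [Finset.mem_union, Finset.mem_inter, hM, Finset.mem_sdiff, Finset.mem_univ,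
        true_and, Finset.mem_insert, not_or]
      constructor
      · intro hx
        by_cases hxA : x ∈ A
        · exact Or.inl ⟨hx, hxA⟩
        · refine Or.inr ⟨hx, fun hxu => ?_, hxA⟩
          have hwx : G.Adj w x := by simpa using hx
          rw [hxu] at hwx
          exact hMnadj w hw hwx.symm
      · tauto
    have hdisj : Disjoint (G.neighborFinset w ∩ A) (G.neighborFinset w ∩ M) := by
      apply Finset.disjoint_left.mpr
      intro x hx1 hx2
      have := (Finset.mem_inter.mp hx2).2
      rw [hM, Finset.mem_sdiff] at this
      exact this.2 (Finset.mem_insert_of_mem (Finset.mem_inter.mp hx1).2)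
    have := hcard w
    rw [hsplit, Finset.card_union_of_disjoint hdisj, hwA w hw] at this
    omega
  -- pick a matched pair in M
  have hMne : M.Nonempty := by rw [← Finset.card_pos, hMcard]; omega
  obtain ⟨w0, hw0⟩ := hMne
  obtain ⟨w1, hw1⟩ := Finset.card_eq_one.mp (hwM w0 hw0)
  have hw1mem : w1 ∈ G.neighborFinset w0 ∩ M := by rw [hw1]; exact Finset.mem_singleton_self _
  have hadj01 : G.Adj w0 w1 := by simpa using (Finset.mem_inter.mp hw1mem).1
  have hw1M : w1 ∈ M := (Finset.mem_inter.mp hw1mem).2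
  -- common neighbour of w0 and w1 inside A
  have hempty := ha w0 w1 hadj01
  have hsub : (G.neighborFinset w0 ∩ A) ∪ (G.neighborFinset w1 ∩ A) ⊆ A :=
    Finset.union_subset (Finset.inter_subset_right) (Finset.inter_subset_right)
  have hunle : ((G.neighborFinset w0 ∩ A) ∪ (G.neighborFinset w1 ∩ A)).card ≤ k := by
    rw [← hAcard]; exact Finset.card_le_card hsub
  have hkey := Finset.card_inter_add_card_union (G.neighborFinset w0 ∩ A)
    (G.neighborFinset w1 ∩ A)
  rw [hwA w0 hw0, hwA w1 hw1M] at hkey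
  have hpos : 0 < ((G.neighborFinset w0 ∩ A) ∩ (G.neighborFinset w1 ∩ A)).card := by omega
  obtain ⟨x, hx⟩ := Finset.card_pos.mp hpos
  have hx0 : x ∈ G.neighborFinset w0 := (Finset.mem_inter.mp (Finset.mem_inter.mp hx).1).1
  have hx1 : x ∈ G.neighborFinset w1 := (Finset.mem_inter.mp (Finset.mem_inter.mp hx).2).1
  have : x ∈ G.neighborFinset w0 ∩ G.neighborFinset w1 := Finset.mem_inter.mpr ⟨hx0, hx1⟩
  simp [hempty] at this
end

section
/- Every SQSR(12, 4, 0; 3, 2, 1) graph is isomorphic to a single graph G₂; that is, up to isomorphism there is a unique 4-regular graph on 12 vertices in which adjacent vertices have no common neighbour and non-adjacent vertices have exactly 1, 2, or 3 common neighbours with each value realized. -/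
/-- Edge list of the graph `G₂`: vertices `0=x, 1=y, 2=x₁, 3=y₁, 4=z₁, 5=z₂, 6=z₃,
`7=a₁, 8=a₂, 9=a₃, 10=a₄, 11=a₅`. -/
def g2Edges : List (Fin 12 × Fin 12) :=
  [(0, 2), (0, 4), (0, 5), (0, 6),
   (1, 3), (1, 4), (1, 5), (1, 6),
   (2, 3), (2, 7), (2, 8),
   (3, 10), (3, 11),
   (4, 7), (4, 9),
   (5, 8), (5, 10),
   (6, 9), (6, 11),
   (7, 10), (7, 11),
   (8, 11), (8, 9),
   (9, 10)]

/-- The unique `SQSR(12, 4, 0; 3, 2, 1)` graph `G₂` from the paper. -/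
def G2 : SimpleGraph (Fin 12) := SimpleGraph.fromRel (fun a b => (a, b) ∈ g2Edges)

instance : DecidableRel G2.Adj := fun a b =>
  decidable_of_iff _ (SimpleGraph.fromRel_adj (fun a b => (a, b) ∈ g2Edges) a b).symm

open Finset SimpleGraph
lemma orsw34 {P Q R T : Prop} : (P ∨ Q ∨ R ∨ T) ↔ (P ∨ Q ∨ T ∨ R) := by tauto
lemma orrot5 {P Q R T U : Prop} : (U ∨ P ∨ Q ∨ R ∨ T) ↔ (P ∨ Q ∨ R ∨ T ∨ U) := by tauto
lemma orsw12of5 {P Q R T U : Prop} : (P ∨ Q ∨ R ∨ T ∨ U) ↔ (Q ∨ P ∨ R ∨ T ∨ U) := by tauto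
lemma orsw34of5 {P Q R T U : Prop} : (P ∨ Q ∨ R ∨ T ∨ U) ↔ (P ∨ Q ∨ T ∨ R ∨ U) := by tauto

section
variable {V : Type*} [Fintype V] [DecidableEq V] (G : SimpleGraph V) [DecidableRel G.Adj]

lemma nbhd_eq (v : V) (hdeg : (G.neighborFinset v).card = 4) (u1 u2 u3 u4 : V)
    (h1 : G.Adj v u1) (h2 : G.Adj v u2) (h3 : G.Adj v u3) (h4 : G.Adj v u4)
    (d12 : u1 ≠ u2) (d13 : u1 ≠ u3) (d14 : u1 ≠ u4) (d23 : u2 ≠ u3) (d24 : u2 ≠ u4)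
    (d34 : u3 ≠ u4) : ∀ u, G.Adj v u ↔ (u = u1 ∨ u = u2 ∨ u = u3 ∨ u = u4) := by
  have hsub : ({u1, u2, u3, u4} : Finset V) ⊆ G.neighborFinset v := by
    intro u hu
    simp only [mem_insert, mem_singleton] at hu
    rcases hu with h | h | h | h <;> subst h <;> simpa [mem_neighborFinset]
  have hcard : ({u1, u2, u3, u4} : Finset V).card = 4 := by
    rw [card_insert_of_notMem (by simp [d12, d13, d14]),
      card_insert_of_notMem (by simp [d23, d24]),
      card_insert_of_notMem (by simp [d34]), card_singleton]
  have heq := Finset.eq_of_subset_of_card_le hsub (by omega)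
  intro u
  rw [← mem_neighborFinset, ← heq]
  simp

lemma rest_two (v : V) (hdeg : (G.neighborFinset v).card = 4) (u1 u2 : V)
    (h1 : G.Adj v u1) (h2 : G.Adj v u2) (d12 : u1 ≠ u2) :
    ∃ b c : V, G.Adj v b ∧ G.Adj v c ∧ b ≠ c ∧ b ≠ u1 ∧ b ≠ u2 ∧ c ≠ u1 ∧ c ≠ u2 ∧
      ∀ u, G.Adj v u ↔ (u = u1 ∨ u = u2 ∨ u = b ∨ u = c) := by
  have hm1 : u1 ∈ G.neighborFinset v := by simpa [mem_neighborFinset]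
  have hm2 : u2 ∈ (G.neighborFinset v).erase u1 := by
    simp [mem_neighborFinset, d12.symm, h2]
  have hc : (((G.neighborFinset v).erase u1).erase u2).card = 2 := by
    rw [card_erase_of_mem hm2, card_erase_of_mem hm1, hdeg]
  obtain ⟨b, c, hbc, habc⟩ := Finset.card_eq_two.mp hc
  have hb : b ∈ ((G.neighborFinset v).erase u1).erase u2 := by rw [habc]; simp
  have hcm : c ∈ ((G.neighborFinset v).erase u1).erase u2 := by rw [habc]; simp
  simp only [mem_erase, mem_neighborFinset] at hb hcm
  refine ⟨b, c, hb.2.2, hcm.2.2, hbc, hb.2.1, hb.1, hcm.2.1, hcm.1, ?_⟩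
  exact nbhd_eq G v hdeg u1 u2 b c h1 h2 hb.2.2 hcm.2.2 d12 (Ne.symm hb.2.1)
    (Ne.symm hcm.2.1) (Ne.symm hb.1) (Ne.symm hcm.1) hbc

lemma rest_three (v : V) (hdeg : (G.neighborFinset v).card = 4) (u1 : V)
    (h1 : G.Adj v u1) :
    ∃ b c d : V, G.Adj v b ∧ G.Adj v c ∧ G.Adj v d ∧ b ≠ c ∧ b ≠ d ∧ c ≠ d ∧
      b ≠ u1 ∧ c ≠ u1 ∧ d ≠ u1 ∧
      ∀ u, G.Adj v u ↔ (u = u1 ∨ u = b ∨ u = c ∨ u = d) := by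
  have hm1 : u1 ∈ G.neighborFinset v := by simpa [mem_neighborFinset]
  have hc : ((G.neighborFinset v).erase u1).card = 3 := by
    rw [card_erase_of_mem hm1, hdeg]
  obtain ⟨b, c, d, hbc, hbd, hcd, habc⟩ := Finset.card_eq_three.mp hc
  have hb : b ∈ (G.neighborFinset v).erase u1 := by rw [habc]; simp
  have hcm : c ∈ (G.neighborFinset v).erase u1 := by rw [habc]; simp
  have hd : d ∈ (G.neighborFinset v).erase u1 := by rw [habc]; simp
  simp only [mem_erase, mem_neighborFinset] at hb hcm hd
  refine ⟨b, c, d, hb.2, hcm.2, hd.2, hbc, hbd, hcd, hb.1, hcm.1, hd.1, ?_⟩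
  exact nbhd_eq G v hdeg u1 b c d h1 hb.2 hcm.2 hd.2 (Ne.symm hb.1) (Ne.symm hcm.1)
    (Ne.symm hd.1) hbc hbd hcd
variable {V : Type*} [Fintype V] [DecidableEq V] (G : SimpleGraph V) [DecidableRel G.Adj]

lemma fourth (v : V) (hdeg : (G.neighborFinset v).card = 4) (u1 u2 u3 : V)
    (h1 : G.Adj v u1) (h2 : G.Adj v u2) (h3 : G.Adj v u3)
    (d12 : u1 ≠ u2) (d13 : u1 ≠ u3) (d23 : u2 ≠ u3) :
    ∃ w : V, G.Adj v w ∧ w ≠ u1 ∧ w ≠ u2 ∧ w ≠ u3 ∧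
      ∀ u, G.Adj v u ↔ (u = u1 ∨ u = u2 ∨ u = u3 ∨ u = w) := by
  have hm1 : u1 ∈ G.neighborFinset v := by simpa [mem_neighborFinset]
  have hm2 : u2 ∈ (G.neighborFinset v).erase u1 := by
    simp [mem_neighborFinset, d12.symm, h2]
  have hm3 : u3 ∈ ((G.neighborFinset v).erase u1).erase u2 := by
    simp [mem_neighborFinset, d13.symm, d23.symm, h3]
  have hc : ((((G.neighborFinset v).erase u1).erase u2).erase u3).card = 1 := by
    rw [card_erase_of_mem hm3, card_erase_of_mem hm2, card_erase_of_mem hm1, hdeg]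
  obtain ⟨w, hw⟩ := Finset.card_eq_one.mp hc
  have hwm : w ∈ (((G.neighborFinset v).erase u1).erase u2).erase u3 := by rw [hw]; simp
  simp only [mem_erase, mem_neighborFinset] at hwm
  exact ⟨w, hwm.2.2.2, hwm.2.2.1, hwm.2.1, hwm.1,
    nbhd_eq G v hdeg u1 u2 u3 w h1 h2 h3 hwm.2.2.2 d12 d13 (Ne.symm hwm.2.2.1) d23
      (Ne.symm hwm.2.1) (Ne.symm hwm.1)⟩

lemma tri (ha : ∀ x y : V, G.Adj x y → G.neighborFinset x ∩ G.neighborFinset y = ∅)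
    {u v w : V} (h1 : G.Adj u v) (h2 : G.Adj u w) (h3 : G.Adj v w) : False := by
  have h := ha u v h1
  have : w ∈ G.neighborFinset u ∩ G.neighborFinset v := by
    simp [mem_neighborFinset, h2, h3]
  rw [h] at this
  simp at this

lemma common (hna : ∀ x y : V, x ≠ y → ¬ G.Adj x y →
      (G.neighborFinset x ∩ G.neighborFinset y).card = 1 ∨
      (G.neighborFinset x ∩ G.neighborFinset y).card = 2 ∨
      (G.neighborFinset x ∩ G.neighborFinset y).card = 3)
    {u v : V} (hne : u ≠ v) (hnadj : ¬ G.Adj u v) :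
    ∃ w, G.Adj u w ∧ G.Adj v w := by
  have h := hna u v hne hnadj
  have hpos : 0 < (G.neighborFinset u ∩ G.neighborFinset v).card := by omega
  obtain ⟨w, hw⟩ := Finset.card_pos.mp hpos
  simp only [mem_inter, mem_neighborFinset] at hw
  exact ⟨w, hw.1, hw.2⟩

lemma common_le3 (hna : ∀ x y : V, x ≠ y → ¬ G.Adj x y →
      (G.neighborFinset x ∩ G.neighborFinset y).card = 1 ∨
      (G.neighborFinset x ∩ G.neighborFinset y).card = 2 ∨
      (G.neighborFinset x ∩ G.neighborFinset y).card = 3)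
    {u v w1 w2 w3 w4 : V} (hne : u ≠ v) (hnadj : ¬ G.Adj u v)
    (h1 : G.Adj u w1) (h1' : G.Adj v w1) (h2 : G.Adj u w2) (h2' : G.Adj v w2)
    (h3 : G.Adj u w3) (h3' : G.Adj v w3) (h4 : G.Adj u w4) (h4' : G.Adj v w4)
    (d12 : w1 ≠ w2) (d13 : w1 ≠ w3) (d14 : w1 ≠ w4) (d23 : w2 ≠ w3) (d24 : w2 ≠ w4)
    (d34 : w3 ≠ w4) : False := by
  have h := hna u v hne hnadj
  have hsub : ({w1, w2, w3, w4} : Finset V) ⊆ G.neighborFinset u ∩ G.neighborFinset v := by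
    intro t ht
    simp only [mem_insert, mem_singleton] at ht
    rcases ht with h | h | h | h <;> subst h <;> simp [mem_neighborFinset, *]
  have hcard : ({w1, w2, w3, w4} : Finset V).card = 4 := by
    rw [card_insert_of_notMem (by simp [d12, d13, d14]),
      card_insert_of_notMem (by simp [d23, d24]),
      card_insert_of_notMem (by simp [d34]), card_singleton]
  have := Finset.card_le_card hsub
  omega
end


set_option maxHeartbeats 4000000

theorem stmt_14 {V : Type*} [Fintype V] [DecidableEq V] (G : SimpleGraph V) [DecidableRel G.Adj]
    (hn : Fintype.card V = 12)
    (hreg : G.IsRegularOfDegree 4)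
    (ha : ∀ x y : V, G.Adj x y → G.neighborFinset x ∩ G.neighborFinset y = ∅)
    (hna : ∀ x y : V, x ≠ y → ¬ G.Adj x y →
      (G.neighborFinset x ∩ G.neighborFinset y).card = 1 ∨
      (G.neighborFinset x ∩ G.neighborFinset y).card = 2 ∨
      (G.neighborFinset x ∩ G.neighborFinset y).card = 3)
    (hr1 : ∃ x y : V, x ≠ y ∧ ¬ G.Adj x y ∧
      (G.neighborFinset x ∩ G.neighborFinset y).card = 1)
    (hr2 : ∃ x y : V, x ≠ y ∧ ¬ G.Adj x y ∧
      (G.neighborFinset x ∩ G.neighborFinset y).card = 2)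
    (hr3 : ∃ x y : V, x ≠ y ∧ ¬ G.Adj x y ∧
      (G.neighborFinset x ∩ G.neighborFinset y).card = 3) :
    Nonempty (G ≃g G2) := by
  classical
  obtain ⟨x, y, hxy, hnxy, h3⟩ := hr3
  have hdeg : ∀ v : V, (G.neighborFinset v).card = 4 := fun v => hreg v
  set S := G.neighborFinset x ∩ G.neighborFinset y with hSdef
  have hzS : ∀ z ∈ S, G.Adj x z ∧ G.Adj y z := by
    intro z hz
    simp only [hSdef, mem_inter, mem_neighborFinset] at hz
    exact hz
  -- x1
  have hSx : S ⊆ G.neighborFinset x := inter_subset_left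
  have hx1ex : (G.neighborFinset x \ S).card = 1 := by
    rw [card_sdiff_of_subset hSx, hdeg, h3]
  obtain ⟨x1, hx1s⟩ := Finset.card_eq_one.mp hx1ex
  have hx1m : x1 ∈ G.neighborFinset x \ S := by rw [hx1s]; simp
  rw [mem_sdiff, mem_neighborFinset] at hx1m
  obtain ⟨hxx1, hx1S⟩ := hx1m
  have hNx0 : ∀ u, G.Adj x u ↔ u = x1 ∨ u ∈ S := by
    have hsub : insert x1 S ⊆ G.neighborFinset x := by
      intro u hu; rcases mem_insert.mp hu with h | h
      · subst h; simpa [mem_neighborFinset]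
      · exact hSx h
    have heq := Finset.eq_of_subset_of_card_le hsub
      (by rw [hdeg, card_insert_of_notMem hx1S, h3])
    intro u; rw [← mem_neighborFinset, ← heq]; simp
  -- y1
  have hSy : S ⊆ G.neighborFinset y := inter_subset_right
  have hy1ex : (G.neighborFinset y \ S).card = 1 := by
    rw [card_sdiff_of_subset hSy, hdeg, h3]
  obtain ⟨y1, hy1s⟩ := Finset.card_eq_one.mp hy1ex
  have hy1m : y1 ∈ G.neighborFinset y \ S := by rw [hy1s]; simp
  rw [mem_sdiff, mem_neighborFinset] at hy1m
  obtain ⟨hyy1, hy1S⟩ := hy1m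
  have hNy0 : ∀ u, G.Adj y u ↔ u = y1 ∨ u ∈ S := by
    have hsub : insert y1 S ⊆ G.neighborFinset y := by
      intro u hu; rcases mem_insert.mp hu with h | h
      · subst h; simpa [mem_neighborFinset]
      · exact hSy h
    have heq := Finset.eq_of_subset_of_card_le hsub
      (by rw [hdeg, card_insert_of_notMem hy1S, h3])
    intro u; rw [← mem_neighborFinset, ← heq]; simp
  -- basic distinctness
  have hxS : x ∉ S := fun h => G.irrefl (hzS x h).1
  have hyS : y ∉ S := fun h => G.irrefl (hzS y h).2
  have hnexx1 : x ≠ x1 := G.ne_of_adj hxx1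
  have hneyy1 : y ≠ y1 := G.ne_of_adj hyy1
  have hnex1y1 : x1 ≠ y1 := by
    intro h
    apply hx1S
    simp only [hSdef, mem_inter, mem_neighborFinset]
    exact ⟨hxx1, h ▸ hyy1⟩
  have hnexy1 : x ≠ y1 := fun h => hnxy ((h ▸ hyy1).symm)
  have hneyx1 : y ≠ x1 := fun h => hnxy (h ▸ hxx1)
  have hnadjxy1 : ¬ G.Adj x y1 := by
    intro h
    rcases (hNx0 y1).mp h with h' | h'
    · exact hnex1y1 h'.symm
    · exact hy1S h'
  have hnadjyx1 : ¬ G.Adj y x1 := by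
    intro h
    rcases (hNy0 x1).mp h with h' | h'
    · exact hnex1y1 h'
    · exact hx1S h'
  -- z facts
  have hzz : ∀ z ∈ S, ∀ z' ∈ S, z ≠ z' → ¬ G.Adj z z' := by
    intro z hz z' hz' _ hadj
    exact tri G ha (hzS z hz).1 (hzS z' hz').1 hadj
  have hzx1 : ∀ z ∈ S, ¬ G.Adj z x1 := by
    intro z hz hadj
    exact tri G ha (hzS z hz).1 hxx1 hadj
  have hzy1 : ∀ z ∈ S, ¬ G.Adj z y1 := by
    intro z hz hadj
    exact tri G ha (hzS z hz).2 hyy1 hadj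
  -- x1 ~ y1
  have hadjx1y1 : G.Adj x1 y1 := by
    obtain ⟨w, hw1, hw2⟩ := common G hna hnexy1 hnadjxy1
    rcases (hNx0 w).mp hw1 with h | h
    · exact h ▸ hw2.symm
    · exact absurd hw2.symm (hzy1 w h)
  -- the set A
  set A := (univ \ ({x, y, x1, y1} : Finset V)) \ S with hAdef
  have hAmem : ∀ w, w ∈ A ↔ (w ≠ x ∧ w ≠ y ∧ w ≠ x1 ∧ w ≠ y1 ∧ w ∉ S) := by
    intro w
    rw [hAdef]
    simp only [mem_sdiff, mem_univ, true_and, mem_insert, mem_singleton, not_or]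
    tauto
  have hcover : ∀ w, w = x ∨ w = y ∨ w = x1 ∨ w = y1 ∨ w ∈ S ∨ w ∈ A := by
    intro w
    by_cases h1 : w = x
    · exact Or.inl h1
    by_cases h2 : w = y
    · exact Or.inr (Or.inl h2)
    by_cases h3 : w = x1
    · exact Or.inr (Or.inr (Or.inl h3))
    by_cases h4 : w = y1
    · exact Or.inr (Or.inr (Or.inr (Or.inl h4)))
    by_cases h5 : w ∈ S
    · exact Or.inr (Or.inr (Or.inr (Or.inr (Or.inl h5))))
    exact Or.inr (Or.inr (Or.inr (Or.inr (Or.inr ((hAmem w).mpr ⟨h1, h2, h3, h4, h5⟩)))))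
  have hAcard : A.card = 5 := by
    have h4c : ({x, y, x1, y1} : Finset V).card = 4 := by
      rw [card_insert_of_notMem (by simp [hxy, hnexx1, hnexy1]),
        card_insert_of_notMem (by simp [hneyx1, hneyy1]),
        card_insert_of_notMem (by simp [hnex1y1]), card_singleton]
    have hsub4 : ({x, y, x1, y1} : Finset V) ⊆ univ \ S := by
      intro w hw
      simp only [mem_insert, mem_singleton] at hw
      rcases hw with h | h | h | h <;> subst h <;> simp [hxS, hyS, hx1S, hy1S]
    have h1 : A = (univ \ S) \ ({x, y, x1, y1} : Finset V) := by
      rw [hAdef, sdiff_sdiff_comm]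
    rw [h1, card_sdiff_of_subset hsub4, card_sdiff_of_subset (subset_univ S), card_univ, hn, h3, h4c]
  -- neighbourhoods of vertices in S
  have hzA : ∀ z ∈ S, ∃ b c, b ≠ c ∧ b ∈ A ∧ c ∈ A ∧
      (∀ u, G.Adj z u ↔ u = x ∨ u = y ∨ u = b ∨ u = c) := by
    intro z hz
    obtain ⟨hzx, hzy⟩ := hzS z hz
    obtain ⟨b, c, hb, hc, hbc, hbx, hby, hcx, hcy, hiff⟩ :=
      rest_two G z (hdeg z) x y hzx.symm hzy.symm hxy
    have hA' : ∀ d, G.Adj z d → d ≠ x → d ≠ y → d ∈ A := by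
      intro d hd hdx hdy
      refine (hAmem d).mpr ⟨hdx, hdy, ?_, ?_, ?_⟩
      · rintro rfl; exact hzx1 z hz hd
      · rintro rfl; exact hzy1 z hz hd
      · intro h; exact hzz z hz d h (G.ne_of_adj hd) hd
    exact ⟨b, c, hbc, hA' b hb hbx hby, hA' c hc hcx hcy, hiff⟩
  -- x1's other neighbours
  obtain ⟨p1, p2, hp1, hp2, hp12, hp1x, hp1y1, hp2x, hp2y1, hNx1p⟩ :=
    rest_two G x1 (hdeg x1) x y1 hxx1.symm hadjx1y1 hnexy1
  have hpA : ∀ p, G.Adj x1 p → p ≠ x → p ≠ y1 → p ∈ A := by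
    intro p hp hpx hpy1
    refine (hAmem p).mpr ⟨hpx, ?_, fun h => G.irrefl (h ▸ hp), hpy1,
      fun h => hzx1 p h hp.symm⟩
    rintro rfl; exact hnadjyx1 hp.symm
  have hp1A := hpA p1 hp1 hp1x hp1y1
  have hp2A := hpA p2 hp2 hp2x hp2y1
  -- y1's other neighbours
  obtain ⟨q1, q2, hq1, hq2, hq12, hq1y, hq1x1, hq2y, hq2x1, hNy1q⟩ :=
    rest_two G y1 (hdeg y1) y x1 hyy1.symm hadjx1y1.symm hneyx1
  have hqA : ∀ q, G.Adj y1 q → q ≠ y → q ≠ x1 → q ∈ A := by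
    intro q hq hqy hqx1
    refine (hAmem q).mpr ⟨?_, hqy, hqx1, fun h => G.irrefl (h ▸ hq), 
      fun h => hzy1 q h hq.symm⟩
    rintro rfl; exact hnadjxy1 hq.symm
  have hq1A := hqA q1 hq1 hq1y hq1x1
  have hq2A := hqA q2 hq2 hq2y hq2x1
  have hpq : ∀ p, G.Adj x1 p → ∀ q, G.Adj y1 q → p ≠ q := by
    intro p hp q hq h
    exact tri G ha hadjx1y1 hp (h ▸ hq)
  -- the fifth vertex a3
  have hsub4A : ({p1, p2, q1, q2} : Finset V) ⊆ A := by
    intro w hw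
    simp only [mem_insert, mem_singleton] at hw
    rcases hw with h | h | h | h <;> subst h <;> assumption
  have hc4 : ({p1, p2, q1, q2} : Finset V).card = 4 := by
    rw [card_insert_of_notMem (by simp [hp12, hpq p1 hp1 q1 hq1, hpq p1 hp1 q2 hq2]),
      card_insert_of_notMem (by simp [hpq p2 hp2 q1 hq1, hpq p2 hp2 q2 hq2]),
      card_insert_of_notMem (by simp [hq12]), card_singleton]
  have ha3ex : (A \ ({p1, p2, q1, q2} : Finset V)).card = 1 := by
    rw [card_sdiff_of_subset hsub4A, hAcard, hc4]
  obtain ⟨a3, ha3s⟩ := Finset.card_eq_one.mp ha3ex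
  have ha3m : a3 ∈ A \ ({p1, p2, q1, q2} : Finset V) := by rw [ha3s]; simp
  rw [mem_sdiff] at ha3m
  obtain ⟨ha3A, ha3p⟩ := ha3m
  simp only [mem_insert, mem_singleton, not_or] at ha3p
  have hA5 : ∀ w ∈ A, w = p1 ∨ w = p2 ∨ w = q1 ∨ w = q2 ∨ w = a3 := by
    have hsub : insert a3 ({p1, p2, q1, q2} : Finset V) ⊆ A := by
      intro w hw
      rcases mem_insert.mp hw with h | h
      · exact h ▸ ha3A
      · exact hsub4A h
    have heq := Finset.eq_of_subset_of_card_le hsub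
      (by rw [hAcard, card_insert_of_notMem (by simp [ha3p]), hc4])
    intro w hw
    rw [← heq] at hw
    simp only [mem_insert, mem_singleton] at hw
    exact orrot5.mp hw
  obtain ⟨ha3x, ha3y, ha3x1, ha3y1, ha3S⟩ := (hAmem a3).mp ha3A
  have hnadjxa3 : ¬ G.Adj x a3 := by
    intro h; rcases (hNx0 a3).mp h with h' | h'
    exacts [ha3x1 h', ha3S h']
  have hnadjya3 : ¬ G.Adj y a3 := by
    intro h; rcases (hNy0 a3).mp h with h' | h'
    exacts [ha3y1 h', ha3S h']
  have hnadjx1a3 : ¬ G.Adj x1 a3 := by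
    intro h; rcases (hNx1p a3).mp h with h' | h' | h' | h'
    exacts [ha3x h', ha3y1 h', ha3p.1 h', ha3p.2.1 h']
  have hnadjy1a3 : ¬ G.Adj y1 a3 := by
    intro h; rcases (hNy1q a3).mp h with h' | h' | h' | h'
    exacts [ha3y h', ha3x1 h', ha3p.2.2.1 h', ha3p.2.2.2 h']
  -- name a2 : the neighbour of x1 adjacent to a3
  have key1 : ∃ a1 a2, a1 ≠ a2 ∧ G.Adj x1 a1 ∧ G.Adj x1 a2 ∧ a1 ∈ A ∧ a2 ∈ A ∧
      G.Adj a3 a2 ∧ (∀ u, G.Adj x1 u ↔ u = x ∨ u = y1 ∨ u = a1 ∨ u = a2) ∧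
      (∀ w ∈ A, w = a1 ∨ w = a2 ∨ w = q1 ∨ w = q2 ∨ w = a3) := by
    obtain ⟨w, hw1, hw2⟩ := common G hna (Ne.symm ha3x1) hnadjx1a3
    rcases (hNx1p w).mp hw1 with h | h | h | h
    · exact absurd hw2.symm (h ▸ hnadjxa3)
    · exact absurd hw2 (h ▸ (fun h' => hnadjy1a3 h'.symm))
    · exact ⟨p2, p1, hp12.symm, hp2, hp1, hp2A, hp1A, h ▸ hw2,
        fun u => (hNx1p u).trans orsw34, fun v hv => orsw12of5.mp (hA5 v hv)⟩
    · exact ⟨p1, p2, hp12, hp1, hp2, hp1A, hp2A, h ▸ hw2,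
        hNx1p, hA5⟩
  obtain ⟨a1, a2, h12, hx1a1, hx1a2, ha1A, ha2A, ha3a2, hNx1, hA5'⟩ := key1
  clear hNx1p hA5 ha3p hp1 hp2 hp12 hp1x hp1y1 hp2x hp2y1 hp1A hp2A
  -- name a4 : the neighbour of y1 adjacent to a3
  have key2 : ∃ a4 a5, a4 ≠ a5 ∧ G.Adj y1 a4 ∧ G.Adj y1 a5 ∧ a4 ∈ A ∧ a5 ∈ A ∧
      G.Adj a3 a4 ∧ (∀ u, G.Adj y1 u ↔ u = y ∨ u = x1 ∨ u = a4 ∨ u = a5) ∧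
      (∀ w ∈ A, w = a1 ∨ w = a2 ∨ w = a4 ∨ w = a5 ∨ w = a3) := by
    obtain ⟨w, hw1, hw2⟩ := common G hna (Ne.symm ha3y1) hnadjy1a3
    rcases (hNy1q w).mp hw1 with h | h | h | h
    · exact absurd hw2.symm (h ▸ hnadjya3)
    · exact absurd hw2 (h ▸ (fun h' => hnadjx1a3 h'.symm))
    · exact ⟨q1, q2, hq12, hq1, hq2, hq1A, hq2A, h ▸ hw2, hNy1q, hA5'⟩
    · exact ⟨q2, q1, hq12.symm, hq2, hq1, hq2A, hq1A, h ▸ hw2,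
        fun u => (hNy1q u).trans orsw34, fun v hv => orsw34of5.mp (hA5' v hv)⟩
  obtain ⟨a4, a5, h45, hy1a4, hy1a5, ha4A, ha5A, ha3a4, hNy1, hA5⟩ := key2
  clear hNy1q hA5' hq1 hq2 hq12 hq1y hq1x1 hq2y hq2x1 hq1A hq2A
  -- shared facts
  obtain ⟨ha1x, ha1y, ha1x1, ha1y1, ha1S⟩ := (hAmem a1).mp ha1A
  obtain ⟨ha2x, ha2y, ha2x1, ha2y1, ha2S⟩ := (hAmem a2).mp ha2A
  obtain ⟨ha4x, ha4y, ha4x1, ha4y1, ha4S⟩ := (hAmem a4).mp ha4A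
  obtain ⟨ha5x, ha5y, ha5x1, ha5y1, ha5S⟩ := (hAmem a5).mp ha5A
  have ha14 : a1 ≠ a4 := hpq a1 hx1a1 a4 hy1a4
  have ha15 : a1 ≠ a5 := hpq a1 hx1a1 a5 hy1a5
  have ha24 : a2 ≠ a4 := hpq a2 hx1a2 a4 hy1a4
  have ha25 : a2 ≠ a5 := hpq a2 hx1a2 a5 hy1a5
  have ha3n1 : a3 ≠ a1 := fun h => hnadjx1a3 (h ▸ hx1a1)
  have ha3n2 : a3 ≠ a2 := fun h => hnadjx1a3 (h ▸ hx1a2)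
  have ha3n4 : a3 ≠ a4 := fun h => hnadjy1a3 (h ▸ hy1a4)
  have ha3n5 : a3 ≠ a5 := fun h => hnadjy1a3 (h ▸ hy1a5)
  have hna12 : ¬ G.Adj a1 a2 := fun h => tri G ha hx1a1 hx1a2 h
  have hna45 : ¬ G.Adj a4 a5 := fun h => tri G ha hy1a4 hy1a5 h
  have hnxA : ∀ a ∈ A, ¬ G.Adj x a := by
    intro a haA h
    obtain ⟨_, _, hax1, _, haS⟩ := (hAmem a).mp haA
    rcases (hNx0 a).mp h with h' | h'
    exacts [hax1 h', haS h']
  have hnyA : ∀ a ∈ A, ¬ G.Adj y a := by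
    intro a haA h
    obtain ⟨_, _, _, hay1, haS⟩ := (hAmem a).mp haA
    rcases (hNy0 a).mp h with h' | h'
    exacts [hay1 h', haS h']
  have hzaex : ∀ a ∈ A, ¬ G.Adj x1 a → ∃ z ∈ S, G.Adj z a := by
    intro a haA h
    obtain ⟨hax, _, _, _, _⟩ := (hAmem a).mp haA
    obtain ⟨w, hw1, hw2⟩ := common G hna (Ne.symm hax) (hnxA a haA)
    rcases (hNx0 w).mp hw1 with h' | h'
    · exact absurd (h' ▸ hw2.symm) h
    · exact ⟨w, h', hw2.symm⟩
  have hzaey : ∀ a ∈ A, ¬ G.Adj y1 a → ∃ z ∈ S, G.Adj z a := by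
    intro a haA h
    obtain ⟨_, hay, _, _, _⟩ := (hAmem a).mp haA
    obtain ⟨w, hw1, hw2⟩ := common G hna (Ne.symm hay) (hnyA a haA)
    rcases (hNy0 w).mp hw1 with h' | h'
    · exact absurd (h' ▸ hw2.symm) h
    · exact ⟨w, h', hw2.symm⟩
  have hnx1a4 : ¬ G.Adj x1 a4 := by
    intro h
    rcases (hNx1 a4).mp h with h' | h' | h' | h'
    exacts [ha4x h', ha4y1 h', ha14 h'.symm, ha24 h'.symm]
  have hnx1a5 : ¬ G.Adj x1 a5 := by
    intro h
    rcases (hNx1 a5).mp h with h' | h' | h' | h'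
    exacts [ha5x h', ha5y1 h', ha15 h'.symm, ha25 h'.symm]
  have hny1a1 : ¬ G.Adj y1 a1 := by
    intro h
    rcases (hNy1 a1).mp h with h' | h' | h' | h'
    exacts [ha1y h', ha1x1 h', ha14 h', ha15 h']
  have hny1a2 : ¬ G.Adj y1 a2 := by
    intro h
    rcases (hNy1 a2).mp h with h' | h' | h' | h'
    exacts [ha2y h', ha2x1 h', ha24 h', ha25 h']
  obtain ⟨zi, hziS, hzia3⟩ := hzaex a3 ha3A hnadjx1a3
  have hzix : zi ≠ x := fun h => hxS (h ▸ hziS)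
  have hziy : zi ≠ y := fun h => hyS (h ▸ hziS)
  have hzi1 : zi ≠ a1 := fun h => ha1S (h ▸ hziS)
  have hzi2 : zi ≠ a2 := fun h => ha2S (h ▸ hziS)
  have hzi4 : zi ≠ a4 := fun h => ha4S (h ▸ hziS)
  have hzi5 : zi ≠ a5 := fun h => ha5S (h ▸ hziS)
  have hzi3 : zi ≠ a3 := fun h => ha3S (h ▸ hziS)
  by_cases c1 : G.Adj a3 a1
  case pos =>
    by_cases c5 : G.Adj a3 a5
    case pos =>
      -- a3 would have five neighbours
      exfalso
      have hNa3 := nbhd_eq G a3 (hdeg a3) a1 a2 a4 a5 c1 ha3a2 ha3a4 c5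
        h12 ha14 ha15 ha24 ha25 h45
      rcases (hNa3 zi).mp hzia3.symm with h | h | h | h
      exacts [hzi1 h, hzi2 h, hzi4 h, hzi5 h]
    case neg =>
      -- case (ii) : contradiction
      exfalso
      have hNzifull : ∃ c, G.Adj zi c ∧ c = a5 := by
        obtain ⟨b, c, hbc, hbA, hcA, hiff⟩ := hzA zi hziS
        have ha3bc : a3 = b ∨ a3 = c := by
          rcases (hiff a3).mp hzia3 with h | h | h | h
          exacts [absurd h ha3x, absurd h ha3y, Or.inl h, Or.inr h]
        have hother : ∀ d, d ∈ A → G.Adj zi d → d ≠ a3 → d = a5 := by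
          intro d hdA hd hd3
          have hnd3 : ¬ G.Adj a3 d := fun h' => tri G ha hzia3 hd h'
          rcases hA5 d hdA with h | h | h | h | h
          · exact absurd (h ▸ hnd3) (fun h' => h' c1)
          · exact absurd (h ▸ hnd3) (fun h' => h' ha3a2)
          · exact absurd (h ▸ hnd3) (fun h' => h' ha3a4)
          · exact h
          · exact absurd h hd3
        rcases ha3bc with h | h
        · have hadjc : G.Adj zi c := (hiff c).mpr (Or.inr (Or.inr (Or.inr rfl)))
          exact ⟨c, hadjc, hother c hcA hadjc (fun h' => hbc (h' ▸ h.symm ▸ rfl))⟩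
        · have hadjb : G.Adj zi b := (hiff b).mpr (Or.inr (Or.inr (Or.inl rfl)))
          exact ⟨b, hadjb, hother b hbA hadjb (fun h' => hbc (h ▸ h' ▸ rfl))⟩
      obtain ⟨c, hc, hceq⟩ := hNzifull
      rw [hceq] at hc
      have hNzi := nbhd_eq G zi (hdeg zi) x y a3 a5 (hzS zi hziS).1.symm
        (hzS zi hziS).2.symm hzia3 hc hxy (Ne.symm ha3x) (Ne.symm ha5x)
        (Ne.symm ha3y) (Ne.symm ha5y) ha3n5
      -- a4 has two neighbours in S besides y1 and a3
      obtain ⟨d, e, hd, he, hde, hdy1, hda3, hey1, hea3, hNa4⟩ :=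
        rest_two G a4 (hdeg a4) y1 a3 hy1a4.symm ha3a4.symm (Ne.symm ha3y1)
      have hdeS : ∀ w, G.Adj a4 w → w ≠ y1 → w ≠ a3 → w ∈ S := by
        intro w hw hwy1 hwa3
        rcases hcover w with h | h | h | h | h | h
        · exact absurd (h ▸ hw) (fun h' => hnxA a4 ha4A h'.symm)
        · exact absurd (h ▸ hw) (fun h' => hnyA a4 ha4A h'.symm)
        · exact absurd (h ▸ hw) (fun h' => hnx1a4 h'.symm)
        · exact absurd h hwy1
        · exact h
        · rcases hA5 w h with rfl | rfl | rfl | rfl | rfl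
          · exact (tri G ha c1 ha3a4 hw.symm).elim
          · exact (tri G ha ha3a2 ha3a4 hw.symm).elim
          · exact (G.irrefl hw).elim
          · exact (hna45 hw).elim
          · exact absurd rfl hwa3
      have hdS := hdeS d hd hdy1 hda3
      have heS := hdeS e he hey1 hea3
      have hzid : zi ≠ d := by
        rintro rfl
        exact tri G ha hzia3 hd.symm ha3a4
      have hzie : zi ≠ e := by
        rintro rfl
        exact tri G ha hzia3 he.symm ha3a4
      have hS3 : ∀ z ∈ S, z = zi ∨ z = d ∨ z = e := by
        have hsub : ({zi, d, e} : Finset V) ⊆ S := by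
          intro w hw
          simp only [mem_insert, mem_singleton] at hw
          rcases hw with h | h | h <;> subst h <;> assumption
        have heq := Finset.eq_of_subset_of_card_le hsub
          (by rw [h3, card_insert_of_notMem (by simp [hzid, hzie]),
            card_insert_of_notMem (by simp [hde]), card_singleton])
        intro z hz
        rw [← heq] at hz
        simpa using hz
      -- which of d, e is adjacent to a1 / a2
      have hkey : ∃ zd ze, G.Adj a4 zd ∧ G.Adj a4 ze ∧ zd ∈ S ∧ ze ∈ S ∧
          G.Adj zd a1 ∧ G.Adj ze a2 ∧ zd ≠ ze := by
        obtain ⟨z1', hz1S, hz1a1⟩ := hzaey a1 ha1A hny1a1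
        obtain ⟨z2', hz2S, hz2a2⟩ := hzaey a2 ha2A hny1a2
        have hz1ne : z1' ≠ zi := by
          rintro rfl
          rcases (hNzi a1).mp hz1a1 with h | h | h | h
          exacts [ha1x h, ha1y h, ha3n1 h.symm, ha15 h]
        have hz2ne : z2' ≠ zi := by
          rintro rfl
          rcases (hNzi a2).mp hz2a2 with h | h | h | h
          exacts [ha2x h, ha2y h, ha3n2 h.symm, ha25 h]
        have hz12 : z1' ≠ z2' := by
          rintro rfl
          -- z1' adjacent to a1, a2, x, y : but also to a4? no : contradiction comes later;
          -- simpler: a1 and a2 are the two A-neighbours of z1', but then d,e ≠ z1'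
          -- and a4's S-neighbours are d,e, while S = {zi, d, e} — z1' must be d or e,
          have hNz1 := nbhd_eq G z1' (hdeg z1') x y a1 a2 (hzS z1' hz1S).1.symm
            (hzS z1' hz1S).2.symm hz1a1 hz2a2 hxy (Ne.symm ha1x) (Ne.symm ha2x)
            (Ne.symm ha1y) (Ne.symm ha2y) h12
          rcases hS3 z1' hz1S with h | h | h
          · exact hz1ne h
          · rcases (hNz1 a4).mp (by rw [h]; exact hd.symm) with h' | h' | h' | h'
            exacts [ha4x h', ha4y h', ha14 h'.symm, ha24 h'.symm]
          · rcases (hNz1 a4).mp (by rw [h]; exact he.symm) with h' | h' | h' | h'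
            exacts [ha4x h', ha4y h', ha14 h'.symm, ha24 h'.symm]
        rcases hS3 z1' hz1S with h | h | h
        · exact absurd h hz1ne
        · rcases hS3 z2' hz2S with h' | h' | h'
          · exact absurd h' hz2ne
          · exact absurd (h ▸ h' ▸ rfl) hz12
          · exact ⟨z1', z2', h ▸ hd, h' ▸ he, hz1S, hz2S, hz1a1, hz2a2, hz12⟩
        · rcases hS3 z2' hz2S with h' | h' | h'
          · exact absurd h' hz2ne
          · exact ⟨z1', z2', h ▸ he, h' ▸ hd, hz1S, hz2S, hz1a1, hz2a2, hz12⟩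
          · exact absurd (h ▸ h' ▸ rfl) hz12
      obtain ⟨zd, ze, hzd4, hze4, hzdS, hzeS, hzda1, hzea2, hzdze⟩ := hkey
      have hNze := nbhd_eq G ze (hdeg ze) x y a4 a2 (hzS ze hzeS).1.symm
        (hzS ze hzeS).2.symm hze4.symm hzea2 hxy (Ne.symm ha4x) (Ne.symm ha2x)
        (Ne.symm ha4y) (Ne.symm ha2y) (Ne.symm ha24)
      -- a1 and ze have no common neighbour
      have hne : a1 ≠ ze := fun h => ha1S (h ▸ hzeS)
      have hnadj : ¬ G.Adj a1 ze := by
        intro h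
        rcases (hNze a1).mp h.symm with h' | h' | h' | h'
        exacts [ha1x h', ha1y h', ha14 h', h12 h']
      obtain ⟨w, hw1, hw2⟩ := common G hna hne hnadj
      rcases (hNze w).mp hw2 with rfl | rfl | rfl | rfl
      · exact hnxA a1 ha1A hw1.symm
      · exact hnyA a1 ha1A hw1.symm
      · exact tri G ha c1 ha3a4 hw1
      · exact hna12 hw1
  case neg =>
    by_cases c5 : G.Adj a3 a5
    case pos =>
      -- case (iii) : contradiction (mirror of case (ii))
      exfalso
      have hNzifull : ∃ c, G.Adj zi c ∧ c = a1 := by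
        obtain ⟨b, c, hbc, hbA, hcA, hiff⟩ := hzA zi hziS
        have ha3bc : a3 = b ∨ a3 = c := by
          rcases (hiff a3).mp hzia3 with h | h | h | h
          exacts [absurd h ha3x, absurd h ha3y, Or.inl h, Or.inr h]
        have hother : ∀ d, d ∈ A → G.Adj zi d → d ≠ a3 → d = a1 := by
          intro d hdA hd hd3
          have hnd3 : ¬ G.Adj a3 d := fun h' => tri G ha hzia3 hd h'
          rcases hA5 d hdA with h | h | h | h | h
          · exact h
          · exact absurd (h ▸ hnd3) (fun h' => h' ha3a2)
          · exact absurd (h ▸ hnd3) (fun h' => h' ha3a4)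
          · exact absurd (h ▸ hnd3) (fun h' => h' c5)
          · exact absurd h hd3
        rcases ha3bc with h | h
        · have hadjc : G.Adj zi c := (hiff c).mpr (Or.inr (Or.inr (Or.inr rfl)))
          exact ⟨c, hadjc, hother c hcA hadjc (fun h' => hbc (h' ▸ h.symm ▸ rfl))⟩
        · have hadjb : G.Adj zi b := (hiff b).mpr (Or.inr (Or.inr (Or.inl rfl)))
          exact ⟨b, hadjb, hother b hbA hadjb (fun h' => hbc (h ▸ h' ▸ rfl))⟩
      obtain ⟨c, hc, hceq⟩ := hNzifull
      rw [hceq] at hc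
      have hNzi := nbhd_eq G zi (hdeg zi) x y a3 a1 (hzS zi hziS).1.symm
        (hzS zi hziS).2.symm hzia3 hc hxy (Ne.symm ha3x) (Ne.symm ha1x)
        (Ne.symm ha3y) (Ne.symm ha1y) ha3n1
      obtain ⟨d, e, hd, he, hde, hdx1, hda3, hex1, hea3, hNa2⟩ :=
        rest_two G a2 (hdeg a2) x1 a3 hx1a2.symm ha3a2.symm (Ne.symm ha3x1)
      have hdeS : ∀ w, G.Adj a2 w → w ≠ x1 → w ≠ a3 → w ∈ S := by
        intro w hw hwx1 hwa3
        rcases hcover w with h | h | h | h | h | h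
        · exact absurd (h ▸ hw) (fun h' => hnxA a2 ha2A h'.symm)
        · exact absurd (h ▸ hw) (fun h' => hnyA a2 ha2A h'.symm)
        · exact absurd h hwx1
        · exact absurd (h ▸ hw) (fun h' => hny1a2 h'.symm)
        · exact h
        · rcases hA5 w h with rfl | rfl | rfl | rfl | rfl
          · exact (hna12 hw.symm).elim
          · exact (G.irrefl hw).elim
          · exact (tri G ha ha3a2 ha3a4 hw).elim
          · exact (tri G ha ha3a2 c5 hw).elim
          · exact absurd rfl hwa3
      have hdS := hdeS d hd hdx1 hda3
      have heS := hdeS e he hex1 hea3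
      have hzid : zi ≠ d := by
        rintro rfl
        exact tri G ha hzia3 hd.symm ha3a2
      have hzie : zi ≠ e := by
        rintro rfl
        exact tri G ha hzia3 he.symm ha3a2
      have hS3 : ∀ z ∈ S, z = zi ∨ z = d ∨ z = e := by
        have hsub : ({zi, d, e} : Finset V) ⊆ S := by
          intro w hw
          simp only [mem_insert, mem_singleton] at hw
          rcases hw with h | h | h <;> subst h <;> assumption
        have heq := Finset.eq_of_subset_of_card_le hsub
          (by rw [h3, card_insert_of_notMem (by simp [hzid, hzie]),
            card_insert_of_notMem (by simp [hde]), card_singleton])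
        intro z hz
        rw [← heq] at hz
        simpa using hz
      have hkey : ∃ zd ze, G.Adj a2 zd ∧ G.Adj a2 ze ∧ zd ∈ S ∧ ze ∈ S ∧
          G.Adj zd a5 ∧ G.Adj ze a4 ∧ zd ≠ ze := by
        obtain ⟨z1', hz1S, hz1a5⟩ := hzaex a5 ha5A hnx1a5
        obtain ⟨z2', hz2S, hz2a4⟩ := hzaex a4 ha4A hnx1a4
        have hz1ne : z1' ≠ zi := by
          rintro rfl
          rcases (hNzi a5).mp hz1a5 with h | h | h | h
          exacts [ha5x h, ha5y h, ha3n5 h.symm, ha15 h.symm]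
        have hz2ne : z2' ≠ zi := by
          rintro rfl
          rcases (hNzi a4).mp hz2a4 with h | h | h | h
          exacts [ha4x h, ha4y h, ha3n4 h.symm, ha14 h.symm]
        have hz12 : z1' ≠ z2' := by
          rintro rfl
          have hNz1 := nbhd_eq G z1' (hdeg z1') x y a5 a4 (hzS z1' hz1S).1.symm
            (hzS z1' hz1S).2.symm hz1a5 hz2a4 hxy (Ne.symm ha5x) (Ne.symm ha4x)
            (Ne.symm ha5y) (Ne.symm ha4y) h45.symm
          rcases hS3 z1' hz1S with h | h | h
          · exact hz1ne h
          · rcases (hNz1 a2).mp (by rw [h]; exact hd.symm) with h' | h' | h' | h'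
            exacts [ha2x h', ha2y h', ha25 h', ha24 h']
          · rcases (hNz1 a2).mp (by rw [h]; exact he.symm) with h' | h' | h' | h'
            exacts [ha2x h', ha2y h', ha25 h', ha24 h']
        rcases hS3 z1' hz1S with h | h | h
        · exact absurd h hz1ne
        · rcases hS3 z2' hz2S with h' | h' | h'
          · exact absurd h' hz2ne
          · exact absurd (h ▸ h' ▸ rfl) hz12
          · exact ⟨z1', z2', h ▸ hd, h' ▸ he, hz1S, hz2S, hz1a5, hz2a4, hz12⟩
        · rcases hS3 z2' hz2S with h' | h' | h'
          · exact absurd h' hz2ne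
          · exact ⟨z1', z2', h ▸ he, h' ▸ hd, hz1S, hz2S, hz1a5, hz2a4, hz12⟩
          · exact absurd (h ▸ h' ▸ rfl) hz12
      obtain ⟨zd, ze, hzd2, hze2, hzdS, hzeS, hzda5, hzea4, hzdze⟩ := hkey
      have hNze := nbhd_eq G ze (hdeg ze) x y a2 a4 (hzS ze hzeS).1.symm
        (hzS ze hzeS).2.symm hze2.symm hzea4 hxy (Ne.symm ha2x) (Ne.symm ha4x)
        (Ne.symm ha2y) (Ne.symm ha4y) ha24
      have hne : a5 ≠ ze := fun h => ha5S (h ▸ hzeS)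
      have hnadj : ¬ G.Adj a5 ze := by
        intro h
        rcases (hNze a5).mp h.symm with h' | h' | h' | h'
        exacts [ha5x h', ha5y h', ha25 h'.symm, h45 h'.symm]
      obtain ⟨w, hw1, hw2⟩ := common G hna hne hnadj
      rcases (hNze w).mp hw2 with rfl | rfl | rfl | rfl
      · exact hnxA a5 ha5A hw1.symm
      · exact hnyA a5 ha5A hw1.symm
      · exact tri G ha ha3a2 c5 hw1.symm
      · exact tri G ha hy1a4 hy1a5 hw1.symm
    case neg =>
      -- case (i) : the graph is G2
      -- a3's neighbourhood : a2, a4 and two vertices of S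
      obtain ⟨zj, hzja, hzjn2, hzjn4, hzjni, hNa3⟩ :=
        fourth G a3 (hdeg a3) a2 a4 zi ha3a2 ha3a4 hzia3.symm ha24
          (Ne.symm hzi2) (Ne.symm hzi4)
      have hzjS : zj ∈ S := by
        rcases hcover zj with h | h | h | h | h | h
        · rw [h] at hzja; exact absurd hzja.symm hnadjxa3
        · rw [h] at hzja; exact absurd hzja.symm hnadjya3
        · rw [h] at hzja; exact absurd hzja.symm hnadjx1a3
        · rw [h] at hzja; exact absurd hzja.symm hnadjy1a3
        · exact h
        · rcases hA5 zj h with h' | h' | h' | h' | h'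
          · rw [h'] at hzja; exact absurd hzja c1
          · exact absurd h' hzjn2
          · exact absurd h' hzjn4
          · rw [h'] at hzja; exact absurd hzja c5
          · rw [h'] at hzja; exact (G.irrefl hzja).elim
      -- the fourth neighbours of zi and zj are a1 and a5 in some order
      have hzfourth : ∀ z ∈ S, G.Adj z a3 → ∃ cz, G.Adj z cz ∧ (cz = a1 ∨ cz = a5) ∧
          (∀ u, G.Adj z u ↔ u = x ∨ u = y ∨ u = a3 ∨ u = cz) := by
        intro z hzSm hza3
        obtain ⟨cz, hcz, hczx, hczy, hcza3, hNz⟩ :=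
          fourth G z (hdeg z) x y a3 (hzS z hzSm).1.symm (hzS z hzSm).2.symm hza3
            hxy (Ne.symm ha3x) (Ne.symm ha3y)
        have hczA : cz ∈ A := by
          rcases hcover cz with h | h | h | h | h | h
          · exact absurd h hczx
          · exact absurd h hczy
          · rw [h] at hcz; exact absurd hcz (hzx1 z hzSm)
          · rw [h] at hcz; exact absurd hcz (hzy1 z hzSm)
          · exact absurd hcz (hzz z hzSm cz h (G.ne_of_adj hcz))
          · exact h
        refine ⟨cz, hcz, ?_, hNz⟩
        rcases hA5 cz hczA with h | h | h | h | h
        · exact Or.inl h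
        · rw [h] at hcz; exact (tri G ha hza3 hcz ha3a2).elim
        · rw [h] at hcz; exact (tri G ha hza3 hcz ha3a4).elim
        · exact Or.inr h
        · exact absurd h hcza3
      obtain ⟨ci, hcia, hcio, hNzi⟩ := hzfourth zi hziS hzia3
      obtain ⟨cj, hcja, hcjo, hNzj⟩ := hzfourth zj hzjS hzja.symm
      have hciA : ci ∈ A := by
        rcases hcio with h | h <;> rw [h]
        exacts [ha1A, ha5A]
      have ha3ci : a3 ≠ ci := by
        rcases hcio with h | h <;> rw [h]
        exacts [ha3n1, ha3n5]
      have hcicj : ci ≠ cj := by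
        rintro rfl
        exact common_le3 G hna (Ne.symm hzjni) (hzz zi hziS zj hzjS (Ne.symm hzjni))
          (hzS zi hziS).1.symm (hzS zj hzjS).1.symm (hzS zi hziS).2.symm
          (hzS zj hzjS).2.symm hzia3 hzja.symm hcia hcja hxy (Ne.symm ha3x)
          (Ne.symm ((hAmem ci).mp hciA).1) (Ne.symm ha3y)
          (Ne.symm ((hAmem ci).mp hciA).2.1) ha3ci
      have hkeyz : ∃ zA zC, zA ∈ S ∧ zC ∈ S ∧ zA ≠ zC ∧
          (∀ u, G.Adj zA u ↔ u = x ∨ u = y ∨ u = a3 ∨ u = a1) ∧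
          (∀ u, G.Adj zC u ↔ u = x ∨ u = y ∨ u = a3 ∨ u = a5) ∧
          (∀ u, G.Adj a3 u ↔ u = a2 ∨ u = a4 ∨ u = zA ∨ u = zC) := by
        rcases hcio with h | h <;> rw [h] at hNzi
        · rcases hcjo with h' | h'
          · exact absurd (h.trans h'.symm) hcicj
          · rw [h'] at hNzj
            exact ⟨zi, zj, hziS, hzjS, Ne.symm hzjni, hNzi, hNzj, hNa3⟩
        · rcases hcjo with h' | h'
          · rw [h'] at hNzj
            exact ⟨zj, zi, hzjS, hziS, hzjni, hNzj, hNzi,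
              fun u => (hNa3 u).trans orsw34⟩
          · exact absurd (h.trans h'.symm) hcicj
      obtain ⟨zA, zC, hzAS, hzCS, hzAzC, hNzA, hNzC, hNa3f⟩ := hkeyz
      -- the third vertex of S
      obtain ⟨zb, hzbS, hzba2⟩ := hzaey a2 ha2A hny1a2
      have hzbzA : zb ≠ zA := by
        intro h
        rw [h] at hzba2
        rcases (hNzA a2).mp hzba2 with h' | h' | h' | h'
        exacts [ha2x h', ha2y h', ha3n2 h'.symm, h12 h'.symm]
      have hzbzC : zb ≠ zC := by
        intro h
        rw [h] at hzba2
        rcases (hNzC a2).mp hzba2 with h' | h' | h' | h'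
        exacts [ha2x h', ha2y h', ha3n2 h'.symm, ha25 h']
      have hS3 : ∀ z ∈ S, z = zA ∨ z = zb ∨ z = zC := by
        have hsub : ({zA, zb, zC} : Finset V) ⊆ S := by
          intro w hw
          simp only [mem_insert, mem_singleton] at hw
          rcases hw with h | h | h <;> subst h <;> assumption
        have heq := Finset.eq_of_subset_of_card_le hsub
          (by rw [h3, card_insert_of_notMem (by simp [Ne.symm hzbzA, hzAzC]),
            card_insert_of_notMem (by simp [hzbzC]), card_singleton])
        intro z hz
        rw [← heq] at hz
        simpa using hz
      have hzba4 : G.Adj zb a4 := by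
        obtain ⟨zb', hzb'S, hzb'a4⟩ := hzaex a4 ha4A hnx1a4
        rcases hS3 zb' hzb'S with h | h | h <;> rw [h] at hzb'a4
        · rcases (hNzA a4).mp hzb'a4 with h' | h' | h' | h'
          exacts [(ha4x h').elim, (ha4y h').elim, (ha3n4 h'.symm).elim, (ha14 h'.symm).elim]
        · exact hzb'a4
        · rcases (hNzC a4).mp hzb'a4 with h' | h' | h' | h'
          exacts [(ha4x h').elim, (ha4y h').elim, (ha3n4 h'.symm).elim, (h45 h').elim]
      have hNzB := nbhd_eq G zb (hdeg zb) x y a2 a4 (hzS zb hzbS).1.symm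
        (hzS zb hzbS).2.symm hzba2 hzba4 hxy (Ne.symm ha2x) (Ne.symm ha4x)
        (Ne.symm ha2y) (Ne.symm ha4y) ha24
      -- remaining neighbourhoods
      have hy1zb : y1 ≠ zb := fun h => hy1S (h ▸ hzbS)
      have ha3zb : a3 ≠ zb := fun h => ha3S (h ▸ hzbS)
      have hx1zb : x1 ≠ zb := fun h => hx1S (h ▸ hzbS)
      have hx1zA : x1 ≠ zA := fun h => hx1S (h ▸ hzAS)
      have hy1zC : y1 ≠ zC := fun h => hy1S (h ▸ hzCS)
      -- a4's fourth neighbour is a1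
      obtain ⟨w4, hw4, hw4y1, hw4a3, hw4zb, hNa4⟩ :=
        fourth G a4 (hdeg a4) y1 a3 zb hy1a4.symm ha3a4.symm hzba4.symm
          (Ne.symm ha3y1) hy1zb ha3zb
      have hw4a1 : w4 = a1 := by
        rcases hcover w4 with h | h | h | h | h | h
        · rw [h] at hw4; exact absurd hw4.symm (hnxA a4 ha4A)
        · rw [h] at hw4; exact absurd hw4.symm (hnyA a4 ha4A)
        · rw [h] at hw4; exact absurd hw4.symm hnx1a4
        · exact absurd h hw4y1
        · rcases hS3 w4 h with h' | h' | h' <;> rw [h'] at hw4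
          · rcases (hNzA a4).mp hw4.symm with h'' | h'' | h'' | h''
            exacts [(ha4x h'').elim, (ha4y h'').elim, (ha3n4 h''.symm).elim,
              (ha14 h''.symm).elim]
          · exact absurd rfl (h' ▸ hw4zb)
          · rcases (hNzC a4).mp hw4.symm with h'' | h'' | h'' | h''
            exacts [(ha4x h'').elim, (ha4y h'').elim, (ha3n4 h''.symm).elim,
              (h45 h'').elim]
        · rcases hA5 w4 h with h' | h' | h' | h' | h'
          · exact h'
          · rw [h'] at hw4; exact (tri G ha ha3a2 ha3a4 hw4.symm).elim
          · rw [h'] at hw4; exact (G.irrefl hw4).elim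
          · rw [h'] at hw4; exact (hna45 hw4).elim
          · exact absurd h' hw4a3
      rw [hw4a1] at hw4 hNa4
      -- a2's fourth neighbour is a5
      obtain ⟨w2, hw2, hw2x1, hw2a3, hw2zb, hNa2⟩ :=
        fourth G a2 (hdeg a2) x1 a3 zb hx1a2.symm ha3a2.symm hzba2.symm
          (Ne.symm ha3x1) hx1zb ha3zb
      have hw2a5 : w2 = a5 := by
        rcases hcover w2 with h | h | h | h | h | h
        · rw [h] at hw2; exact absurd hw2.symm (hnxA a2 ha2A)
        · rw [h] at hw2; exact absurd hw2.symm (hnyA a2 ha2A)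
        · exact absurd h hw2x1
        · rw [h] at hw2; exact absurd hw2.symm hny1a2
        · rcases hS3 w2 h with h' | h' | h' <;> rw [h'] at hw2
          · rcases (hNzA a2).mp hw2.symm with h'' | h'' | h'' | h''
            exacts [(ha2x h'').elim, (ha2y h'').elim, (ha3n2 h''.symm).elim,
              (h12 h''.symm).elim]
          · exact absurd rfl (h' ▸ hw2zb)
          · rcases (hNzC a2).mp hw2.symm with h'' | h'' | h'' | h''
            exacts [(ha2x h'').elim, (ha2y h'').elim, (ha3n2 h''.symm).elim,
              (ha25 h'').elim]
        · rcases hA5 w2 h with h' | h' | h' | h' | h'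
          · rw [h'] at hw2; exact (hna12 hw2.symm).elim
          · rw [h'] at hw2; exact (G.irrefl hw2).elim
          · rw [h'] at hw2; exact (tri G ha ha3a2 ha3a4 hw2).elim
          · exact h'
          · exact absurd h' hw2a3
      rw [hw2a5] at hw2 hNa2
      -- a1's fourth neighbour is a5
      have hzAa1 : G.Adj zA a1 := (hNzA a1).mpr (Or.inr (Or.inr (Or.inr rfl)))
      have hzAa3 : G.Adj zA a3 := (hNzA a3).mpr (Or.inr (Or.inr (Or.inl rfl)))
      have hzCa3 : G.Adj zC a3 := (hNzC a3).mpr (Or.inr (Or.inr (Or.inl rfl)))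
      have hzCa5 : G.Adj zC a5 := (hNzC a5).mpr (Or.inr (Or.inr (Or.inr rfl)))
      have hzAa4 : zA ≠ a4 := fun h => ha4S (h ▸ hzAS)
      obtain ⟨w1, hw1, hw1x1, hw1zA, hw1a4, hNa1⟩ :=
        fourth G a1 (hdeg a1) x1 zA a4 hx1a1.symm hzAa1.symm hw4.symm
          hx1zA (Ne.symm ha4x1) hzAa4
      have hw1a5 : w1 = a5 := by
        rcases hcover w1 with h | h | h | h | h | h
        · rw [h] at hw1; exact absurd hw1.symm (hnxA a1 ha1A)
        · rw [h] at hw1; exact absurd hw1.symm (hnyA a1 ha1A)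
        · exact absurd h hw1x1
        · rw [h] at hw1; exact absurd hw1.symm hny1a1
        · rcases hS3 w1 h with h' | h' | h'
          · exact absurd h' hw1zA
          · rw [h'] at hw1
            rcases (hNzB a1).mp hw1.symm with h'' | h'' | h'' | h''
            exacts [(ha1x h'').elim, (ha1y h'').elim, (h12 h'').elim,
              (ha14 h'').elim]
          · rw [h'] at hw1
            rcases (hNzC a1).mp hw1.symm with h'' | h'' | h'' | h''
            exacts [(ha1x h'').elim, (ha1y h'').elim, (ha3n1 h''.symm).elim,
              (ha15 h'').elim]
        · rcases hA5 w1 h with h' | h' | h' | h' | h'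
          · rw [h'] at hw1; exact (G.irrefl hw1).elim
          · rw [h'] at hw1; exact (hna12 hw1).elim
          · exact absurd h' hw1a4
          · exact h'
          · rw [h'] at hw1; exact absurd hw1.symm c1
      rw [hw1a5] at hw1 hNa1
      -- a5's neighbourhood
      have hNa5 := nbhd_eq G a5 (hdeg a5) y1 zC a2 a1 hy1a5.symm hzCa5.symm
        hw2.symm hw1.symm hy1zC (Ne.symm ha2y1) (Ne.symm ha1y1)
        (fun h => ha2S (h ▸ hzCS)) (fun h => ha1S (h ▸ hzCS)) h12.symm
      -- x's and y's neighbourhoods in final form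
      have hNx : ∀ u, G.Adj x u ↔ u = x1 ∨ u = zA ∨ u = zb ∨ u = zC := by
        intro u
        rw [hNx0 u]
        constructor
        · rintro (h | h)
          · exact Or.inl h
          · rcases hS3 u h with h' | h' | h'
            exacts [Or.inr (Or.inl h'), Or.inr (Or.inr (Or.inl h')),
              Or.inr (Or.inr (Or.inr h'))]
        · rintro (rfl | rfl | rfl | rfl)
          exacts [Or.inl rfl, Or.inr hzAS, Or.inr hzbS, Or.inr hzCS]
      have hNy : ∀ u, G.Adj y u ↔ u = y1 ∨ u = zA ∨ u = zb ∨ u = zC := by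
        intro u
        rw [hNy0 u]
        constructor
        · rintro (h | h)
          · exact Or.inl h
          · rcases hS3 u h with h' | h' | h'
            exacts [Or.inr (Or.inl h'), Or.inr (Or.inr (Or.inl h')),
              Or.inr (Or.inr (Or.inr h'))]
        · rintro (rfl | rfl | rfl | rfl)
          exacts [Or.inl rfl, Or.inr hzAS, Or.inr hzbS, Or.inr hzCS]
      have nn0_4 : x ≠ zA := fun h => hxS (by rw [h]; exact hzAS)
      have nn0_5 : x ≠ zb := fun h => hxS (by rw [h]; exact hzbS)
      have nn0_6 : x ≠ zC := fun h => hxS (by rw [h]; exact hzCS)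
      have nn1_4 : y ≠ zA := fun h => hyS (by rw [h]; exact hzAS)
      have nn1_5 : y ≠ zb := fun h => hyS (by rw [h]; exact hzbS)
      have nn1_6 : y ≠ zC := fun h => hyS (by rw [h]; exact hzCS)
      have nn2_4 : x1 ≠ zA := fun h => hx1S (by rw [h]; exact hzAS)
      have nn2_5 : x1 ≠ zb := fun h => hx1S (by rw [h]; exact hzbS)
      have nn2_6 : x1 ≠ zC := fun h => hx1S (by rw [h]; exact hzCS)
      have nn3_4 : y1 ≠ zA := fun h => hy1S (by rw [h]; exact hzAS)
      have nn3_5 : y1 ≠ zb := fun h => hy1S (by rw [h]; exact hzbS)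
      have nn3_6 : y1 ≠ zC := fun h => hy1S (by rw [h]; exact hzCS)
      have nn4_7 : zA ≠ a1 := fun h => ha1S (by rw [← h]; exact hzAS)
      have nn4_8 : zA ≠ a2 := fun h => ha2S (by rw [← h]; exact hzAS)
      have nn4_9 : zA ≠ a3 := fun h => ha3S (by rw [← h]; exact hzAS)
      have nn4_10 : zA ≠ a4 := fun h => ha4S (by rw [← h]; exact hzAS)
      have nn4_11 : zA ≠ a5 := fun h => ha5S (by rw [← h]; exact hzAS)
      have nn5_7 : zb ≠ a1 := fun h => ha1S (by rw [← h]; exact hzbS)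
      have nn5_8 : zb ≠ a2 := fun h => ha2S (by rw [← h]; exact hzbS)
      have nn5_9 : zb ≠ a3 := fun h => ha3S (by rw [← h]; exact hzbS)
      have nn5_10 : zb ≠ a4 := fun h => ha4S (by rw [← h]; exact hzbS)
      have nn5_11 : zb ≠ a5 := fun h => ha5S (by rw [← h]; exact hzbS)
      have nn6_7 : zC ≠ a1 := fun h => ha1S (by rw [← h]; exact hzCS)
      have nn6_8 : zC ≠ a2 := fun h => ha2S (by rw [← h]; exact hzCS)
      have nn6_9 : zC ≠ a3 := fun h => ha3S (by rw [← h]; exact hzCS)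
      have nn6_10 : zC ≠ a4 := fun h => ha4S (by rw [← h]; exact hzCS)
      have nn6_11 : zC ≠ a5 := fun h => ha5S (by rw [← h]; exact hzCS)
      have hbij : Function.Bijective (![x, y, x1, y1, zA, zb, zC, a1, a2, a3, a4, a5] : Fin 12 → V) := by
        constructor
        · intro i j hij
          fin_cases i <;> fin_cases j
          · rfl
          · exact absurd hij (hxy)
          · exact absurd hij (hnexx1)
          · exact absurd hij (hnexy1)
          · exact absurd hij (nn0_4)
          · exact absurd hij (nn0_5)
          · exact absurd hij (nn0_6)
          · exact absurd hij ((Ne.symm ha1x))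
          · exact absurd hij ((Ne.symm ha2x))
          · exact absurd hij ((Ne.symm ha3x))
          · exact absurd hij ((Ne.symm ha4x))
          · exact absurd hij ((Ne.symm ha5x))
          · exact absurd hij (Ne.symm hxy)
          · rfl
          · exact absurd hij (hneyx1)
          · exact absurd hij (hneyy1)
          · exact absurd hij (nn1_4)
          · exact absurd hij (nn1_5)
          · exact absurd hij (nn1_6)
          · exact absurd hij ((Ne.symm ha1y))
          · exact absurd hij ((Ne.symm ha2y))
          · exact absurd hij ((Ne.symm ha3y))
          · exact absurd hij ((Ne.symm ha4y))
          · exact absurd hij ((Ne.symm ha5y))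
          · exact absurd hij (Ne.symm hnexx1)
          · exact absurd hij (Ne.symm hneyx1)
          · rfl
          · exact absurd hij (hnex1y1)
          · exact absurd hij (nn2_4)
          · exact absurd hij (nn2_5)
          · exact absurd hij (nn2_6)
          · exact absurd hij ((Ne.symm ha1x1))
          · exact absurd hij ((Ne.symm ha2x1))
          · exact absurd hij ((Ne.symm ha3x1))
          · exact absurd hij ((Ne.symm ha4x1))
          · exact absurd hij ((Ne.symm ha5x1))
          · exact absurd hij (Ne.symm hnexy1)
          · exact absurd hij (Ne.symm hneyy1)
          · exact absurd hij (Ne.symm hnex1y1)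
          · rfl
          · exact absurd hij (nn3_4)
          · exact absurd hij (nn3_5)
          · exact absurd hij (nn3_6)
          · exact absurd hij ((Ne.symm ha1y1))
          · exact absurd hij ((Ne.symm ha2y1))
          · exact absurd hij ((Ne.symm ha3y1))
          · exact absurd hij ((Ne.symm ha4y1))
          · exact absurd hij ((Ne.symm ha5y1))
          · exact absurd hij (Ne.symm nn0_4)
          · exact absurd hij (Ne.symm nn1_4)
          · exact absurd hij (Ne.symm nn2_4)
          · exact absurd hij (Ne.symm nn3_4)
          · rfl
          · exact absurd hij ((Ne.symm hzbzA))
          · exact absurd hij ((hzAzC))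
          · exact absurd hij (nn4_7)
          · exact absurd hij (nn4_8)
          · exact absurd hij (nn4_9)
          · exact absurd hij (nn4_10)
          · exact absurd hij (nn4_11)
          · exact absurd hij (Ne.symm nn0_5)
          · exact absurd hij (Ne.symm nn1_5)
          · exact absurd hij (Ne.symm nn2_5)
          · exact absurd hij (Ne.symm nn3_5)
          · exact absurd hij (Ne.symm (Ne.symm hzbzA))
          · rfl
          · exact absurd hij ((hzbzC))
          · exact absurd hij (nn5_7)
          · exact absurd hij (nn5_8)
          · exact absurd hij (nn5_9)
          · exact absurd hij (nn5_10)
          · exact absurd hij (nn5_11)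
          · exact absurd hij (Ne.symm nn0_6)
          · exact absurd hij (Ne.symm nn1_6)
          · exact absurd hij (Ne.symm nn2_6)
          · exact absurd hij (Ne.symm nn3_6)
          · exact absurd hij (Ne.symm (hzAzC))
          · exact absurd hij (Ne.symm (hzbzC))
          · rfl
          · exact absurd hij (nn6_7)
          · exact absurd hij (nn6_8)
          · exact absurd hij (nn6_9)
          · exact absurd hij (nn6_10)
          · exact absurd hij (nn6_11)
          · exact absurd hij (Ne.symm (Ne.symm ha1x))
          · exact absurd hij (Ne.symm (Ne.symm ha1y))
          · exact absurd hij (Ne.symm (Ne.symm ha1x1))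
          · exact absurd hij (Ne.symm (Ne.symm ha1y1))
          · exact absurd hij (Ne.symm nn4_7)
          · exact absurd hij (Ne.symm nn5_7)
          · exact absurd hij (Ne.symm nn6_7)
          · rfl
          · exact absurd hij ((h12))
          · exact absurd hij ((Ne.symm ha3n1))
          · exact absurd hij ((ha14))
          · exact absurd hij ((ha15))
          · exact absurd hij (Ne.symm (Ne.symm ha2x))
          · exact absurd hij (Ne.symm (Ne.symm ha2y))
          · exact absurd hij (Ne.symm (Ne.symm ha2x1))
          · exact absurd hij (Ne.symm (Ne.symm ha2y1))
          · exact absurd hij (Ne.symm nn4_8)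
          · exact absurd hij (Ne.symm nn5_8)
          · exact absurd hij (Ne.symm nn6_8)
          · exact absurd hij (Ne.symm (h12))
          · rfl
          · exact absurd hij ((Ne.symm ha3n2))
          · exact absurd hij ((ha24))
          · exact absurd hij ((ha25))
          · exact absurd hij (Ne.symm (Ne.symm ha3x))
          · exact absurd hij (Ne.symm (Ne.symm ha3y))
          · exact absurd hij (Ne.symm (Ne.symm ha3x1))
          · exact absurd hij (Ne.symm (Ne.symm ha3y1))
          · exact absurd hij (Ne.symm nn4_9)
          · exact absurd hij (Ne.symm nn5_9)
          · exact absurd hij (Ne.symm nn6_9)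
          · exact absurd hij (Ne.symm (Ne.symm ha3n1))
          · exact absurd hij (Ne.symm (Ne.symm ha3n2))
          · rfl
          · exact absurd hij ((ha3n4))
          · exact absurd hij ((ha3n5))
          · exact absurd hij (Ne.symm (Ne.symm ha4x))
          · exact absurd hij (Ne.symm (Ne.symm ha4y))
          · exact absurd hij (Ne.symm (Ne.symm ha4x1))
          · exact absurd hij (Ne.symm (Ne.symm ha4y1))
          · exact absurd hij (Ne.symm nn4_10)
          · exact absurd hij (Ne.symm nn5_10)
          · exact absurd hij (Ne.symm nn6_10)
          · exact absurd hij (Ne.symm (ha14))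
          · exact absurd hij (Ne.symm (ha24))
          · exact absurd hij (Ne.symm (ha3n4))
          · rfl
          · exact absurd hij ((h45))
          · exact absurd hij (Ne.symm (Ne.symm ha5x))
          · exact absurd hij (Ne.symm (Ne.symm ha5y))
          · exact absurd hij (Ne.symm (Ne.symm ha5x1))
          · exact absurd hij (Ne.symm (Ne.symm ha5y1))
          · exact absurd hij (Ne.symm nn4_11)
          · exact absurd hij (Ne.symm nn5_11)
          · exact absurd hij (Ne.symm nn6_11)
          · exact absurd hij (Ne.symm (ha15))
          · exact absurd hij (Ne.symm (ha25))
          · exact absurd hij (Ne.symm (ha3n5))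
          · exact absurd hij (Ne.symm (h45))
          · rfl
        · intro v
          rcases hcover v with h | h | h | h | h | h
          · exact ⟨0, h.symm⟩
          · exact ⟨1, h.symm⟩
          · exact ⟨2, h.symm⟩
          · exact ⟨3, h.symm⟩
          · rcases hS3 v h with h' | h' | h'
            · exact ⟨4, h'.symm⟩
            · exact ⟨5, h'.symm⟩
            · exact ⟨6, h'.symm⟩
          · rcases hA5 v h with h' | h' | h' | h' | h'
            · exact ⟨7, h'.symm⟩
            · exact ⟨8, h'.symm⟩
            · exact ⟨10, h'.symm⟩
            · exact ⟨11, h'.symm⟩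
            · exact ⟨9, h'.symm⟩
      refine ⟨SimpleGraph.Iso.symm ⟨Equiv.ofBijective ![x, y, x1, y1, zA, zb, zC, a1, a2, a3, a4, a5] hbij, ?_⟩⟩
      intro i j
      fin_cases i <;> fin_cases j
      · exact iff_of_false (G.irrefl) (by decide)
      · refine iff_of_false (fun hadj => ?_) (by decide)
        rcases (hNx y).mp hadj with h | h | h | h
        exacts [hneyx1 h, nn1_4 h, nn1_5 h, nn1_6 h]
      · exact iff_of_true (hxx1) (by decide)
      · refine iff_of_false (fun hadj => ?_) (by decide)
        rcases (hNx y1).mp hadj with h | h | h | h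
        exacts [Ne.symm hnex1y1 h, nn3_4 h, nn3_5 h, nn3_6 h]
      · exact iff_of_true ((hzS zA hzAS).1) (by decide)
      · exact iff_of_true ((hzS zb hzbS).1) (by decide)
      · exact iff_of_true ((hzS zC hzCS).1) (by decide)
      · refine iff_of_false (fun hadj => ?_) (by decide)
        rcases (hNx a1).mp hadj with h | h | h | h
        exacts [Ne.symm (Ne.symm ha1x1) h, Ne.symm nn4_7 h, Ne.symm nn5_7 h, Ne.symm nn6_7 h]
      · refine iff_of_false (fun hadj => ?_) (by decide)
        rcases (hNx a2).mp hadj with h | h | h | h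
        exacts [Ne.symm (Ne.symm ha2x1) h, Ne.symm nn4_8 h, Ne.symm nn5_8 h, Ne.symm nn6_8 h]
      · refine iff_of_false (fun hadj => ?_) (by decide)
        rcases (hNx a3).mp hadj with h | h | h | h
        exacts [Ne.symm (Ne.symm ha3x1) h, Ne.symm nn4_9 h, Ne.symm nn5_9 h, Ne.symm nn6_9 h]
      · refine iff_of_false (fun hadj => ?_) (by decide)
        rcases (hNx a4).mp hadj with h | h | h | h
        exacts [Ne.symm (Ne.symm ha4x1) h, Ne.symm nn4_10 h, Ne.symm nn5_10 h, Ne.symm nn6_10 h]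
      · refine iff_of_false (fun hadj => ?_) (by decide)
        rcases (hNx a5).mp hadj with h | h | h | h
        exacts [Ne.symm (Ne.symm ha5x1) h, Ne.symm nn4_11 h, Ne.symm nn5_11 h, Ne.symm nn6_11 h]
      · refine iff_of_false (fun hadj => ?_) (by decide)
        rcases (hNy x).mp hadj with h | h | h | h
        exacts [hnexy1 h, nn0_4 h, nn0_5 h, nn0_6 h]
      · exact iff_of_false (G.irrefl) (by decide)
      · refine iff_of_false (fun hadj => ?_) (by decide)
        rcases (hNy x1).mp hadj with h | h | h | h
        exacts [hnex1y1 h, nn2_4 h, nn2_5 h, nn2_6 h]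
      · exact iff_of_true (hyy1) (by decide)
      · exact iff_of_true ((hzS zA hzAS).2) (by decide)
      · exact iff_of_true ((hzS zb hzbS).2) (by decide)
      · exact iff_of_true ((hzS zC hzCS).2) (by decide)
      · refine iff_of_false (fun hadj => ?_) (by decide)
        rcases (hNy a1).mp hadj with h | h | h | h
        exacts [Ne.symm (Ne.symm ha1y1) h, Ne.symm nn4_7 h, Ne.symm nn5_7 h, Ne.symm nn6_7 h]
      · refine iff_of_false (fun hadj => ?_) (by decide)
        rcases (hNy a2).mp hadj with h | h | h | h
        exacts [Ne.symm (Ne.symm ha2y1) h, Ne.symm nn4_8 h, Ne.symm nn5_8 h, Ne.symm nn6_8 h]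
      · refine iff_of_false (fun hadj => ?_) (by decide)
        rcases (hNy a3).mp hadj with h | h | h | h
        exacts [Ne.symm (Ne.symm ha3y1) h, Ne.symm nn4_9 h, Ne.symm nn5_9 h, Ne.symm nn6_9 h]
      · refine iff_of_false (fun hadj => ?_) (by decide)
        rcases (hNy a4).mp hadj with h | h | h | h
        exacts [Ne.symm (Ne.symm ha4y1) h, Ne.symm nn4_10 h, Ne.symm nn5_10 h, Ne.symm nn6_10 h]
      · refine iff_of_false (fun hadj => ?_) (by decide)
        rcases (hNy a5).mp hadj with h | h | h | h
        exacts [Ne.symm (Ne.symm ha5y1) h, Ne.symm nn4_11 h, Ne.symm nn5_11 h, Ne.symm nn6_11 h]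
      · exact iff_of_true ((hxx1).symm) (by decide)
      · refine iff_of_false (fun hadj => ?_) (by decide)
        rcases (hNx1 y).mp hadj with h | h | h | h
        exacts [Ne.symm hxy h, hneyy1 h, (Ne.symm ha1y) h, (Ne.symm ha2y) h]
      · exact iff_of_false (G.irrefl) (by decide)
      · exact iff_of_true (hadjx1y1) (by decide)
      · refine iff_of_false (fun hadj => ?_) (by decide)
        rcases (hNx1 zA).mp hadj with h | h | h | h
        exacts [Ne.symm nn0_4 h, Ne.symm nn3_4 h, nn4_7 h, nn4_8 h]
      · refine iff_of_false (fun hadj => ?_) (by decide)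
        rcases (hNx1 zb).mp hadj with h | h | h | h
        exacts [Ne.symm nn0_5 h, Ne.symm nn3_5 h, nn5_7 h, nn5_8 h]
      · refine iff_of_false (fun hadj => ?_) (by decide)
        rcases (hNx1 zC).mp hadj with h | h | h | h
        exacts [Ne.symm nn0_6 h, Ne.symm nn3_6 h, nn6_7 h, nn6_8 h]
      · exact iff_of_true (hx1a1) (by decide)
      · exact iff_of_true (hx1a2) (by decide)
      · refine iff_of_false (fun hadj => ?_) (by decide)
        rcases (hNx1 a3).mp hadj with h | h | h | h
        exacts [Ne.symm (Ne.symm ha3x) h, Ne.symm (Ne.symm ha3y1) h, Ne.symm (Ne.symm ha3n1) h, Ne.symm (Ne.symm ha3n2) h]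
      · refine iff_of_false (fun hadj => ?_) (by decide)
        rcases (hNx1 a4).mp hadj with h | h | h | h
        exacts [Ne.symm (Ne.symm ha4x) h, Ne.symm (Ne.symm ha4y1) h, Ne.symm (ha14) h, Ne.symm (ha24) h]
      · refine iff_of_false (fun hadj => ?_) (by decide)
        rcases (hNx1 a5).mp hadj with h | h | h | h
        exacts [Ne.symm (Ne.symm ha5x) h, Ne.symm (Ne.symm ha5y1) h, Ne.symm (ha15) h, Ne.symm (ha25) h]
      · refine iff_of_false (fun hadj => ?_) (by decide)
        rcases (hNy1 x).mp hadj with h | h | h | h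
        exacts [hxy h, hnexx1 h, (Ne.symm ha4x) h, (Ne.symm ha5x) h]
      · exact iff_of_true ((hyy1).symm) (by decide)
      · exact iff_of_true ((hadjx1y1).symm) (by decide)
      · exact iff_of_false (G.irrefl) (by decide)
      · refine iff_of_false (fun hadj => ?_) (by decide)
        rcases (hNy1 zA).mp hadj with h | h | h | h
        exacts [Ne.symm nn1_4 h, Ne.symm nn2_4 h, nn4_10 h, nn4_11 h]
      · refine iff_of_false (fun hadj => ?_) (by decide)
        rcases (hNy1 zb).mp hadj with h | h | h | h
        exacts [Ne.symm nn1_5 h, Ne.symm nn2_5 h, nn5_10 h, nn5_11 h]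
      · refine iff_of_false (fun hadj => ?_) (by decide)
        rcases (hNy1 zC).mp hadj with h | h | h | h
        exacts [Ne.symm nn1_6 h, Ne.symm nn2_6 h, nn6_10 h, nn6_11 h]
      · refine iff_of_false (fun hadj => ?_) (by decide)
        rcases (hNy1 a1).mp hadj with h | h | h | h
        exacts [Ne.symm (Ne.symm ha1y) h, Ne.symm (Ne.symm ha1x1) h, (ha14) h, (ha15) h]
      · refine iff_of_false (fun hadj => ?_) (by decide)
        rcases (hNy1 a2).mp hadj with h | h | h | h
        exacts [Ne.symm (Ne.symm ha2y) h, Ne.symm (Ne.symm ha2x1) h, (ha24) h, (ha25) h]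
      · refine iff_of_false (fun hadj => ?_) (by decide)
        rcases (hNy1 a3).mp hadj with h | h | h | h
        exacts [Ne.symm (Ne.symm ha3y) h, Ne.symm (Ne.symm ha3x1) h, (ha3n4) h, (ha3n5) h]
      · exact iff_of_true (hy1a4) (by decide)
      · exact iff_of_true (hy1a5) (by decide)
      · exact iff_of_true (((hzS zA hzAS).1).symm) (by decide)
      · exact iff_of_true (((hzS zA hzAS).2).symm) (by decide)
      · refine iff_of_false (fun hadj => ?_) (by decide)
        rcases (hNzA x1).mp hadj with h | h | h | h
        exacts [Ne.symm hnexx1 h, Ne.symm hneyx1 h, (Ne.symm ha3x1) h, (Ne.symm ha1x1) h]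
      · refine iff_of_false (fun hadj => ?_) (by decide)
        rcases (hNzA y1).mp hadj with h | h | h | h
        exacts [Ne.symm hnexy1 h, Ne.symm hneyy1 h, (Ne.symm ha3y1) h, (Ne.symm ha1y1) h]
      · exact iff_of_false (G.irrefl) (by decide)
      · refine iff_of_false (fun hadj => ?_) (by decide)
        rcases (hNzA zb).mp hadj with h | h | h | h
        exacts [Ne.symm nn0_5 h, Ne.symm nn1_5 h, nn5_9 h, nn5_7 h]
      · refine iff_of_false (fun hadj => ?_) (by decide)
        rcases (hNzA zC).mp hadj with h | h | h | h
        exacts [Ne.symm nn0_6 h, Ne.symm nn1_6 h, nn6_9 h, nn6_7 h]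
      · exact iff_of_true (hzAa1) (by decide)
      · refine iff_of_false (fun hadj => ?_) (by decide)
        rcases (hNzA a2).mp hadj with h | h | h | h
        exacts [Ne.symm (Ne.symm ha2x) h, Ne.symm (Ne.symm ha2y) h, (Ne.symm ha3n2) h, Ne.symm (h12) h]
      · exact iff_of_true (hzAa3) (by decide)
      · refine iff_of_false (fun hadj => ?_) (by decide)
        rcases (hNzA a4).mp hadj with h | h | h | h
        exacts [Ne.symm (Ne.symm ha4x) h, Ne.symm (Ne.symm ha4y) h, Ne.symm (ha3n4) h, Ne.symm (ha14) h]
      · refine iff_of_false (fun hadj => ?_) (by decide)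
        rcases (hNzA a5).mp hadj with h | h | h | h
        exacts [Ne.symm (Ne.symm ha5x) h, Ne.symm (Ne.symm ha5y) h, Ne.symm (ha3n5) h, Ne.symm (ha15) h]
      · exact iff_of_true (((hzS zb hzbS).1).symm) (by decide)
      · exact iff_of_true (((hzS zb hzbS).2).symm) (by decide)
      · refine iff_of_false (fun hadj => ?_) (by decide)
        rcases (hNzB x1).mp hadj with h | h | h | h
        exacts [Ne.symm hnexx1 h, Ne.symm hneyx1 h, (Ne.symm ha2x1) h, (Ne.symm ha4x1) h]
      · refine iff_of_false (fun hadj => ?_) (by decide)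
        rcases (hNzB y1).mp hadj with h | h | h | h
        exacts [Ne.symm hnexy1 h, Ne.symm hneyy1 h, (Ne.symm ha2y1) h, (Ne.symm ha4y1) h]
      · refine iff_of_false (fun hadj => ?_) (by decide)
        rcases (hNzB zA).mp hadj with h | h | h | h
        exacts [Ne.symm nn0_4 h, Ne.symm nn1_4 h, nn4_8 h, nn4_10 h]
      · exact iff_of_false (G.irrefl) (by decide)
      · refine iff_of_false (fun hadj => ?_) (by decide)
        rcases (hNzB zC).mp hadj with h | h | h | h
        exacts [Ne.symm nn0_6 h, Ne.symm nn1_6 h, nn6_8 h, nn6_10 h]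
      · refine iff_of_false (fun hadj => ?_) (by decide)
        rcases (hNzB a1).mp hadj with h | h | h | h
        exacts [Ne.symm (Ne.symm ha1x) h, Ne.symm (Ne.symm ha1y) h, (h12) h, (ha14) h]
      · exact iff_of_true (hzba2) (by decide)
      · refine iff_of_false (fun hadj => ?_) (by decide)
        rcases (hNzB a3).mp hadj with h | h | h | h
        exacts [Ne.symm (Ne.symm ha3x) h, Ne.symm (Ne.symm ha3y) h, Ne.symm (Ne.symm ha3n2) h, (ha3n4) h]
      · exact iff_of_true (hzba4) (by decide)
      · refine iff_of_false (fun hadj => ?_) (by decide)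
        rcases (hNzB a5).mp hadj with h | h | h | h
        exacts [Ne.symm (Ne.symm ha5x) h, Ne.symm (Ne.symm ha5y) h, Ne.symm (ha25) h, Ne.symm (h45) h]
      · exact iff_of_true (((hzS zC hzCS).1).symm) (by decide)
      · exact iff_of_true (((hzS zC hzCS).2).symm) (by decide)
      · refine iff_of_false (fun hadj => ?_) (by decide)
        rcases (hNzC x1).mp hadj with h | h | h | h
        exacts [Ne.symm hnexx1 h, Ne.symm hneyx1 h, (Ne.symm ha3x1) h, (Ne.symm ha5x1) h]
      · refine iff_of_false (fun hadj => ?_) (by decide)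
        rcases (hNzC y1).mp hadj with h | h | h | h
        exacts [Ne.symm hnexy1 h, Ne.symm hneyy1 h, (Ne.symm ha3y1) h, (Ne.symm ha5y1) h]
      · refine iff_of_false (fun hadj => ?_) (by decide)
        rcases (hNzC zA).mp hadj with h | h | h | h
        exacts [Ne.symm nn0_4 h, Ne.symm nn1_4 h, nn4_9 h, nn4_11 h]
      · refine iff_of_false (fun hadj => ?_) (by decide)
        rcases (hNzC zb).mp hadj with h | h | h | h
        exacts [Ne.symm nn0_5 h, Ne.symm nn1_5 h, nn5_9 h, nn5_11 h]
      · exact iff_of_false (G.irrefl) (by decide)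
      · refine iff_of_false (fun hadj => ?_) (by decide)
        rcases (hNzC a1).mp hadj with h | h | h | h
        exacts [Ne.symm (Ne.symm ha1x) h, Ne.symm (Ne.symm ha1y) h, (Ne.symm ha3n1) h, (ha15) h]
      · refine iff_of_false (fun hadj => ?_) (by decide)
        rcases (hNzC a2).mp hadj with h | h | h | h
        exacts [Ne.symm (Ne.symm ha2x) h, Ne.symm (Ne.symm ha2y) h, (Ne.symm ha3n2) h, (ha25) h]
      · exact iff_of_true (hzCa3) (by decide)
      · refine iff_of_false (fun hadj => ?_) (by decide)
        rcases (hNzC a4).mp hadj with h | h | h | h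
        exacts [Ne.symm (Ne.symm ha4x) h, Ne.symm (Ne.symm ha4y) h, Ne.symm (ha3n4) h, (h45) h]
      · exact iff_of_true (hzCa5) (by decide)
      · refine iff_of_false (fun hadj => ?_) (by decide)
        rcases (hNa1 x).mp hadj with h | h | h | h
        exacts [hnexx1 h, nn0_4 h, (Ne.symm ha4x) h, (Ne.symm ha5x) h]
      · refine iff_of_false (fun hadj => ?_) (by decide)
        rcases (hNa1 y).mp hadj with h | h | h | h
        exacts [hneyx1 h, nn1_4 h, (Ne.symm ha4y) h, (Ne.symm ha5y) h]
      · exact iff_of_true ((hx1a1).symm) (by decide)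
      · refine iff_of_false (fun hadj => ?_) (by decide)
        rcases (hNa1 y1).mp hadj with h | h | h | h
        exacts [Ne.symm hnex1y1 h, nn3_4 h, (Ne.symm ha4y1) h, (Ne.symm ha5y1) h]
      · exact iff_of_true ((hzAa1).symm) (by decide)
      · refine iff_of_false (fun hadj => ?_) (by decide)
        rcases (hNa1 zb).mp hadj with h | h | h | h
        exacts [Ne.symm nn2_5 h, Ne.symm (Ne.symm hzbzA) h, nn5_10 h, nn5_11 h]
      · refine iff_of_false (fun hadj => ?_) (by decide)
        rcases (hNa1 zC).mp hadj with h | h | h | h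
        exacts [Ne.symm nn2_6 h, Ne.symm (hzAzC) h, nn6_10 h, nn6_11 h]
      · exact iff_of_false (G.irrefl) (by decide)
      · refine iff_of_false (fun hadj => ?_) (by decide)
        rcases (hNa1 a2).mp hadj with h | h | h | h
        exacts [Ne.symm (Ne.symm ha2x1) h, Ne.symm nn4_8 h, (ha24) h, (ha25) h]
      · refine iff_of_false (fun hadj => ?_) (by decide)
        rcases (hNa1 a3).mp hadj with h | h | h | h
        exacts [Ne.symm (Ne.symm ha3x1) h, Ne.symm nn4_9 h, (ha3n4) h, (ha3n5) h]
      · exact iff_of_true (hw4.symm) (by decide)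
      · exact iff_of_true (hw1) (by decide)
      · refine iff_of_false (fun hadj => ?_) (by decide)
        rcases (hNa2 x).mp hadj with h | h | h | h
        exacts [hnexx1 h, (Ne.symm ha3x) h, nn0_5 h, (Ne.symm ha5x) h]
      · refine iff_of_false (fun hadj => ?_) (by decide)
        rcases (hNa2 y).mp hadj with h | h | h | h
        exacts [hneyx1 h, (Ne.symm ha3y) h, nn1_5 h, (Ne.symm ha5y) h]
      · exact iff_of_true ((hx1a2).symm) (by decide)
      · refine iff_of_false (fun hadj => ?_) (by decide)
        rcases (hNa2 y1).mp hadj with h | h | h | h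
        exacts [Ne.symm hnex1y1 h, (Ne.symm ha3y1) h, nn3_5 h, (Ne.symm ha5y1) h]
      · refine iff_of_false (fun hadj => ?_) (by decide)
        rcases (hNa2 zA).mp hadj with h | h | h | h
        exacts [Ne.symm nn2_4 h, nn4_9 h, (Ne.symm hzbzA) h, nn4_11 h]
      · exact iff_of_true ((hzba2).symm) (by decide)
      · refine iff_of_false (fun hadj => ?_) (by decide)
        rcases (hNa2 zC).mp hadj with h | h | h | h
        exacts [Ne.symm nn2_6 h, nn6_9 h, Ne.symm (hzbzC) h, nn6_11 h]
      · refine iff_of_false (fun hadj => ?_) (by decide)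
        rcases (hNa2 a1).mp hadj with h | h | h | h
        exacts [Ne.symm (Ne.symm ha1x1) h, (Ne.symm ha3n1) h, Ne.symm nn5_7 h, (ha15) h]
      · exact iff_of_false (G.irrefl) (by decide)
      · exact iff_of_true (ha3a2.symm) (by decide)
      · refine iff_of_false (fun hadj => ?_) (by decide)
        rcases (hNa2 a4).mp hadj with h | h | h | h
        exacts [Ne.symm (Ne.symm ha4x1) h, Ne.symm (ha3n4) h, Ne.symm nn5_10 h, (h45) h]
      · exact iff_of_true (hw2) (by decide)
      · refine iff_of_false (fun hadj => ?_) (by decide)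
        rcases (hNa3f x).mp hadj with h | h | h | h
        exacts [(Ne.symm ha2x) h, (Ne.symm ha4x) h, nn0_4 h, nn0_6 h]
      · refine iff_of_false (fun hadj => ?_) (by decide)
        rcases (hNa3f y).mp hadj with h | h | h | h
        exacts [(Ne.symm ha2y) h, (Ne.symm ha4y) h, nn1_4 h, nn1_6 h]
      · refine iff_of_false (fun hadj => ?_) (by decide)
        rcases (hNa3f x1).mp hadj with h | h | h | h
        exacts [(Ne.symm ha2x1) h, (Ne.symm ha4x1) h, nn2_4 h, nn2_6 h]
      · refine iff_of_false (fun hadj => ?_) (by decide)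
        rcases (hNa3f y1).mp hadj with h | h | h | h
        exacts [(Ne.symm ha2y1) h, (Ne.symm ha4y1) h, nn3_4 h, nn3_6 h]
      · exact iff_of_true ((hzAa3).symm) (by decide)
      · refine iff_of_false (fun hadj => ?_) (by decide)
        rcases (hNa3f zb).mp hadj with h | h | h | h
        exacts [nn5_8 h, nn5_10 h, Ne.symm (Ne.symm hzbzA) h, (hzbzC) h]
      · exact iff_of_true ((hzCa3).symm) (by decide)
      · refine iff_of_false (fun hadj => ?_) (by decide)
        rcases (hNa3f a1).mp hadj with h | h | h | h
        exacts [(h12) h, (ha14) h, Ne.symm nn4_7 h, Ne.symm nn6_7 h]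
      · exact iff_of_true ((ha3a2.symm).symm) (by decide)
      · exact iff_of_false (G.irrefl) (by decide)
      · exact iff_of_true (ha3a4) (by decide)
      · refine iff_of_false (fun hadj => ?_) (by decide)
        rcases (hNa3f a5).mp hadj with h | h | h | h
        exacts [Ne.symm (ha25) h, Ne.symm (h45) h, Ne.symm nn4_11 h, Ne.symm nn6_11 h]
      · refine iff_of_false (fun hadj => ?_) (by decide)
        rcases (hNa4 x).mp hadj with h | h | h | h
        exacts [hnexy1 h, (Ne.symm ha3x) h, nn0_5 h, (Ne.symm ha1x) h]
      · refine iff_of_false (fun hadj => ?_) (by decide)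
        rcases (hNa4 y).mp hadj with h | h | h | h
        exacts [hneyy1 h, (Ne.symm ha3y) h, nn1_5 h, (Ne.symm ha1y) h]
      · refine iff_of_false (fun hadj => ?_) (by decide)
        rcases (hNa4 x1).mp hadj with h | h | h | h
        exacts [hnex1y1 h, (Ne.symm ha3x1) h, nn2_5 h, (Ne.symm ha1x1) h]
      · exact iff_of_true ((hy1a4).symm) (by decide)
      · refine iff_of_false (fun hadj => ?_) (by decide)
        rcases (hNa4 zA).mp hadj with h | h | h | h
        exacts [Ne.symm nn3_4 h, nn4_9 h, (Ne.symm hzbzA) h, nn4_7 h]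
      · exact iff_of_true ((hzba4).symm) (by decide)
      · refine iff_of_false (fun hadj => ?_) (by decide)
        rcases (hNa4 zC).mp hadj with h | h | h | h
        exacts [Ne.symm nn3_6 h, nn6_9 h, Ne.symm (hzbzC) h, nn6_7 h]
      · exact iff_of_true ((hw4.symm).symm) (by decide)
      · refine iff_of_false (fun hadj => ?_) (by decide)
        rcases (hNa4 a2).mp hadj with h | h | h | h
        exacts [Ne.symm (Ne.symm ha2y1) h, (Ne.symm ha3n2) h, Ne.symm nn5_8 h, Ne.symm (h12) h]
      · exact iff_of_true ((ha3a4).symm) (by decide)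
      · exact iff_of_false (G.irrefl) (by decide)
      · refine iff_of_false (fun hadj => ?_) (by decide)
        rcases (hNa4 a5).mp hadj with h | h | h | h
        exacts [Ne.symm (Ne.symm ha5y1) h, Ne.symm (ha3n5) h, Ne.symm nn5_11 h, Ne.symm (ha15) h]
      · refine iff_of_false (fun hadj => ?_) (by decide)
        rcases (hNa5 x).mp hadj with h | h | h | h
        exacts [hnexy1 h, nn0_6 h, (Ne.symm ha2x) h, (Ne.symm ha1x) h]
      · refine iff_of_false (fun hadj => ?_) (by decide)
        rcases (hNa5 y).mp hadj with h | h | h | h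
        exacts [hneyy1 h, nn1_6 h, (Ne.symm ha2y) h, (Ne.symm ha1y) h]
      · refine iff_of_false (fun hadj => ?_) (by decide)
        rcases (hNa5 x1).mp hadj with h | h | h | h
        exacts [hnex1y1 h, nn2_6 h, (Ne.symm ha2x1) h, (Ne.symm ha1x1) h]
      · exact iff_of_true ((hy1a5).symm) (by decide)
      · refine iff_of_false (fun hadj => ?_) (by decide)
        rcases (hNa5 zA).mp hadj with h | h | h | h
        exacts [Ne.symm nn3_4 h, (hzAzC) h, nn4_8 h, nn4_7 h]
      · refine iff_of_false (fun hadj => ?_) (by decide)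
        rcases (hNa5 zb).mp hadj with h | h | h | h
        exacts [Ne.symm nn3_5 h, (hzbzC) h, nn5_8 h, nn5_7 h]
      · exact iff_of_true ((hzCa5).symm) (by decide)
      · exact iff_of_true ((hw1).symm) (by decide)
      · exact iff_of_true ((hw2).symm) (by decide)
      · refine iff_of_false (fun hadj => ?_) (by decide)
        rcases (hNa5 a3).mp hadj with h | h | h | h
        exacts [Ne.symm (Ne.symm ha3y1) h, Ne.symm nn6_9 h, Ne.symm (Ne.symm ha3n2) h, Ne.symm (Ne.symm ha3n1) h]
      · refine iff_of_false (fun hadj => ?_) (by decide)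
        rcases (hNa5 a4).mp hadj with h | h | h | h
        exacts [Ne.symm (Ne.symm ha4y1) h, Ne.symm nn6_10 h, Ne.symm (ha24) h, Ne.symm (ha14) h]
      · exact iff_of_false (G.irrefl) (by decide)
end

section
/- Let G be a k-regular graph, k ≥ 4, in which adjacent vertices have no common neighbour and non-adjacent vertices have at least k−3 common neighbours. Fix a vertex u, a neighbour u₁ of u, and suppose the set of vertices outside N[u] has size k + 2. Then for any vertex x outside N[u] that is not a neighbour of u₁, one has k − 3 ≤ |N(x) ∩ N(u₁) \ {u}| ≤ 3; in particular k ≤ 6. -/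
theorem stmt_18 {V : Type*} [Fintype V] [DecidableEq V] (G : SimpleGraph V) [DecidableRel G.Adj]
    (k : ℕ) (hk : 4 ≤ k)
    (hreg : G.IsRegularOfDegree k)
    (ha : ∀ x y : V, G.Adj x y → G.neighborFinset x ∩ G.neighborFinset y = ∅)
    (hna : ∀ x y : V, x ≠ y → ¬ G.Adj x y →
      k - 3 ≤ (G.neighborFinset x ∩ G.neighborFinset y).card)
    (u u₁ : V) (hu₁ : G.Adj u u₁)
    (hout : (Finset.univ \ insert u (G.neighborFinset u)).card = k + 2) :
    (∀ x : V, x ∉ insert u (G.neighborFinset u) → ¬ G.Adj u₁ x →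
      k - 3 ≤ ((G.neighborFinset x ∩ G.neighborFinset u₁).erase u).card ∧
      ((G.neighborFinset x ∩ G.neighborFinset u₁).erase u).card ≤ 3) ∧
    k ≤ 6 := by
  have key : ∀ x : V, x ∉ insert u (G.neighborFinset u) → ¬ G.Adj u₁ x →
      k - 3 ≤ ((G.neighborFinset x ∩ G.neighborFinset u₁).erase u).card ∧
      ((G.neighborFinset x ∩ G.neighborFinset u₁).erase u).card ≤ 3 := by
    intro x hx hxu₁
    have hxu : x ≠ u := by rintro rfl; exact hx (Finset.mem_insert_self _ _)
    have hxadj : ¬ G.Adj u x := by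
      intro h
      exact hx (Finset.mem_insert_of_mem (by simpa [SimpleGraph.mem_neighborFinset] using h))
    have hxne : x ≠ u₁ := by
      rintro rfl
      exact hx (Finset.mem_insert_of_mem (by simpa [SimpleGraph.mem_neighborFinset] using hu₁))
    have hunotmem : u ∉ G.neighborFinset x ∩ G.neighborFinset u₁ := by
      rw [Finset.mem_inter, SimpleGraph.mem_neighborFinset]
      intro h
      exact hxadj h.1.symm
    have herase : (G.neighborFinset x ∩ G.neighborFinset u₁).erase u
        = G.neighborFinset x ∩ G.neighborFinset u₁ := Finset.erase_eq_of_notMem hunotmem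
    constructor
    · rw [herase]; exact hna x u₁ hxne (fun h => hxu₁ h.symm)
    · have hsub : (G.neighborFinset x ∩ G.neighborFinset u₁).erase u
          ⊆ G.neighborFinset x \ G.neighborFinset u := by
        intro w hw
        rw [Finset.mem_erase, Finset.mem_inter] at hw
        rw [Finset.mem_sdiff]
        refine ⟨hw.2.1, fun hwu => ?_⟩
        have hmem : w ∈ G.neighborFinset u ∩ G.neighborFinset u₁ :=
          Finset.mem_inter.2 ⟨hwu, hw.2.2⟩
        rw [ha u u₁ hu₁] at hmem
        exact absurd hmem (Finset.notMem_empty w)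
      have h1 : (G.neighborFinset x ∩ G.neighborFinset u).card
          + (G.neighborFinset x \ G.neighborFinset u).card = k := by
        rw [Finset.card_inter_add_card_sdiff]; exact hreg x
      have h2 : k - 3 ≤ (G.neighborFinset x ∩ G.neighborFinset u).card :=
        hna x u hxu (fun h => hxadj h.symm)
      have h3 := Finset.card_le_card hsub
      omega
  refine ⟨key, ?_⟩
  have hcard2 : 2 ≤ ((Finset.univ \ insert u (G.neighborFinset u)) \ G.neighborFinset u₁).card := by
    have h := Finset.le_card_sdiff (G.neighborFinset u₁)
      (Finset.univ \ insert u (G.neighborFinset u))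
    rw [hout] at h
    have : (G.neighborFinset u₁).card = k := hreg u₁
    omega
  obtain ⟨x, hxmem⟩ := Finset.card_pos.mp (lt_of_lt_of_le (by norm_num) hcard2)
  rw [Finset.mem_sdiff] at hxmem
  have hx1 : x ∉ insert u (G.neighborFinset u) := (Finset.mem_sdiff.mp hxmem.1).2
  have hx2 : ¬ G.Adj u₁ x := by
    intro h; exact hxmem.2 (by simpa [SimpleGraph.mem_neighborFinset] using h)
  obtain ⟨hlo, hhi⟩ := key x hx1 hx2
  omega
end
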